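/- arXiv:1908.05248 — 6 statements merged into one kernel-verified Lean document; each statement's English description precedes it below -/
import Mathlib

section
/- Let H(G,g,χ,γ) act linearly and inner faithfully on a connected graded affine k-algebra A generated in degree one by A_1 = span_k{u_1,…,u_t}. Assume g acts diagonally on A_1, say g·u_i = α_i u_i with α_i ∈ k^×, that m := ord(χ(g)) ≥ 3, and that the action of x on the basis (u_1,…,u_t) of A_1 is given by the matrix (η_{ij}), i.e. x·u_j = Σ_i η_{ij} u_i. Then η_{ij}η_{ji} = 0 for all i,j; in particular η_{kk} = 0 for all k. -/
/-- Action data for the Krop–Radford rank-one pointed Hopf algebra `H(G,g,χ,γ)` on a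
`k`-algebra `A`: the group `G` acts by `k`-algebra automorphisms, the skew-primitive
generator `x` acts as a `(g,1)`-skew derivation, subject to the defining relations
`a·x = χ(a) x·a` (for `a ∈ G`) and `x^m = γ(g^m - 1)` where `m = ord(χ(g))`.  Giving
such data is exactly the same as making `A` a left `H(G,g,χ,γ)`-module algebra. -/
structure KRAction (k : Type) [Field k] (G : Type) [Group G] (g : G) (χ : G →* k) (gam : k)
    (A : Type) [Ring A] [Algebra k A] where
  ρ : G →* (A ≃ₐ[k] A)
  x : Module.End k A
  comm : ∀ (h : G) (a : A), ρ h (x a) = χ h • x (ρ h a)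
  skew : ∀ a b : A, x (a * b) = ρ g a * x b + x a * b
  x_pow : (x ^ orderOf (χ g) : Module.End k A) =
      gam • ((ρ (g ^ orderOf (χ g))).toLinearMap - LinearMap.id)

/-- Inner faithfulness of an `H(G,g,χ,γ)`-action: no nonzero Hopf ideal of `H(G,g,χ,γ)`
annihilates `A`; concretely (via the classification of skew-primitives of `H(G,g,χ,γ)`),
`x` acts by a nonzero operator and `G` acts faithfully. -/
def KRAction.InnerFaithful {k : Type} [Field k] {G : Type} [Group G] {g : G} {χ : G →* k}
    {gam : k} {A : Type} [Ring A] [Algebra k A] (T : KRAction k G g χ gam A) : Prop :=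
  T.x ≠ 0 ∧ Function.Injective T.ρ

/-- Let `H(G,g,χ,γ)` act linearly and inner faithfully on a connected graded
affine `k`-algebra `A` generated in degree one by `A_1 = span_k{u_1,…,u_t}`.  Assume `g`
acts diagonally on `A_1`, say `g·u_i = α_i u_i` with `α_i ∈ kˣ`, that `m := ord(χ(g)) ≥ 3`,
and that the action of `x` on the basis `(u_1,…,u_t)` of `A_1` is given by the matrix
`(η_{ij})`, i.e. `x·u_j = Σ_i η_{ij} u_i`.  Then `η_{ij} η_{ji} = 0` for all `i,j`; in
particular `η_{kk} = 0` for all `k`. -/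
theorem stmt_0 {k : Type} [Field k] {G : Type} [Group G] [Fintype G]
    (g : G) (hgc : g ∈ Subgroup.center G) (χ : G →* k) (gam : k)
    {A : Type} [Ring A] [Algebra k A]
    (𝒜 : ℕ → Submodule k A) [GradedAlgebra 𝒜]
    (hconn : 𝒜 0 = Submodule.span k {(1 : A)})
    (haff : ∀ i, Module.Finite k (𝒜 i))
    (hgen : Algebra.adjoin k ((𝒜 1 : Submodule k A) : Set A) = ⊤)
    {t : ℕ} (u : Fin t → A)
    (hone : 𝒜 1 = Submodule.span k (Set.range u))
    (hind : LinearIndependent k u)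
    {m : ℕ} (hm : orderOf (χ g) = m) (hm3 : 3 ≤ m)
    (T : KRAction k G g χ gam A)
    (hlinG : ∀ (h : G), ∀ a ∈ 𝒜 1, T.ρ h a ∈ 𝒜 1)
    (hlinx : ∀ a ∈ 𝒜 1, T.x a ∈ 𝒜 1)
    (hif : T.InnerFaithful)
    (α : Fin t → k) (hα : ∀ i, α i ≠ 0)
    (hdiag : ∀ i, T.ρ g (u i) = α i • u i)
    (η : Fin t → Fin t → k)
    (hη : ∀ j, T.x (u j) = ∑ i, η i j • u i) :
    (∀ i j, η i j * η j i = 0) ∧ (∀ i, η i i = 0) := by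
  set q := χ g with hq
  have key : ∀ i j, η i j ≠ 0 → α i = q * α j := by
    intro i j hne
    have h1 := T.comm g (u j)
    rw [hη j, hdiag j, map_sum, map_smul, hη j] at h1
    simp only [map_smul, hdiag, smul_smul, Finset.smul_sum] at h1
    have h2 : ∑ i', (η i' j * α i' - q * (α j * η i' j)) • u i' = 0 := by
      simp only [sub_smul, Finset.sum_sub_distrib, h1, sub_self, mul_assoc, ← hq]
    have h3 := (Fintype.linearIndependent_iff.mp hind) _ h2 i
    have h4 : η i j * α i = η i j * (q * α j) := by
      have := sub_eq_zero.mp h3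
      rw [this]; ring
    exact mul_left_cancel₀ hne h4
  have hq2 : q ^ 2 ≠ 1 := fun h => by
    have h2 : m ∣ 2 := hm ▸ orderOf_dvd_of_pow_eq_one h
    exact absurd (Nat.le_of_dvd (by norm_num) h2) (by omega)
  have main : ∀ i j, η i j * η j i = 0 := by
    intro i j
    by_contra hne
    have hij : η i j ≠ 0 := fun h => hne (by simp [h])
    have hji : η j i ≠ 0 := fun h => hne (by simp [h])
    have e : α i * 1 = α i * q ^ 2 := by
      linear_combination key i j hij + q * key j i hji
    exact hq2 ((mul_left_cancel₀ (hα i) e).symm)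
  exact ⟨main, fun i => by have := main i i; exact mul_self_eq_zero.mp this⟩
end

section
/- Let A = k_μ[u,v] (the quantum plane) or A = A_1^μ(k) (the quantum Weyl algebra), with ord(μ) = κ > 1. Then the generalized Taft algebra T = T_n(λ,m,0) acts linearly and inner faithfully on A if and only if n = lcm(κ,m) and the action is given by one of the following: (a) g·u = μu, g·v = λ^{-1}μ v, x·u = 0, x·v = ηu for some η ∈ k^×, and if A = A_1^μ(k) then additionally λ = μ^2; or (b) g·u = λ^{-1}μ^{-1}u, g·v = μ^{-1}v, x·u = ηv for some η ∈ k^×, x·v = 0, and if A = A_1^μ(k) then additionally λ = μ^{-2}. -/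
/-- The defining relation of the algebra `k⟨u,v⟩/(uv - μvu - c)`: for `c = 0` this is the
quantum plane `k_μ[u,v]`, and for `c = 1` it is the quantum Weyl algebra `A_1^μ(k)`. -/
inductive QPWRel (k : Type) [Field k] (μ c : k) :
    FreeAlgebra k (Fin 2) → FreeAlgebra k (Fin 2) → Prop
  | rel : QPWRel k μ c (FreeAlgebra.ι k 0 * FreeAlgebra.ι k 1)
      (μ • (FreeAlgebra.ι k 1 * FreeAlgebra.ι k 0) + algebraMap k (FreeAlgebra k (Fin 2)) c)

/-- The algebra `k⟨u,v⟩/(uv - μvu - c)`. -/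
abbrev QPW (k : Type) [Field k] (μ c : k) : Type := RingQuot (QPWRel k μ c)

/-- The generator `u`. -/
noncomputable def QPW.u (k : Type) [Field k] (μ c : k) : QPW k μ c :=
  RingQuot.mkAlgHom k (QPWRel k μ c) (FreeAlgebra.ι k 0)

/-- The generator `v`. -/
noncomputable def QPW.v (k : Type) [Field k] (μ c : k) : QPW k μ c :=
  RingQuot.mkAlgHom k (QPWRel k μ c) (FreeAlgebra.ι k 1)

/-- Action data for the generalized Taft algebra `T_n(λ, m, γ)` on a `k`-algebra `A`:
the grouplike generator `g` acts as a `k`-algebra automorphism with `g^n = 1`, the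
`(g,1)`-skew-primitive generator `x` acts as a `(g,1)`-skew derivation, and the defining
relations `g x = λ x g` and `x^m = γ(g^m - 1)` hold.  Giving such data is the same as
making `A` a left `T_n(λ, m, γ)`-module algebra. -/
structure TaftAction (k : Type) [Field k] (n m : ℕ) (lam gam : k)
    (A : Type) [Ring A] [Algebra k A] where
  g : A ≃ₐ[k] A
  x : Module.End k A
  g_pow : g ^ n = 1
  comm : ∀ a : A, g (x a) = lam • x (g a)
  skew : ∀ a b : A, x (a * b) = g a * x b + x a * b
  x_pow : (x ^ m : Module.End k A) =
      gam • ((g ^ m : A ≃ₐ[k] A).toLinearMap - LinearMap.id)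

/-- Inner faithfulness of a `T_n(λ,m,γ)`-action: no nonzero Hopf ideal annihilates `A`;
concretely, `x` acts by a nonzero operator and `g` acts by an automorphism of order
exactly `n`. -/
def TaftAction.InnerFaithful {k : Type} [Field k] {n m : ℕ} {lam gam : k}
    {A : Type} [Ring A] [Algebra k A] (T : TaftAction k n m lam gam A) : Prop :=
  T.x ≠ 0 ∧ orderOf T.g = n

namespace QPWAux
variable {k : Type} [Field k]
abbrev QM (k : Type) [Field k] := (ℕ × ℕ) →₀ k

noncomputable def gam' (μ : k) : ℕ → k
  | 0 => 0
  | i+1 => μ⁻¹ * gam' μ i - μ⁻¹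

@[simp] lemma gam'_zero (μ : k) : gam' μ 0 = 0 := rfl
lemma gam'_succ (μ : k) (i : ℕ) : gam' μ (i+1) = μ⁻¹ * gam' μ i - μ⁻¹ := rfl

noncomputable def Urep (k : Type) [Field k] : QM k →ₗ[k] QM k :=
  Finsupp.lsum k fun p => LinearMap.toSpanSingleton k _ (Finsupp.single (p.1+1, p.2) 1)

noncomputable def Vrep (μ c : k) : QM k →ₗ[k] QM k :=
  Finsupp.lsum k fun p => LinearMap.toSpanSingleton k _
    (Finsupp.single (p.1, p.2+1) (μ⁻¹ ^ p.1)
      + Finsupp.single (p.1 - 1, p.2) (c * gam' μ p.1))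

@[simp] lemma Urep_single (p : ℕ × ℕ) (r : k) :
    Urep k (Finsupp.single p r) = Finsupp.single (p.1+1, p.2) r := by
  rw [Urep, Finsupp.lsum_single, LinearMap.toSpanSingleton_apply, Finsupp.smul_single']
  rw [mul_one]

@[simp] lemma Vrep_single (μ c : k) (p : ℕ × ℕ) (r : k) :
    Vrep μ c (Finsupp.single p r) = Finsupp.single (p.1, p.2+1) (r * μ⁻¹ ^ p.1)
      + Finsupp.single (p.1 - 1, p.2) (r * (c * gam' μ p.1)) := by
  rw [Vrep, Finsupp.lsum_single, LinearMap.toSpanSingleton_apply, smul_add,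
    Finsupp.smul_single', Finsupp.smul_single']

lemma rep_rel (μ c : k) (hμ : μ ≠ 0) :
    (Urep k) * (Vrep μ c) = μ • ((Vrep μ c) * (Urep k))
      + algebraMap k (Module.End k (QM k)) c := by
  apply Finsupp.lhom_ext
  rintro ⟨i, j⟩ r
  simp only [Module.End.mul_apply, LinearMap.add_apply, LinearMap.smul_apply,
    Module.algebraMap_end_apply, Urep_single, Vrep_single, map_add, Finsupp.smul_single',
    smul_add]
  cases i with
  | zero =>
      ext ⟨a, b⟩
      simp only [Finsupp.add_apply, Finsupp.single_apply, gam'_zero, gam'_succ, mul_zero,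
        Finsupp.coe_zero, Pi.zero_apply, pow_zero, pow_one, Prod.mk.injEq, mul_one]
      split_ifs <;> first | omega | (field_simp; try ring; try field_simp [hμ]) | ring
  | succ i =>
      ext ⟨a, b⟩
      simp only [Finsupp.add_apply, Finsupp.single_apply, gam'_succ, Prod.mk.injEq]
      split_ifs <;> first | omega | (field_simp; try ring; try field_simp [hμ]) | ring

/-- The representation of `QPW` on `QM`. -/
noncomputable def rep (μ c : k) (hμ : μ ≠ 0) : QPW k μ c →ₐ[k] Module.End k (QM k) :=
  RingQuot.liftAlgHom k ⟨FreeAlgebra.lift k ![Urep k, Vrep μ c], by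
    rintro a b ⟨⟩
    simp only [map_mul, map_add, map_smul, FreeAlgebra.lift_ι_apply, AlgHom.commutes]
    exact rep_rel μ c hμ⟩

lemma rep_u (μ c : k) (hμ : μ ≠ 0) : rep μ c hμ (QPW.u k μ c) = Urep k := by
  rw [rep, QPW.u, RingQuot.liftAlgHom_mkAlgHom_apply]
  simp [FreeAlgebra.lift_ι_apply]

lemma rep_v (μ c : k) (hμ : μ ≠ 0) : rep μ c hμ (QPW.v k μ c) = Vrep μ c := by
  rw [rep, QPW.v, RingQuot.liftAlgHom_mkAlgHom_apply]
  simp [FreeAlgebra.lift_ι_apply]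

/-- Evaluation at the vacuum vector. -/
noncomputable def ev (μ c : k) (hμ : μ ≠ 0) (a : QPW k μ c) : QM k :=
  rep μ c hμ a (Finsupp.single (0,0) 1)

end QPWAux


namespace QPWAux
variable {k : Type} [Field k] (μ c : k)

local notation "uu" => QPW.u k μ c
local notation "vv" => QPW.v k μ c

lemma urel : uu * vv = μ • (vv * uu) + c • 1 := by
  have := RingQuot.mkAlgHom_rel k (QPWRel.rel (k := k) (μ := μ) (c := c))
  simpa [QPW.u, QPW.v, map_mul, map_add, map_smul, Algebra.algebraMap_eq_smul_one] using this

lemma u_ne (hμ0 : μ ≠ 0) : uu ≠ 0 := by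
  intro h
  have h1 := congrArg (fun z => rep μ c hμ0 z (Finsupp.single (0,0) 1) ((1:ℕ),(0:ℕ))) h
  simpa [rep_u, Finsupp.single_apply] using h1

lemma v_ne (hμ0 : μ ≠ 0) : vv ≠ 0 := by
  intro h
  have h1 := congrArg (fun z => rep μ c hμ0 z (Finsupp.single (0,0) 1) ((0:ℕ),(1:ℕ))) h
  simpa [rep_v, Finsupp.single_apply] using h1

lemma one_ne (hμ0 : μ ≠ 0) : (1 : QPW k μ c) ≠ 0 := by
  intro h
  have h1 := congrArg (fun z => rep μ c hμ0 z (Finsupp.single (0,0) 1) ((0:ℕ),(0:ℕ))) h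
  simpa [Finsupp.single_apply] using h1

lemma indep2 (hμ0 : μ ≠ 0) {p q : k} (h : p • uu + q • vv = 0) : p = 0 ∧ q = 0 := by
  constructor
  · have h1 := congrArg (fun z => rep μ c hμ0 z (Finsupp.single (0,0) 1) ((1:ℕ),(0:ℕ))) h
    simpa [map_add, map_smul, rep_u, rep_v, Finsupp.single_apply] using h1
  · have h1 := congrArg (fun z => rep μ c hμ0 z (Finsupp.single (0,0) 1) ((0:ℕ),(1:ℕ))) h
    simpa [map_add, map_smul, rep_u, rep_v, Finsupp.single_apply] using h1

lemma adjoin_top : Algebra.adjoin k {uu, vv} = ⊤ := by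
  have hsurj := RingQuot.mkAlgHom_surjective k (QPWRel k μ c)
  have h1 : Algebra.adjoin k (Set.range (FreeAlgebra.ι k : Fin 2 → FreeAlgebra k (Fin 2))) = ⊤ :=
    FreeAlgebra.adjoin_range_ι k (Fin 2)
  have h2 : (RingQuot.mkAlgHom k (QPWRel k μ c)) ''
      (Set.range (FreeAlgebra.ι k : Fin 2 → FreeAlgebra k (Fin 2))) = {uu, vv} := by
    rw [← Set.range_comp]
    ext z
    simp only [Set.mem_range, Function.comp_apply, Set.mem_insert_iff, Set.mem_singleton_iff]
    constructor
    · rintro ⟨i, rfl⟩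
      fin_cases i
      · left; rfl
      · right; rfl
    · rintro (rfl | rfl)
      · exact ⟨0, rfl⟩
      · exact ⟨1, rfl⟩
  calc Algebra.adjoin k {uu, vv}
      = Subalgebra.map (RingQuot.mkAlgHom k (QPWRel k μ c)) (Algebra.adjoin k
          (Set.range (FreeAlgebra.ι k : Fin 2 → FreeAlgebra k (Fin 2)))) := by
        rw [← Algebra.adjoin_image, h2]
    _ = ⊤ := by
        rw [h1, Algebra.map_top, AlgHom.range_eq_top]
        exact hsurj

end QPWAux


namespace QPWAux
section Gen
variable {k : Type} [Field k] {A : Type} [Ring A] [Algebra k A]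
variable {n m : ℕ} {lam gam : k}

lemma taft_x_one (T : TaftAction k n m lam gam A) : T.x 1 = 0 := by
  have h := T.skew 1 1
  simp only [mul_one, one_mul, map_one] at h
  exact left_eq_add.mp h

lemma taft_x_eq_zero (T : TaftAction k n m lam gam A) {w₁ w₂ : A}
    (htop : Algebra.adjoin k ({w₁, w₂} : Set A) = ⊤)
    (h1 : T.x w₁ = 0) (h2 : T.x w₂ = 0) : T.x = 0 := by
  let S : Subalgebra k A :=
  { carrier := {a | T.x a = 0}
    mul_mem' := by
      intro a b ha hb
      simp only [Set.mem_setOf_eq] at *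
      rw [T.skew a b, ha, hb, mul_zero, zero_mul, add_zero]
    one_mem' := taft_x_one T
    add_mem' := by
      intro a b ha hb
      simp only [Set.mem_setOf_eq] at *
      rw [map_add, ha, hb, add_zero]
    algebraMap_mem' := by
      intro r
      simp only [Set.mem_setOf_eq, Algebra.algebraMap_eq_smul_one, map_smul, taft_x_one T,
        smul_zero] }
  have hle : Algebra.adjoin k ({w₁, w₂} : Set A) ≤ S := by
    apply Algebra.adjoin_le
    rintro z (rfl | rfl)
    · exact h1
    · exact h2
  rw [htop] at hle
  ext a
  exact hle (Algebra.mem_top (x := a))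

lemma algEquiv_eq_one {w₁ w₂ : A} (G : A ≃ₐ[k] A)
    (htop : Algebra.adjoin k ({w₁, w₂} : Set A) = ⊤)
    (h1 : G w₁ = w₁) (h2 : G w₂ = w₂) : G = 1 := by
  let S : Subalgebra k A :=
  { carrier := {a | G a = a}
    mul_mem' := by
      intro a b ha hb
      simp only [Set.mem_setOf_eq] at *
      rw [map_mul, ha, hb]
    one_mem' := map_one G
    add_mem' := by
      intro a b ha hb
      simp only [Set.mem_setOf_eq] at *
      rw [map_add, ha, hb]
    algebraMap_mem' := fun r => G.commutes r }
  have hle : Algebra.adjoin k ({w₁, w₂} : Set A) ≤ S := by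
    apply Algebra.adjoin_le
    rintro z (rfl | rfl)
    · exact h1
    · exact h2
  rw [htop] at hle
  ext a
  exact hle (Algebra.mem_top (x := a))

lemma pow_apply_smul (G : A ≃ₐ[k] A) (w : A) (a : k) (h : G w = a • w) (N : ℕ) :
    (G ^ N) w = a ^ N • w := by
  induction N with
  | zero => simp
  | succ N ih =>
      rw [pow_succ, AlgEquiv.mul_apply, h, map_smul, ih, smul_smul, pow_succ]
      ring_nf

lemma xpow_two_mul (T : TaftAction k n m lam gam A) {w₁ w₂ : A} {β γ : k}
    (hu : T.x w₁ = β • w₂) (hv : T.x w₂ = γ • w₁) (j : ℕ) :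
    (T.x ^ (2 * j)) w₁ = (β * γ) ^ j • w₁ := by
  induction j with
  | zero => simp
  | succ j ih =>
      have h2 : (T.x ^ 2) w₁ = (β * γ) • w₁ := by
        rw [pow_two, Module.End.mul_apply, hu, map_smul, hv, smul_smul]
      have : 2 * (j + 1) = 2 * j + 2 := by ring
      rw [this, pow_add, Module.End.mul_apply, h2, map_smul, ih, smul_smul, pow_succ]
      ring_nf

end Gen

lemma orderOf_eq_of_iff {M : Type*} [Monoid M] (g : M) (L : ℕ) (hL : L ≠ 0)
    (h : ∀ N, g ^ N = 1 ↔ L ∣ N) : orderOf g = L := by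
  have h1 : orderOf g ∣ L := orderOf_dvd_of_pow_eq_one ((h L).2 dvd_rfl)
  have h2 : L ∣ orderOf g := (h _).1 (pow_orderOf_eq_one g)
  have : orderOf g ≠ 0 := by
    intro h0
    rw [h0] at h1
    exact hL (Nat.eq_zero_of_zero_dvd h1)
  exact Nat.dvd_antisymm h1 h2

lemma lcm_dvd_iff' (a b N : ℕ) : Nat.lcm a b ∣ N ↔ a ∣ N ∧ b ∣ N :=
  ⟨fun h => ⟨(Nat.dvd_lcm_left a b).trans h, (Nat.dvd_lcm_right a b).trans h⟩,
   fun ⟨h1, h2⟩ => Nat.lcm_dvd h1 h2⟩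

end QPWAux

namespace QPWAux

variable {k : Type} [Field k]

lemma order_iff_a {κ m : ℕ} {μ lam : k} (hμ : IsPrimitiveRoot μ κ)
    (hlam : IsPrimitiveRoot lam m) (hm0 : m ≠ 0) (N : ℕ) :
    (μ ^ N = 1 ∧ (lam⁻¹ * μ) ^ N = 1) ↔ Nat.lcm κ m ∣ N := by
  have hl0 : lam ≠ 0 := hlam.ne_zero hm0
  rw [lcm_dvd_iff', ← hμ.pow_eq_one_iff_dvd, ← hlam.pow_eq_one_iff_dvd]
  constructor
  · rintro ⟨h1, h2⟩
    refine ⟨h1, ?_⟩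
    rw [mul_pow, h1, mul_one, inv_pow, inv_eq_one] at h2
    exact h2
  · rintro ⟨h1, h2⟩
    refine ⟨h1, ?_⟩
    rw [mul_pow, h1, mul_one, inv_pow, inv_eq_one]
    exact h2

lemma order_iff_b {κ m : ℕ} {μ lam : k} (hμ : IsPrimitiveRoot μ κ)
    (hlam : IsPrimitiveRoot lam m) (hκ0 : κ ≠ 0) (hm0 : m ≠ 0) (N : ℕ) :
    ((lam⁻¹ * μ⁻¹) ^ N = 1 ∧ (μ⁻¹) ^ N = 1) ↔ Nat.lcm κ m ∣ N := by
  have hl0 : lam ≠ 0 := hlam.ne_zero hm0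
  have hμ0 : μ ≠ 0 := hμ.ne_zero hκ0
  rw [lcm_dvd_iff', ← hμ.pow_eq_one_iff_dvd, ← hlam.pow_eq_one_iff_dvd]
  have e1 : (μ⁻¹ : k) ^ N = 1 ↔ μ ^ N = 1 := by rw [inv_pow, inv_eq_one]
  constructor
  · rintro ⟨h1, h2⟩
    rw [e1] at h2
    refine ⟨h2, ?_⟩
    rw [mul_pow, inv_pow, inv_pow, h2, inv_one, mul_one, inv_eq_one] at h1
    exact h1
  · rintro ⟨h1, h2⟩
    rw [e1]
    refine ⟨?_, h1⟩
    rw [mul_pow, inv_pow, inv_pow, h1, h2, inv_one, mul_one]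

variable {k : Type} [Field k]

lemma smul_eq_self' {A : Type} [Ring A] [Algebra k A] {w : A} (hw : w ≠ 0) {t : k}
    (h : t • w = w) : t = 1 := by
  have h2 : (t - 1) • w = 0 := by rw [sub_smul, one_smul, h, sub_self]
  rcases smul_eq_zero.mp h2 with h3 | h3
  · exact sub_eq_zero.mp h3
  · exact absurd h3 hw

lemma orderOf_diag (μ c : k) (hμ0 : μ ≠ 0) {a d : k} {L : ℕ} (hL : L ≠ 0)
    (G : QPW k μ c ≃ₐ[k] QPW k μ c)
    (hgu : G (QPW.u k μ c) = a • QPW.u k μ c) (hgv : G (QPW.v k μ c) = d • QPW.v k μ c)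
    (hiff : ∀ N, (a ^ N = 1 ∧ d ^ N = 1) ↔ L ∣ N) : orderOf G = L := by
  apply orderOf_eq_of_iff G L hL
  intro N
  constructor
  · intro h
    apply (hiff N).mp
    constructor
    · apply smul_eq_self' (u_ne μ c hμ0)
      rw [← pow_apply_smul G _ a hgu N, h, AlgEquiv.one_apply]
    · apply smul_eq_self' (v_ne μ c hμ0)
      rw [← pow_apply_smul G _ d hgv N, h, AlgEquiv.one_apply]
  · intro h
    obtain ⟨h1, h2⟩ := (hiff N).mpr h
    apply algEquiv_eq_one (G ^ N) (adjoin_top μ c)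
    · rw [pow_apply_smul G _ a hgu N, h1, one_smul]
    · rw [pow_apply_smul G _ d hgv N, h2, one_smul]

end QPWAux

set_option maxHeartbeats 2000000 in
/-- Let `A = k_μ[u,v]` (the quantum plane, `c = 0`) or `A = A_1^μ(k)` (the
quantum Weyl algebra, `c = 1`), with `ord(μ) = κ > 1`.  Then the generalized Taft algebra
`T = T_n(λ,m,0)` acts linearly and inner faithfully on `A` if and only if
`n = lcm(κ,m)` and the action is given by one of the following:
(a) `g·u = μu`, `g·v = λ⁻¹μv`, `x·u = 0`, `x·v = ηu` for some `η ∈ kˣ`, and if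
`A = A_1^μ(k)` then `λ = μ²`; or
(b) `g·u = λ⁻¹μ⁻¹u`, `g·v = μ⁻¹v`, `x·u = ηv` for some `η ∈ kˣ`, `x·v = 0`, and if
`A = A_1^μ(k)` then `λ = μ⁻²`. -/
theorem stmt_2 {k : Type} [Field k] {μ c : k} {κ : ℕ} (hμ : IsPrimitiveRoot μ κ)
    (hκ : 1 < κ) (hc : c = 0 ∨ c = 1)
    {n m : ℕ} {lam : k} (hlam : IsPrimitiveRoot lam m) (hmn : m ∣ n)
    (T : TaftAction k n m lam 0 (QPW k μ c)) :
    ((∀ a ∈ Submodule.span k {QPW.u k μ c, QPW.v k μ c},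
        T.g a ∈ Submodule.span k {QPW.u k μ c, QPW.v k μ c}) ∧
     (∀ a ∈ Submodule.span k {QPW.u k μ c, QPW.v k μ c},
        T.x a ∈ Submodule.span k {QPW.u k μ c, QPW.v k μ c}) ∧
     T.InnerFaithful)
    ↔ (n = Nat.lcm κ m ∧
       ((T.g (QPW.u k μ c) = μ • QPW.u k μ c ∧
         T.g (QPW.v k μ c) = (lam⁻¹ * μ) • QPW.v k μ c ∧
         T.x (QPW.u k μ c) = 0 ∧
         (∃ η : k, η ≠ 0 ∧ T.x (QPW.v k μ c) = η • QPW.u k μ c) ∧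
         (c ≠ 0 → lam = μ ^ 2)) ∨
        (T.g (QPW.u k μ c) = (lam⁻¹ * μ⁻¹) • QPW.u k μ c ∧
         T.g (QPW.v k μ c) = μ⁻¹ • QPW.v k μ c ∧
         (∃ η : k, η ≠ 0 ∧ T.x (QPW.u k μ c) = η • QPW.v k μ c) ∧
         T.x (QPW.v k μ c) = 0 ∧
         (c ≠ 0 → lam = (μ ^ 2)⁻¹)))) := by
  classical
  have hκ0 : κ ≠ 0 := by omega
  have hμ0 : μ ≠ 0 := hμ.ne_zero hκ0
  have hμ1 : μ ≠ 1 := hμ.ne_one hκ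
  have hxm : T.x ^ m = 0 := by rw [T.x_pow, zero_smul]
  have hm0 : m ≠ 0 := by
    intro h
    subst h
    rw [pow_zero] at hxm
    have h1 := LinearMap.congr_fun hxm (QPW.u k μ c)
    simp only [Module.End.one_apply, LinearMap.zero_apply] at h1
    exact QPWAux.u_ne μ c hμ0 h1
  have hl0 : lam ≠ 0 := hlam.ne_zero hm0
  have hL0 : Nat.lcm κ m ≠ 0 := Nat.lcm_ne_zero hκ0 hm0
  have husp : QPW.u k μ c ∈ Submodule.span k {QPW.u k μ c, QPW.v k μ c} :=
    Submodule.subset_span (by simp)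
  have hvsp : QPW.v k μ c ∈ Submodule.span k {QPW.u k μ c, QPW.v k μ c} :=
    Submodule.subset_span (by simp)
  have EVh : ∀ {z w : QPW k μ c}, z = w → ∀ key : ℕ × ℕ,
      QPWAux.rep μ c hμ0 z (Finsupp.single (0,0) 1) key
        = QPWAux.rep μ c hμ0 w (Finsupp.single (0,0) 1) key := by
    rintro z w rfl key; rfl
  constructor
  · rintro ⟨hg, hx, hxne, hord⟩
    have hm1 : m ≠ 1 := by
      intro h
      subst h
      rw [pow_one] at hxm
      exact hxne hxm
    have hlam1 : lam ≠ 1 := hlam.ne_one (by omega)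
    have xzero : T.x (QPW.u k μ c) = 0 → T.x (QPW.v k μ c) = 0 → False := fun h1 h2 =>
      hxne (QPWAux.taft_x_eq_zero T (QPWAux.adjoin_top μ c) h1 h2)
    obtain ⟨a, b, hab⟩ := Submodule.mem_span_pair.mp (hg _ husp)
    obtain ⟨c', d, hcd⟩ := Submodule.mem_span_pair.mp (hg _ hvsp)
    obtain ⟨α, β, hαβ⟩ := Submodule.mem_span_pair.mp (hx _ husp)
    obtain ⟨γ, δ, hγδ⟩ := Submodule.mem_span_pair.mp (hx _ hvsp)
    have hgrel : (a • QPW.u k μ c + b • QPW.v k μ c) * (c' • QPW.u k μ c + d • QPW.v k μ c)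
        = μ • ((c' • QPW.u k μ c + d • QPW.v k μ c) * (a • QPW.u k μ c + b • QPW.v k μ c))
          + c • 1 := by
      have h1 := congrArg T.g (QPWAux.urel μ c)
      simp only [map_mul, map_add, map_smul, map_one] at h1
      rw [← hab, ← hcd] at h1
      exact h1
    have e20 := EVh hgrel ((2:ℕ),(0:ℕ))
    have e02 := EVh hgrel ((0:ℕ),(2:ℕ))
    have e11 := EVh hgrel ((1:ℕ),(1:ℕ))
    have e00 := EVh hgrel ((0:ℕ),(0:ℕ))
    simp [QPWAux.rep_u, QPWAux.rep_v, Module.End.mul_apply, QPWAux.gam'_succ,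
      Finsupp.single_apply, smul_add, -Prod.mk_one_one, -Prod.mk_zero_zero,
      Prod.mk.injEq] at e20
    simp [QPWAux.rep_u, QPWAux.rep_v, Module.End.mul_apply, QPWAux.gam'_succ,
      Finsupp.single_apply, smul_add, -Prod.mk_one_one, -Prod.mk_zero_zero,
      Prod.mk.injEq] at e02
    simp [QPWAux.rep_u, QPWAux.rep_v, Module.End.mul_apply, QPWAux.gam'_succ,
      Finsupp.single_apply, smul_add, -Prod.mk_one_one, -Prod.mk_zero_zero,
      Prod.mk.injEq] at e11
    simp [QPWAux.rep_u, QPWAux.rep_v, Module.End.mul_apply, QPWAux.gam'_succ,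
      Finsupp.single_apply, smul_add, -Prod.mk_one_one, -Prod.mk_zero_zero,
      Prod.mk.injEq] at e00
    have hac : a * c' = 0 := by
      have h' : a * c' * (1 - μ) = 0 := by linear_combination e20
      rcases mul_eq_zero.mp h' with h'' | h''
      · exact h''
      · exact absurd (by linear_combination -h'') hμ1
    have hbd : b * d = 0 := by
      have h' : b * d * (1 - μ) = 0 := by linear_combination e02
      rcases mul_eq_zero.mp h' with h'' | h''
      · exact h''
      · exact absurd (by linear_combination -h'') hμ1
    -- the skew-derivation relation
    have hxr : T.g (QPW.u k μ c) * T.x (QPW.v k μ c) + T.x (QPW.u k μ c) * QPW.v k μ c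
        = μ • (T.g (QPW.v k μ c) * T.x (QPW.u k μ c) + T.x (QPW.v k μ c) * QPW.u k μ c) := by
      have h1 := congrArg T.x (QPWAux.urel μ c)
      rw [T.skew, map_add, map_smul, map_smul, QPWAux.taft_x_one, smul_zero, add_zero,
        T.skew] at h1
      exact h1
    rw [← hab, ← hcd, ← hαβ, ← hγδ] at hxr
    have f20 := EVh hxr ((2:ℕ),(0:ℕ))
    have f02 := EVh hxr ((0:ℕ),(2:ℕ))
    have f11 := EVh hxr ((1:ℕ),(1:ℕ))
    have f00 := EVh hxr ((0:ℕ),(0:ℕ))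
    simp [QPWAux.rep_u, QPWAux.rep_v, Module.End.mul_apply, QPWAux.gam'_succ,
      Finsupp.single_apply, smul_add, -Prod.mk_one_one, -Prod.mk_zero_zero,
      Prod.mk.injEq] at f20
    simp [QPWAux.rep_u, QPWAux.rep_v, Module.End.mul_apply, QPWAux.gam'_succ,
      Finsupp.single_apply, smul_add, -Prod.mk_one_one, -Prod.mk_zero_zero,
      Prod.mk.injEq] at f02
    simp [QPWAux.rep_u, QPWAux.rep_v, Module.End.mul_apply, QPWAux.gam'_succ,
      Finsupp.single_apply, smul_add, -Prod.mk_one_one, -Prod.mk_zero_zero,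
      Prod.mk.injEq] at f11
    simp [QPWAux.rep_u, QPWAux.rep_v, Module.End.mul_apply, QPWAux.gam'_succ,
      Finsupp.single_apply, smul_add, -Prod.mk_one_one, -Prod.mk_zero_zero,
      Prod.mk.injEq] at f00
    -- the commutation relation on u and v
    have hcu := T.comm (QPW.u k μ c)
    have hcv := T.comm (QPW.v k μ c)
    rw [← hαβ, map_add, map_smul, map_smul, ← hab, ← hcd, map_add, map_smul, map_smul,
      ← hαβ, ← hγδ] at hcu
    rw [← hγδ, map_add, map_smul, map_smul, ← hab, ← hcd, map_add, map_smul, map_smul,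
      ← hαβ, ← hγδ] at hcv
    have g10u := EVh hcu ((1:ℕ),(0:ℕ))
    have g01u := EVh hcu ((0:ℕ),(1:ℕ))
    have g10v := EVh hcv ((1:ℕ),(0:ℕ))
    have g01v := EVh hcv ((0:ℕ),(1:ℕ))
    simp [QPWAux.rep_u, QPWAux.rep_v, Module.End.mul_apply, QPWAux.gam'_succ,
      Finsupp.single_apply, smul_add, -Prod.mk_one_one, -Prod.mk_zero_zero,
      Prod.mk.injEq] at g10u
    simp [QPWAux.rep_u, QPWAux.rep_v, Module.End.mul_apply, QPWAux.gam'_succ,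
      Finsupp.single_apply, smul_add, -Prod.mk_one_one, -Prod.mk_zero_zero,
      Prod.mk.injEq] at g01u
    simp [QPWAux.rep_u, QPWAux.rep_v, Module.End.mul_apply, QPWAux.gam'_succ,
      Finsupp.single_apply, smul_add, -Prod.mk_one_one, -Prod.mk_zero_zero,
      Prod.mk.injEq] at g10v
    simp [QPWAux.rep_u, QPWAux.rep_v, Module.End.mul_apply, QPWAux.gam'_succ,
      Finsupp.single_apply, smul_add, -Prod.mk_one_one, -Prod.mk_zero_zero,
      Prod.mk.injEq] at g01v
    by_cases ha : a = 0
    · -- antidiagonal case: derive a contradiction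
      exfalso
      subst ha
      have hb : b ≠ 0 := by
        intro h0
        apply QPWAux.u_ne μ c hμ0
        apply T.g.injective
        rw [map_zero, ← hab, h0, zero_smul, zero_smul, add_zero]
      have hd : d = 0 := by
        rcases mul_eq_zero.mp hbd with h | h
        · exact absurd h hb
        · exact h
      subst hd
      have hc' : c' ≠ 0 := by
        intro h0
        apply QPWAux.v_ne μ c hμ0
        apply T.g.injective
        rw [map_zero, ← hcd, h0, zero_smul, zero_smul, add_zero]
      have hμ2 : μ * μ = 1 := by
        have h' : b * c' * (1 - μ * μ) = 0 := by
          field_simp at e11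
          linear_combination e11
        rcases mul_eq_zero.mp h' with h | h
        · rcases mul_eq_zero.mp h with h1 | h1
          · exact absurd h1 hb
          · exact absurd h1 hc'
        · linear_combination -h
      have hμm1 : μ = -1 := by
        have h' : (μ - 1) * (μ + 1) = 0 := by linear_combination hμ2
        rcases mul_eq_zero.mp h' with h | h
        · exact absurd (by linear_combination h) hμ1
        · linear_combination h
      have h2ne : (2 : k) ≠ 0 := by
        intro h
        apply hμ1
        rw [hμm1]
        linear_combination -h
      have hαδ : α = lam * δ := by
        have h' : (α - lam * δ) * b = 0 := by linear_combination g01u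
        rcases mul_eq_zero.mp h' with h | h
        · linear_combination h
        · exact absurd h hb
      have hδα : δ = lam * α := by
        have h' : (δ - lam * α) * c' = 0 := by linear_combination g10v
        rcases mul_eq_zero.mp h' with h | h
        · linear_combination h
        · exact absurd h hc'
      by_cases hlam2 : lam * lam = 1
      · -- lam = -1, m = 2
        have hlamm1 : lam = -1 := by
          have h' : (lam - 1) * (lam + 1) = 0 := by linear_combination hlam2
          rcases mul_eq_zero.mp h' with h | h
          · exact absurd (by linear_combination h) hlam1
          · linear_combination h
        have hm2 : m = 2 := by
          have h2 : m ∣ 2 := by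
            apply (hlam.pow_eq_one_iff_dvd 2).mp
            rw [pow_two]
            exact hlam2
          rcases (Nat.dvd_prime Nat.prime_two).mp h2 with h | h
          · exact absurd h hm1
          · exact h
        subst hm2
        have hγval : γ = -(c' * α) := by
          have h' : μ * (c' * α + γ) = 0 := by linear_combination -f20
          rcases mul_eq_zero.mp h' with h | h
          · exact absurd h hμ0
          · linear_combination h
        have hβval : β = -(b * δ) := by linear_combination f02
        -- from f11 get 2 * (α * (b * c' + 1)) = 0
        rw [hγval, hβval, hδα, hlamm1, hμm1] at f11
        simp only [inv_neg, inv_one] at f11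
        have hkey : (2 : k) * (α * (b * c' + 1)) = 0 := by linear_combination f11
        have hkey2 : α * (b * c' + 1) = 0 := by
          rcases mul_eq_zero.mp hkey with h | h
          · exact absurd h h2ne
          · exact h
        by_cases hα0 : α = 0
        · have hδ0 : δ = 0 := by rw [hδα, hα0, mul_zero]
          have hβ0 : β = 0 := by rw [hβval, hδ0, mul_zero, neg_zero]
          have hγ0 : γ = 0 := by rw [hγval, hα0, mul_zero, neg_zero]
          apply xzero
          · rw [← hαβ, hα0, hβ0, zero_smul, zero_smul, add_zero]
          · rw [← hγδ, hγ0, hδ0, zero_smul, zero_smul, add_zero]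
        · have hbc' : b * c' = -1 := by
            have h := mul_eq_zero.mp hkey2
            rcases h with h | h
            · exact absurd h hα0
            · linear_combination h
          -- x^2 = 0 applied to u
          have hx2 := LinearMap.congr_fun hxm (QPW.u k μ c)
          rw [pow_two, Module.End.mul_apply, ← hαβ, map_add, map_smul, map_smul, ← hαβ,
            ← hγδ] at hx2
          have q10 := EVh hx2 ((1:ℕ),(0:ℕ))
          simp [QPWAux.rep_u, QPWAux.rep_v, Module.End.mul_apply, QPWAux.gam'_succ,
            Finsupp.single_apply, smul_add, -Prod.mk_one_one, -Prod.mk_zero_zero,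
            Prod.mk.injEq] at q10
          -- q10 : α * α + β * γ = 0 (expected)
          rw [hγval, hβval, hδα, hlamm1] at q10
          have hkey3 : α * α * (1 - b * c') = 0 := by linear_combination q10
          have hfin : (2 : k) * (α * α) = 0 := by linear_combination hkey3 + (α * α) * hbc'
          rcases mul_eq_zero.mp hfin with h | h
          · exact h2ne h
          · rcases mul_eq_zero.mp h with h1 | h1 <;> exact hα0 h1
      · -- lam^2 ≠ 1: x kills u and v, contradiction
        have hα : α = 0 := by
          have h' : α * (1 - lam * lam) = 0 := by linear_combination hαδ + lam * hδα
          rcases mul_eq_zero.mp h' with h | h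
          · exact h
          · exact absurd (by linear_combination -h) hlam2
        have hδ : δ = 0 := by rw [hδα, hα, mul_zero]
        have hβ : β = 0 := by
          have h' : β * c' * (1 - lam * lam) = 0 := by linear_combination g10u + lam * g01v
          rcases mul_eq_zero.mp h' with h | h
          · rcases mul_eq_zero.mp h with h1 | h1
            · exact h1
            · exact absurd h1 hc'
          · exact absurd (by linear_combination -h) hlam2
        have hγ : γ = 0 := by
          have h' : γ * b = 0 := by
            rw [hβ] at g01v
            linear_combination g01v
          rcases mul_eq_zero.mp h' with h | h
          · exact h
          · exact absurd h hb
        apply xzero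
        · rw [← hαβ, hα, hβ, zero_smul, zero_smul, add_zero]
        · rw [← hγδ, hγ, hδ, zero_smul, zero_smul, add_zero]
    · -- diagonal case
      have hc'0 : c' = 0 := by
        rcases mul_eq_zero.mp hac with h | h
        · exact absurd h ha
        · exact h
      subst hc'0
      have hd : d ≠ 0 := by
        intro h0
        apply QPWAux.v_ne μ c hμ0
        apply T.g.injective
        rw [map_zero, ← hcd, h0, zero_smul, zero_smul, add_zero]
      have hb0 : b = 0 := by
        rcases mul_eq_zero.mp hbd with h | h
        · exact h
        · exact absurd h hd
      subst hb0
      have hα : α = 0 := by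
        have h' : α * a * (1 - lam) = 0 := by linear_combination g10u
        rcases mul_eq_zero.mp h' with h | h
        · rcases mul_eq_zero.mp h with h1 | h1
          · exact h1
          · exact absurd h1 ha
        · exact absurd (by linear_combination -h) hlam1
      have hδ : δ = 0 := by
        have h' : δ * d * (1 - lam) = 0 := by linear_combination g01v
        rcases mul_eq_zero.mp h' with h | h
        · rcases mul_eq_zero.mp h with h1 | h1
          · exact h1
          · exact absurd h1 hd
        · exact absurd (by linear_combination -h) hlam1
      have hxuv : T.x (QPW.u k μ c) = β • QPW.v k μ c := by
        rw [← hαβ, hα, zero_smul, zero_add]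
      have hxvv : T.x (QPW.v k μ c) = γ • QPW.u k μ c := by
        rw [← hγδ, hδ, zero_smul, add_zero]
      have hβγ : β * γ = 0 := by
        have h2m : (T.x ^ (2 * m)) (QPW.u k μ c) = 0 := by
          rw [two_mul, pow_add, hxm, zero_mul]
          simp
        have h2m' := QPWAux.xpow_two_mul T hxuv hxvv m
        rw [h2m] at h2m'
        have h0 : (β * γ) ^ m = 0 := by
          rcases smul_eq_zero.mp h2m'.symm with h | h
          · exact h
          · exact absurd h (QPWAux.u_ne μ c hμ0)
        exact (pow_eq_zero_iff hm0).mp h0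
      have hβla : β * (d - lam * a) = 0 := by linear_combination g01u
      have hγla : γ * (a - lam * d) = 0 := by linear_combination g10v
      have hconst : c * (1 - d * a) = 0 := by
        field_simp at e00
        have h' : c * (1 - d * a) * μ = 0 := by linear_combination -e00
        rcases mul_eq_zero.mp h' with h | h
        · exact h
        · exact absurd h hμ0
      by_cases hβ : β = 0
      · -- case (a)
        have hγ : γ ≠ 0 := by
          intro h0
          exact xzero (by rw [hxuv, hβ, zero_smul]) (by rw [hxvv, h0, zero_smul])
        have haμ : a = μ := by
          have h' : γ * (a - μ) = 0 := by linear_combination f20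
          rcases mul_eq_zero.mp h' with h | h
          · exact absurd h hγ
          · linear_combination h
        have hlad : lam * d = μ := by
          have h1 : a - lam * d = 0 := by
            rcases mul_eq_zero.mp hγla with h | h
            · exact absurd h hγ
            · exact h
          linear_combination haμ - h1
        have hdval : d = lam⁻¹ * μ := by
          rw [← hlad, inv_mul_cancel_left₀ hl0]
        have hgu' : T.g (QPW.u k μ c) = μ • QPW.u k μ c := by
          rw [← hab, zero_smul, add_zero, haμ]
        have hgv' : T.g (QPW.v k μ c) = (lam⁻¹ * μ) • QPW.v k μ c := by
          rw [← hcd, zero_smul, zero_add, hdval]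
        refine ⟨?_, Or.inl ⟨hgu', hgv', ?_, ⟨γ, hγ, hxvv⟩, ?_⟩⟩
        · exact hord.symm.trans (QPWAux.orderOf_diag μ c hμ0 hL0 T.g hgu' hgv'
            (fun N => QPWAux.order_iff_a hμ hlam hm0 N))
        · rw [hxuv, hβ, zero_smul]
        · intro hcne
          have h1 : 1 - d * a = 0 := by
            rcases mul_eq_zero.mp hconst with h | h
            · exact absurd h hcne
            · exact h
          rw [haμ] at h1
          have h2 : lam * (d * μ) = lam := by rw [sub_eq_zero] at h1; rw [← h1, mul_one]
          rw [← mul_assoc, hlad] at h2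
          linear_combination -h2
      · -- case (b)
        have hγ0 : γ = 0 := by
          rcases mul_eq_zero.mp hβγ with h | h
          · exact absurd h hβ
          · exact h
        have hμd : μ * d = 1 := by
          have h' : β * (1 - μ * d) = 0 := by linear_combination f02
          rcases mul_eq_zero.mp h' with h | h
          · exact absurd h hβ
          · linear_combination -h
        have hdval : d = μ⁻¹ := by
          field_simp
          linear_combination hμd
        have hlaa : lam * a = μ⁻¹ := by
          have h1 : d - lam * a = 0 := by
            rcases mul_eq_zero.mp hβla with h | h
            · exact absurd h hβ
            · exact h
          rw [sub_eq_zero] at h1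
          rw [← h1, hdval]
        have haval : a = lam⁻¹ * μ⁻¹ := by
          rw [← hlaa, inv_mul_cancel_left₀ hl0]
        have hgu' : T.g (QPW.u k μ c) = (lam⁻¹ * μ⁻¹) • QPW.u k μ c := by
          rw [← hab, zero_smul, add_zero, haval]
        have hgv' : T.g (QPW.v k μ c) = μ⁻¹ • QPW.v k μ c := by
          rw [← hcd, zero_smul, zero_add, hdval]
        refine ⟨?_, Or.inr ⟨hgu', hgv', ⟨β, hβ, hxuv⟩, ?_, ?_⟩⟩
        · exact hord.symm.trans (QPWAux.orderOf_diag μ c hμ0 hL0 T.g hgu' hgv'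
            (fun N => QPWAux.order_iff_b hμ hlam hκ0 hm0 N))
        · rw [hxvv, hγ0, zero_smul]
        · intro hcne
          have h1 : 1 - d * a = 0 := by
            rcases mul_eq_zero.mp hconst with h | h
            · exact absurd h hcne
            · exact h
          rw [sub_eq_zero] at h1
          rw [hdval, haval] at h1
          field_simp at h1
          have h2 : lam * μ ^ 2 = 1 := by linear_combination h1
          exact eq_inv_of_mul_eq_one_left h2

  · rintro ⟨hn, hcase⟩
    rcases hcase with ⟨hgu, hgv, hxu, ⟨η, hη, hxv⟩, hwc⟩ | ⟨hgu, hgv, ⟨η, hη, hxu⟩, hxv, hwc⟩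
    · refine ⟨?_, ?_, ?_, ?_⟩
      · intro w hw
        obtain ⟨p, q, hpq⟩ := Submodule.mem_span_pair.mp hw
        rw [← hpq, map_add, map_smul, map_smul, hgu, hgv]
        exact Submodule.add_mem _ (Submodule.smul_mem _ _ (Submodule.smul_mem _ _ husp))
          (Submodule.smul_mem _ _ (Submodule.smul_mem _ _ hvsp))
      · intro w hw
        obtain ⟨p, q, hpq⟩ := Submodule.mem_span_pair.mp hw
        rw [← hpq, map_add, map_smul, map_smul, hxu, hxv]
        rw [smul_zero, zero_add]
        exact Submodule.smul_mem _ _ (Submodule.smul_mem _ _ husp)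
      · intro h0
        rw [h0] at hxv
        simp only [LinearMap.zero_apply] at hxv
        rcases smul_eq_zero.mp hxv.symm with h1 | h1
        · exact hη h1
        · exact QPWAux.u_ne μ c hμ0 h1
      · show orderOf T.g = n
        exact (QPWAux.orderOf_diag μ c hμ0 hL0 T.g hgu hgv
          (fun N => QPWAux.order_iff_a hμ hlam hm0 N)).trans hn.symm
    · refine ⟨?_, ?_, ?_, ?_⟩
      · intro w hw
        obtain ⟨p, q, hpq⟩ := Submodule.mem_span_pair.mp hw
        rw [← hpq, map_add, map_smul, map_smul, hgu, hgv]
        exact Submodule.add_mem _ (Submodule.smul_mem _ _ (Submodule.smul_mem _ _ husp))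
          (Submodule.smul_mem _ _ (Submodule.smul_mem _ _ hvsp))
      · intro w hw
        obtain ⟨p, q, hpq⟩ := Submodule.mem_span_pair.mp hw
        rw [← hpq, map_add, map_smul, map_smul, hxu, hxv]
        rw [smul_zero, add_zero]
        exact Submodule.smul_mem _ _ (Submodule.smul_mem _ _ hvsp)
      · intro h0
        rw [h0] at hxu
        simp only [LinearMap.zero_apply] at hxu
        rcases smul_eq_zero.mp hxu.symm with h1 | h1
        · exact hη h1
        · exact QPWAux.v_ne μ c hμ0 h1
      · show orderOf T.g = n
        exact (QPWAux.orderOf_diag μ c hμ0 hL0 T.g hgu hgv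
          (fun N => QPWAux.order_iff_b hμ hlam hκ0 hm0 N)).trans hn.symm
end

section
/- Suppose H(G,g,χ,γ) acts linearly and inner faithfully on the quantum affine space A = k_p[u_1,…,u_t], where m := ord(χ(g)), t, and ord(p_{ij}) for all i ≠ j are all at least 3, and where g acts diagonally, g·u_i = α_i u_i; write x·u_j = Σ_i η_{ij}u_i. Then: (1) η_{ij}η_{ji} = 0 for all i,j, in particular η_{kk} = 0 for all k; (2) each column of the matrix (η_{ij}) has at most one nonzero entry; (3) each row of (η_{ij}) has at most one nonzero entry; (4) if t > 3 and i,j,k,ℓ are all distinct then η_{ij}η_{kℓ} = 0; (5) if m ≠ 3 then the matrix (η_{ij}) is nilpotent; (6) if ord(g) = m, or if t ≤ m and m ≠ 3, then γ = 0. -/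
/-- Defining relations `u_i u_j = p_{ij} u_j u_i` of quantum affine space. -/
inductive QASRel (k : Type) [Field k] {t : ℕ} (p : Fin t → Fin t → k) :
    FreeAlgebra k (Fin t) → FreeAlgebra k (Fin t) → Prop
  | rel (i j : Fin t) :
      QASRel k p (FreeAlgebra.ι k i * FreeAlgebra.ι k j)
        (p i j • (FreeAlgebra.ι k j * FreeAlgebra.ι k i))

/-- The quantum affine space `k_p[u_1, …, u_t]`. -/
abbrev QAS (k : Type) [Field k] {t : ℕ} (p : Fin t → Fin t → k) : Type :=
  RingQuot (QASRel k p)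

/-- The generators `u_i` of the quantum affine space. -/
noncomputable def QAS.u (k : Type) [Field k] {t : ℕ} (p : Fin t → Fin t → k) (i : Fin t) :
    QAS k p :=
  RingQuot.mkAlgHom k (QASRel k p) (FreeAlgebra.ι k i)

namespace Stmt4Aux

variable {k : Type} [Field k] {t : ℕ}

noncomputable def cf (p : Fin t → Fin t → k) (i : Fin t) (a : Fin t →₀ ℕ) : k :=
  ∏ j, (if j < i then p i j else 1) ^ a j

noncomputable def Top (p : Fin t → Fin t → k) (i : Fin t) :
    Module.End k ((Fin t →₀ ℕ) →₀ k) :=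
  Finsupp.lsum k fun a => cf p i a • Finsupp.lsingle (a + Finsupp.single i 1)

lemma Top_single (p : Fin t → Fin t → k) (i : Fin t) (a : Fin t →₀ ℕ) (r : k) :
    Top p i (Finsupp.single a r)
      = cf p i a • Finsupp.single (a + Finsupp.single i 1) r := by
  simp [Top]

lemma cf_zero (p : Fin t → Fin t → k) (i : Fin t) : cf p i 0 = 1 := by simp [cf]

lemma cf_add_single (p : Fin t → Fin t → k) (i j : Fin t) (a : Fin t →₀ ℕ) :
    cf p i (a + Finsupp.single j 1) = cf p i a * (if j < i then p i j else 1) := by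
  classical
  unfold cf
  have h1 : ∀ l : Fin t, (if l < i then p i l else 1) ^ ((a + Finsupp.single j 1 : Fin t →₀ ℕ) l)
      = (if l < i then p i l else 1) ^ a l * (if j = l then (if l < i then p i l else 1) else 1) := by
    intro l
    rw [Finsupp.add_apply, Finsupp.single_apply, pow_add]
    by_cases h : j = l <;> simp [h]
  rw [Finset.prod_congr rfl (fun l _ => h1 l), Finset.prod_mul_distrib,
    Finset.prod_ite_eq]
  simp

variable (p : Fin t → Fin t → k) (hp1 : ∀ i, p i i = 1) (hpa : ∀ i j, p i j * p j i = 1)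

include hp1 hpa in
lemma Top_rel (i j : Fin t) : Top p i * Top p j = p i j • (Top p j * Top p i) := by
  apply Finsupp.lhom_ext
  intro a r
  simp only [Module.End.mul_apply, LinearMap.smul_apply, Top_single, map_smul,
    smul_smul, cf_add_single]
  rw [add_right_comm a (Finsupp.single j 1) (Finsupp.single i 1)]
  congr 1
  rcases lt_trichotomy i j with h | h | h
  · have h2 : ¬ j < i := not_lt.mpr h.le
    simp only [h, h2, if_true, if_false, mul_one]
    linear_combination -(cf p j a * cf p i a) * hpa i j
  · subst h; simp [hp1]
  · have h2 : ¬ i < j := not_lt.mpr h.le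
    simp only [h, h2, if_true, if_false, mul_one]
    ring

noncomputable def phiF : QAS k p →ₐ[k] Module.End k ((Fin t →₀ ℕ) →₀ k) :=
  RingQuot.liftAlgHom k ⟨FreeAlgebra.lift k (Top p), by
    rintro x y ⟨i, j⟩
    simp only [map_mul, map_smul, FreeAlgebra.lift_ι_apply]
    exact Top_rel p hp1 hpa i j⟩

lemma phiF_u (i : Fin t) : phiF p hp1 hpa (QAS.u k p i) = Top p i := by
  rw [QAS.u, phiF, RingQuot.liftAlgHom_mkAlgHom_apply, FreeAlgebra.lift_ι_apply]

noncomputable def Pl : QAS k p →ₗ[k] ((Fin t →₀ ℕ) →₀ k) where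
  toFun z := phiF p hp1 hpa z (Finsupp.single 0 1)
  map_add' x y := by simp only [map_add, LinearMap.add_apply]
  map_smul' c x := by simp only [map_smul, LinearMap.smul_apply, RingHom.id_apply]

def qf (a b : Fin t) : k := if b < a then p a b else 1

include hpa in
lemma qf_ne_zero (a b : Fin t) : qf p a b ≠ 0 := by
  unfold qf
  split
  · intro h0
    have := hpa a b
    rw [h0, zero_mul] at this
    exact zero_ne_one this
  · exact one_ne_zero

lemma Pl_u (i : Fin t) :
    Pl p hp1 hpa (QAS.u k p i) = Finsupp.single (Finsupp.single i 1) 1 := by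
  simp only [Pl, LinearMap.coe_mk, AddHom.coe_mk, phiF_u, Top_single, cf_zero,
    one_smul, zero_add]

lemma Pl_uu (a b : Fin t) :
    Pl p hp1 hpa (QAS.u k p a * QAS.u k p b)
      = qf p a b • Finsupp.single (Finsupp.single b 1 + Finsupp.single a 1) (1 : k) := by
  simp only [Pl, LinearMap.coe_mk, AddHom.coe_mk, map_mul, Module.End.mul_apply,
    phiF_u, Top_single, cf_zero, one_smul, zero_add, map_smul]
  congr 1
  rw [show (Finsupp.single b 1 : Fin t →₀ ℕ) = 0 + Finsupp.single b 1 from (zero_add _).symm,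
    cf_add_single, cf_zero, one_mul]
  rfl

lemma pair_eq_iff (i l a b : Fin t) :
    (Finsupp.single i 1 + Finsupp.single l 1 : Fin t →₀ ℕ)
      = Finsupp.single a 1 + Finsupp.single b 1
    ↔ ((i = a ∧ l = b) ∨ (i = b ∧ l = a)) := by
  constructor
  · intro h
    by_cases hia : i = a
    · subst hia
      left
      refine ⟨rfl, ?_⟩
      have := add_left_cancel h
      exact (Finsupp.single_left_inj one_ne_zero).mp this
    · right
      have ha := DFunLike.congr_fun h a
      simp only [Finsupp.add_apply, Finsupp.single_apply] at ha
      have hla : l = a := by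
        by_contra hla
        by_cases hba : b = a <;> simp [hia, hla, hba] at ha
      subst hla
      refine ⟨?_, rfl⟩
      rw [add_comm (Finsupp.single l (1:ℕ)) (Finsupp.single b 1)] at h
      have := add_right_cancel h
      exact (Finsupp.single_left_inj one_ne_zero).mp this
  · rintro (⟨h1, h2⟩ | ⟨h1, h2⟩)
    · subst h1; subst h2; rfl
    · subst h1; subst h2; exact add_comm _ _

end Stmt4Aux

/-- Suppose `H(G,g,χ,γ)` acts linearly and inner faithfully on the quantum
affine space `A = k_p[u_1,…,u_t]`, where `m := ord(χ(g))`, `t`, and `ord(p_{ij})` for all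
`i ≠ j` are all at least `3`, and where `g` acts diagonally, `g·u_i = α_i u_i`; write
`x·u_j = Σ_i η_{ij} u_i`.  Then:
(1) `η_{ij} η_{ji} = 0` for all `i,j`, in particular `η_{kk} = 0` for all `k`;
(2) each column of the matrix `(η_{ij})` has at most one nonzero entry;
(3) each row of `(η_{ij})` has at most one nonzero entry;
(4) if `t > 3` and `i,j,k,ℓ` are all distinct, then `η_{ij} η_{kℓ} = 0`;
(5) if `m ≠ 3`, then the matrix `(η_{ij})` is nilpotent;
(6) if `ord(g) = m`, or if `t ≤ m` and `m ≠ 3`, then `γ = 0` (i.e. the acting Hopf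
    algebra is `H(G,g,χ,0)`; in the degenerate case `ord(g) = m` the relation
    `x^m = γ(g^m-1)` already reads `x^m = 0`). -/
theorem stmt_4 {k : Type} [Field k] {t : ℕ} (ht : 3 ≤ t)
    (p : Fin t → Fin t → k)
    (hp1 : ∀ i, p i i = 1) (hpa : ∀ i j, p i j * p j i = 1)
    (hpord : ∀ i j, i ≠ j → 3 ≤ orderOf (p i j))
    {G : Type} [Group G] [Fintype G] (g : G) (hgc : g ∈ Subgroup.center G)
    (χ : G →* k) (gam : k)
    {m : ℕ} (hm : orderOf (χ g) = m) (hm3 : 3 ≤ m)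
    (T : KRAction k G g χ gam (QAS k p))
    (hlinG : ∀ (h : G), ∀ a ∈ Submodule.span k (Set.range (QAS.u k p)),
      T.ρ h a ∈ Submodule.span k (Set.range (QAS.u k p)))
    (hlinx : ∀ a ∈ Submodule.span k (Set.range (QAS.u k p)),
      T.x a ∈ Submodule.span k (Set.range (QAS.u k p)))
    (hif : T.InnerFaithful)
    (α : Fin t → k) (hdiag : ∀ i, T.ρ g (QAS.u k p i) = α i • QAS.u k p i)
    (η : Fin t → Fin t → k)
    (hη : ∀ j, T.x (QAS.u k p j) = ∑ i, η i j • QAS.u k p i) :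
    ((∀ i j, η i j * η j i = 0) ∧ (∀ i, η i i = 0)) ∧
    (∀ (j i i' : Fin t), η i j ≠ 0 → η i' j ≠ 0 → i = i') ∧
    (∀ (i j j' : Fin t), η i j ≠ 0 → η i j' ≠ 0 → j = j') ∧
    (3 < t → ∀ i j l r : Fin t, i ≠ j → i ≠ l → i ≠ r → j ≠ l → j ≠ r → l ≠ r →
      η i j * η l r = 0) ∧
    (m ≠ 3 → IsNilpotent (Matrix.of fun i j => η i j)) ∧
    ((orderOf g = m ∨ (t ≤ m ∧ m ≠ 3)) → (gam = 0 ∨ orderOf g = m)) := by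
  classical
  open Stmt4Aux in
  set U : Fin t → QAS k p := QAS.u k p with hU
  have pnz : ∀ i j, p i j ≠ 0 := by
    intro i j h0
    have := hpa i j
    rw [h0, zero_mul] at this
    exact zero_ne_one this
  have hq1 : χ g ≠ 1 := by
    intro h
    rw [h, orderOf_one] at hm
    omega
  have hq2 : (χ g) ^ 2 ≠ 1 := by
    intro h
    have h2 := orderOf_dvd_of_pow_eq_one h
    rw [hm] at h2
    have := Nat.le_of_dvd (by norm_num) h2
    omega
  have hq3 : m ≠ 3 → (χ g) ^ 3 ≠ 1 := by
    intro hm3' h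
    have h2 := orderOf_dvd_of_pow_eq_one h
    rw [hm] at h2
    have h3 := Nat.le_of_dvd (by norm_num) h2
    interval_cases m <;> omega
  have q0nz : χ g ≠ 0 := by
    intro h
    have h1 : (χ g) * (χ g⁻¹) = 1 := by rw [← map_mul, mul_inv_cancel, map_one]
    rw [h, zero_mul] at h1
    exact zero_ne_one h1
  -- linear independence of the generators
  have indep : ∀ f : Fin t → k, (∑ i, f i • U i) = 0 → ∀ c, f c = 0 := by
    intro f hf c
    have h1 : Pl p hp1 hpa (∑ i, f i • U i) = 0 := by rw [hf, map_zero]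
    rw [map_sum] at h1
    simp only [map_smul, hU, Pl_u] at h1
    have h2 := DFunLike.congr_fun h1 (Finsupp.single c 1)
    have key : ∀ i : Fin t, ((Finsupp.single i 1 : Fin t →₀ ℕ) = Finsupp.single c 1) = (i = c) :=
      fun i => propext (Finsupp.single_left_inj one_ne_zero)
    rw [Finsupp.finset_sum_apply] at h2
    simp only [Finsupp.smul_apply, Finsupp.single_apply, key, smul_eq_mul, mul_ite, mul_one,
      mul_zero, Finset.sum_ite_eq', Finset.mem_univ, if_true, Finsupp.coe_zero,
      Pi.zero_apply] at h2
    exact h2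
  have Une : ∀ i, U i ≠ 0 := by
    intro i h0
    have h1 : Pl p hp1 hpa (U i) = 0 := by rw [h0, map_zero]
    rw [hU, Pl_u] at h1
    exact one_ne_zero (Finsupp.single_eq_zero.mp h1)
  have alpha_ne : ∀ i, α i ≠ 0 := by
    intro i h0
    have h1 : T.ρ g (U i) = T.ρ g 0 := by rw [hdiag i, h0, zero_smul, map_zero]
    exact Une i ((T.ρ g).injective h1)
  -- the commutation relation
  have hC : ∀ i j, η i j ≠ 0 → α i = χ g * α j := by
    intro i j hne
    have h := T.comm g (U j)
    rw [hη j, hdiag j, map_smul, hη j, map_sum] at h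
    simp only [map_smul, hdiag, smul_smul, Finset.smul_sum] at h
    have h0 : ∀ c, η c j * α c - χ g * (α j * η c j) = 0 := by
      intro c
      refine indep (fun i => η i j * α i - χ g * (α j * η i j)) ?_ c
      rw [Finset.sum_congr rfl (fun x _ => sub_smul (η x j * α x) (χ g * (α j * η x j)) (U x)),
        Finset.sum_sub_distrib, h, sub_self]
    have h1 : η i j * α i = η i j * (χ g * α j) := by linear_combination h0 i
    exact mul_left_cancel₀ hne h1
  -- the master degree-2 relation
  have pkey : ∀ i' l' a' b' : Fin t,
      ((Finsupp.single i' 1 + Finsupp.single l' 1 : Fin t →₀ ℕ)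
        = Finsupp.single a' 1 + Finsupp.single b' 1)
      = ((i' = a' ∧ l' = b') ∨ (i' = b' ∧ l' = a')) :=
    fun i' l' a' b' => propext (pair_eq_iff i' l' a' b')
  have master : ∀ i j : Fin t,
      (∑ l, (η l j * α i * qf p i l) •
          Finsupp.single (Finsupp.single l 1 + Finsupp.single i 1) (1 : k))
        + ∑ l, (η l i * qf p l j) •
            Finsupp.single (Finsupp.single j 1 + Finsupp.single l 1) (1 : k)
      = p i j • ((∑ l, (η l i * α j * qf p j l) •
          Finsupp.single (Finsupp.single l 1 + Finsupp.single j 1) (1 : k))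
        + ∑ l, (η l j * qf p l i) •
            Finsupp.single (Finsupp.single i 1 + Finsupp.single l 1) (1 : k)) := by
    intro i j
    have hc : U i * U j = p i j • (U j * U i) := by
      have := RingQuot.mkAlgHom_rel k (QASRel.rel (k := k) (p := p) i j)
      simpa only [hU, QAS.u, map_mul, map_smul] using this
    have hx := congrArg T.x hc
    rw [map_smul, T.skew, T.skew, hdiag i, hdiag j, hη i, hη j] at hx
    have hx2 := congrArg (Pl p hp1 hpa) hx
    simp only [Finset.mul_sum, Finset.sum_mul, smul_mul_assoc, mul_smul_comm, smul_smul,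
      map_add, map_smul, map_sum, hU, Pl_uu] at hx2
    exact hx2
  -- the star relation
  have star : ∀ i j, i ≠ j → η i j ≠ 0 → α i = p i j := by
    intro i j hij hne
    have h := DFunLike.congr_fun (master i j) (Finsupp.single i 1 + Finsupp.single i 1)
    simp only [Finsupp.add_apply, Finsupp.finset_sum_apply, Finsupp.smul_apply,
      Finsupp.single_apply, pkey, smul_eq_mul, mul_ite, mul_one, mul_zero,
      hij, Ne.symm hij, and_true, and_false, false_and, true_and, or_self, if_false,
      Finset.sum_ite_eq', Finset.mem_univ, if_true, Finset.sum_const_zero,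
      add_zero, zero_add, and_self] at h
    have hqii : qf p i i = 1 := by simp [qf]
    rw [hqii] at h
    have h1 : η i j * α i = η i j * p i j := by linear_combination h
    exact mul_left_cancel₀ hne h1
  -- the diamond relation
  have diamond : ∀ a b c : Fin t, a ≠ b → a ≠ c → b ≠ c → η c a ≠ 0 →
      p a b * α b = p c b := by
    intro a b c hab hac hbc hne
    have h := DFunLike.congr_fun (master a b) (Finsupp.single c 1 + Finsupp.single b 1)
    simp only [Finsupp.add_apply, Finsupp.finset_sum_apply, Finsupp.smul_apply,
      Finsupp.single_apply, pkey, smul_eq_mul, mul_ite, mul_one, mul_zero,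
      hab, hac, hbc, Ne.symm hab, Ne.symm hac, Ne.symm hbc, and_true, and_false,
      false_and, true_and, false_or, or_false, or_self, if_false,
      Finset.sum_ite_eq', Finset.mem_univ, if_true, Finset.sum_const_zero,
      add_zero, zero_add, and_self] at h
    have hqcb : qf p c b = p c b * qf p b c := by
      unfold qf
      rcases lt_trichotomy b c with hlt | heq | hlt
      · rw [if_pos hlt, if_neg (not_lt.mpr hlt.le), mul_one]
      · exact absurd heq hbc
      · rw [if_neg (not_lt.mpr hlt.le), if_pos hlt, eq_comm]
        exact hpa c b
    rw [hqcb] at h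
    have h1 : (η c a * qf p b c) * (p a b * α b) = (η c a * qf p b c) * p c b := by
      linear_combination -h
    exact mul_left_cancel₀ (mul_ne_zero hne (qf_ne_zero p hpa b c)) h1
  -- part (1), diagonal
  have part1b : ∀ i, η i i = 0 := by
    intro i
    by_contra hne
    have h := hC i i hne
    have h1 : (χ g - 1) * α i = 0 := by linear_combination -h
    rcases mul_eq_zero.mp h1 with h2 | h2
    · exact hq1 (sub_eq_zero.mp h2)
    · exact absurd h2 (alpha_ne i)
  -- part (1)
  have part1 : ∀ i j, η i j * η j i = 0 := by
    intro i j
    by_contra hne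
    obtain ⟨h1, h2⟩ := mul_ne_zero_iff.mp hne
    by_cases hij : i = j
    · subst hij; exact h1 (part1b i)
    · have e1 := hC i j h1
      have e2 := hC j i h2
      have h3 : (χ g ^ 2 - 1) * α i = 0 := by linear_combination -e1 - χ g * e2
      rcases mul_eq_zero.mp h3 with h4 | h4
      · exact hq2 (sub_eq_zero.mp h4)
      · exact absurd h4 (alpha_ne i)
  -- part (2)
  have part2 : ∀ j i i' : Fin t, η i j ≠ 0 → η i' j ≠ 0 → i = i' := by
    intro j i i' h1 h2
    by_contra hii'
    have hij : i ≠ j := by rintro rfl; exact h1 (part1b i)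
    have hi'j : i' ≠ j := by rintro rfl; exact h2 (part1b i')
    have s2 := star i' j hi'j h2
    have d1 := diamond j i' i (Ne.symm hi'j) (Ne.symm hij) (Ne.symm hii') h1
    have hpii' : p i i' = 1 := by
      rw [← d1, s2, mul_comm]
      exact hpa i' j
    have := hpord i i' hii'
    rw [hpii', orderOf_one] at this
    omega
  -- part (3)
  have part3 : ∀ i j j' : Fin t, η i j ≠ 0 → η i j' ≠ 0 → j = j' := by
    intro i j j' h1 h2
    by_contra hjj'
    have hij : i ≠ j := by rintro rfl; exact h1 (part1b i)
    have hij' : i ≠ j' := by rintro rfl; exact h2 (part1b i)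
    have s1 := star i j hij h1
    have s2 := star i j' hij' h2
    have d1 := diamond j j' i hjj' (Ne.symm hij) (Ne.symm hij') h1
    have d2 := diamond j' j i (Ne.symm hjj') (Ne.symm hij') (Ne.symm hij) h2
    have e1 := hC i j h1
    have e2 := hC i j' h2
    have hαjj' : α j = α j' := by
      have h3 : χ g * α j = χ g * α j' := by linear_combination e2 - e1
      exact mul_left_cancel₀ q0nz h3
    have h5 : p i j = p i j' := by rw [← s1, ← s2]
    rw [← hαjj'] at d1
    have h4 : p j j' * α j = p j' j * α j := by rw [d1, d2, h5]
    have h6 : p j j' = p j' j := mul_right_cancel₀ (alpha_ne j) h4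
    have h7 : p j j' ^ 2 = 1 := by
      have h8 := hpa j j'
      rw [← h6] at h8
      rw [pow_two]
      exact h8
    have h8 := orderOf_dvd_of_pow_eq_one h7
    have h9 := Nat.le_of_dvd (by norm_num) h8
    have := hpord j j' hjj'
    omega
  -- part (4)
  have part4 : 3 < t → ∀ i j l r : Fin t, i ≠ j → i ≠ l → i ≠ r → j ≠ l → j ≠ r → l ≠ r →
      η i j * η l r = 0 := by
    intro ht4 i j l r hij hil hir hjl hjr hlr
    by_contra hne
    obtain ⟨h1, h2⟩ := mul_ne_zero_iff.mp hne
    have dA := diamond j r i hjr (Ne.symm hij) (Ne.symm hir) h1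
    have dB := diamond j l i hjl (Ne.symm hij) (Ne.symm hil) h1
    have dC := diamond r i l (Ne.symm hir) (Ne.symm hlr) hil h2
    have dD := diamond r j l (Ne.symm hjr) (Ne.symm hlr) hjl h2
    have e1 := hC i j h1
    have e2 := hC l r h2
    have k1 : χ g ^ 2 * (α j * α r) = α i * α l := by
      linear_combination -(α l) * e1 - (χ g * α j) * e2
    have k2 : α j * α r = p l j * p i r := by
      linear_combination (p i r) * dD + (p r j * α j) * dA - (α j * α r) * hpa j r
    have k3 : (α i * α l) * (p r i * p j l) = 1 := by
      linear_combination (p j l * α l) * dC + (p l i) * dB + hpa l i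
    have k4 : (p l j * p i r) * (p r i * p j l) = 1 := by
      calc (p l j * p i r) * (p r i * p j l) = (p l j * p j l) * (p i r * p r i) := by ring
      _ = 1 := by rw [hpa l j, hpa i r, mul_one]
    have k5 : χ g ^ 2 = 1 := by
      have h3 : χ g ^ 2 * ((p l j * p i r) * (p r i * p j l)) = 1 := by
        calc χ g ^ 2 * ((p l j * p i r) * (p r i * p j l))
            = (χ g ^ 2 * (α j * α r)) * (p r i * p j l) := by rw [k2]; ring
          _ = (α i * α l) * (p r i * p j l) := by rw [k1]
          _ = 1 := k3
      rw [k4, mul_one] at h3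
      exact h3
    exact hq2 k5
  -- cube of any path of length 3 vanishes
  have hcube : m ≠ 3 → ∀ a c d b : Fin t, η a c * (η c d * η d b) = 0 := by
    intro hm3' a c d b
    by_contra hne
    obtain ⟨h1, hne2⟩ := mul_ne_zero_iff.mp hne
    obtain ⟨h2, h3⟩ := mul_ne_zero_iff.mp hne2
    have hac : a ≠ c := by rintro rfl; exact h1 (part1b a)
    have hcd : c ≠ d := by rintro rfl; exact h2 (part1b c)
    have hdb : d ≠ b := by rintro rfl; exact h3 (part1b d)
    have had : a ≠ d := by
      rintro rfl
      rcases mul_eq_zero.mp (part1 a c) with h | h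
      · exact h1 h
      · exact h2 h
    have hcb : c ≠ b := by
      rintro rfl
      rcases mul_eq_zero.mp (part1 c d) with h | h
      · exact h2 h
      · exact h3 h
    by_cases hab : a = b
    · subst hab
      have e1 := hC a c h1
      have e2 := hC c d h2
      have e3 := hC d a h3
      have h4 : (χ g ^ 3 - 1) * α a = 0 := by
        linear_combination -e1 - χ g * e2 - χ g ^ 2 * e3
      rcases mul_eq_zero.mp h4 with h5 | h5
      · exact hq3 hm3' (sub_eq_zero.mp h5)
      · exact absurd h5 (alpha_ne a)
    · by_cases ht4 : 3 < t
      · rcases mul_eq_zero.mp (part4 ht4 a c d b hac had hab hcd hcb hdb) with h | h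
        · exact h1 h
        · exact h3 h
      · have hsub : ({a, c, d, b} : Finset (Fin t)).card ≤ t := by
          simpa using Finset.card_le_univ ({a, c, d, b} : Finset (Fin t))
        have hcard : ({a, c, d, b} : Finset (Fin t)).card = 4 := by
          rw [Finset.card_insert_of_notMem (by simp [hac, had, hab]),
            Finset.card_insert_of_notMem (by simp [hcd, hcb]),
            Finset.card_insert_of_notMem (by simp [hdb]), Finset.card_singleton]
        omega
  -- part (5)
  have part5 : m ≠ 3 → ((Matrix.of fun i j => η i j) : Matrix (Fin t) (Fin t) k) ^ 3 = 0 := by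
    intro hm3'
    ext a b
    rw [show (3:ℕ) = 1+1+1 from rfl, pow_add, pow_add, pow_one, Matrix.zero_apply,
      Matrix.mul_apply]
    refine Finset.sum_eq_zero fun d _ => ?_
    rw [Matrix.mul_apply, Finset.sum_mul]
    refine Finset.sum_eq_zero fun c _ => ?_
    simp only [Matrix.of_apply]
    rw [mul_assoc]
    exact hcube hm3' a c d b
  -- powers of x on generators
  have hxpow : ∀ (s : ℕ) (j : Fin t),
      (T.x ^ s) (U j)
        = ∑ i, (((Matrix.of fun i j => η i j) : Matrix (Fin t) (Fin t) k) ^ s) i j • U i := by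
    intro s
    induction s with
    | zero =>
      intro j
      simp [Matrix.one_apply, ite_smul, Finset.sum_ite_eq]
    | succ s ih =>
      intro j
      rw [pow_succ, Module.End.mul_apply, hη j, map_sum]
      simp only [map_smul, ih, Finset.smul_sum, smul_smul]
      rw [Finset.sum_comm]
      refine Finset.sum_congr rfl fun a _ => ?_
      rw [← Finset.sum_smul]
      congr 1
      rw [pow_succ, Matrix.mul_apply]
      exact Finset.sum_congr rfl fun i _ => by simp only [Matrix.of_apply]; ring
  -- part (6)
  have part6 : (orderOf g = m ∨ (t ≤ m ∧ m ≠ 3)) → (gam = 0 ∨ orderOf g = m) := by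
    rintro (hcase | ⟨htm, hm3'⟩)
    · right; exact hcase
    · have hNm : ((Matrix.of fun i j => η i j) : Matrix (Fin t) (Fin t) k) ^ m = 0 := by
        rw [show m = 3 + (m - 3) by omega, pow_add, part5 hm3', zero_mul]
      have hρpow : ∀ (s : ℕ) (j : Fin t), ((T.ρ g) ^ s) (U j) = (α j ^ s) • U j := by
        intro s j
        induction s with
        | zero => simp
        | succ s ih =>
          rw [pow_succ, AlgEquiv.mul_apply, hdiag j, map_smul, ih, smul_smul, pow_succ]
          ring_nf
      have hcoef : ∀ j, gam * (α j ^ m - 1) = 0 := by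
        intro j
        have hx := DFunLike.congr_fun T.x_pow (U j)
        rw [hm, hxpow m j, hNm] at hx
        simp only [Matrix.zero_apply, zero_smul, Finset.sum_const_zero] at hx
        rw [LinearMap.smul_apply, LinearMap.sub_apply, LinearMap.id_apply,
          AlgEquiv.toLinearMap_apply, map_pow, hρpow m j] at hx
        have h0 : (gam * (α j ^ m - 1)) • U j = 0 := by
          rw [mul_smul, sub_smul, one_smul]
          exact hx.symm
        rcases smul_eq_zero.mp h0 with h | h
        · exact h
        · exact absurd h (Une j)
      by_cases hall : ∀ j, α j ^ m = 1
      · right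
        have hfix : ∀ i, T.ρ (g ^ m) (U i) = U i := by
          intro i
          rw [map_pow, hρpow m i, hall i, one_smul]
        have hcomp : ((T.ρ (g ^ m)).toAlgHom.comp (RingQuot.mkAlgHom k (QASRel k p)) :
            FreeAlgebra k (Fin t) →ₐ[k] QAS k p)
            = RingQuot.mkAlgHom k (QASRel k p) := by
          apply FreeAlgebra.hom_ext
          funext i
          simpa [hU, QAS.u] using hfix i
        have hone : T.ρ (g ^ m) = 1 := by
          apply AlgEquiv.ext
          intro z
          obtain ⟨y, rfl⟩ := RingQuot.mkAlgHom_surjective k (QASRel k p) z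
          have := DFunLike.congr_fun hcomp y
          simpa using this
        have hgm1 : g ^ m = 1 := hif.2 (by rw [hone, map_one])
        have hd1 : orderOf g ∣ m := orderOf_dvd_of_pow_eq_one hgm1
        have hd2 : m ∣ orderOf g := by
          rw [← hm]
          apply orderOf_dvd_of_pow_eq_one
          rw [← map_pow, pow_orderOf_eq_one, map_one]
        exact Nat.dvd_antisymm hd1 hd2
      · left
        push_neg at hall
        obtain ⟨j, hj⟩ := hall
        rcases mul_eq_zero.mp (hcoef j) with h | h
        · exact h
        · exact absurd (by linear_combination h : α j ^ m = 1) hj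
  exact ⟨⟨part1, part1b⟩, part2, part3, part4, fun hm3' => ⟨3, part5 hm3'⟩, part6⟩
end

section
/- Suppose the generalized Taft algebra T_n(λ,m,0) acts linearly and inner faithfully on the quantum affine space A = k_p[u_1,…,u_t], where m, t, and ord(p_{ij}) for all i ≠ j are all at least 3. Then every such action is a trivial extension of an action on a quantum plane subalgebra A_{ij} or of an action on a quantum 3-space subalgebra A_{ijk}. -/
set_option maxHeartbeats 1000000

namespace Stmt5

variable {k : Type} [Field k] {t : ℕ}

/-- multi-index basis vector -/
noncomputable def dl (i : Fin t) : Fin t →₀ ℕ := Finsupp.single i 1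

lemma dl_inj {i j : Fin t} (h : dl i = dl j) : i = j := by
  simpa [dl, Finsupp.single_eq_single_iff] using h

lemma pair_eq {a s w v : Fin t} :
    dl a + dl s = dl w + dl v ↔ (a = w ∧ s = v) ∨ (a = v ∧ s = w) := by
  unfold dl
  rw [Finsupp.single_add_single_eq_single_add_single (by norm_num) (by norm_num)]
  constructor
  · rintro (h | ⟨-, h⟩ | ⟨h, -⟩)
    · exact Or.inl h
    · exact Or.inr h
    · norm_num at h
  · rintro (h | h)
    · exact Or.inl h
    · exact Or.inr (Or.inl ⟨rfl, h⟩)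

variable (p : Fin t → Fin t → k)

/-- weight of commuting `u_i` past `u_s^{e s}` -/
noncomputable def cf (i : Fin t) (e : Fin t →₀ ℕ) : k :=
  ∏ s ∈ Finset.univ.filter (· < i), p i s ^ e s

/-- `q a b` = weight of monomial `u_a u_b` in normal order -/
noncomputable def qq (a b : Fin t) : k := if b < a then p a b else 1

lemma cf_zero (i : Fin t) : cf p i 0 = 1 := by simp [cf]

lemma cf_add (i : Fin t) (e f : Fin t →₀ ℕ) :
    cf p i (e + f) = cf p i e * cf p i f := by
  simp [cf, pow_add, Finset.prod_mul_distrib]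

lemma cf_dl (i r : Fin t) : cf p i (dl r) = qq p i r := by
  unfold cf qq dl
  have : ∀ s ∈ Finset.univ.filter (· < i),
      p i s ^ (Finsupp.single r 1 s) = if r = s then p i s else 1 := by
    intro s _
    rw [Finsupp.single_apply]
    by_cases h : r = s <;> simp [h]
  rw [Finset.prod_congr rfl this, Finset.prod_ite_eq]
  simp only [Finset.mem_filter, Finset.mem_univ, true_and]

lemma qq_spec (hp1 : ∀ i, p i i = 1) (hpa : ∀ i j, p i j * p j i = 1) (i j : Fin t) :
    qq p i j = p i j * qq p j i := by
  unfold qq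
  rcases lt_trichotomy i j with h | h | h
  · simp [h, not_lt.2 h.le, (hpa i j).symm]
  · subst h; simp [hp1 i]
  · simp [h, not_lt.2 h.le]

lemma qq_ne_zero (hpa : ∀ i j, p i j * p j i = 1) (a b : Fin t) : qq p a b ≠ 0 := by
  unfold qq
  split
  · exact left_ne_zero_of_mul_eq_one (hpa a b)
  · exact one_ne_zero

/-- the shift-by-`u_i` operator on the monomial module -/
noncomputable def Lop (i : Fin t) : ((Fin t →₀ ℕ) →₀ k) →ₗ[k] ((Fin t →₀ ℕ) →₀ k) :=
  Finsupp.lsum k fun e => cf p i e • Finsupp.lsingle (e + dl i)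

lemma Lop_single (i : Fin t) (e : Fin t →₀ ℕ) (a : k) :
    Lop p i (Finsupp.single e a) = Finsupp.single (e + dl i) (cf p i e * a) := by
  rw [Lop, Finsupp.lsum_single]
  simp [Finsupp.smul_single, smul_eq_mul]

lemma Lop_comm (hp1 : ∀ i, p i i = 1) (hpa : ∀ i j, p i j * p j i = 1) (i j : Fin t) :
    (Lop p i) ∘ₗ (Lop p j) = p i j • ((Lop p j) ∘ₗ (Lop p i)) := by
  refine Finsupp.lhom_ext fun e a => ?_
  simp only [LinearMap.comp_apply, Lop_single, LinearMap.smul_apply, Finsupp.smul_single,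
    smul_eq_mul, cf_add, cf_dl]
  rw [add_right_comm e (dl j) (dl i)]
  congr 1
  have := qq_spec p hp1 hpa i j
  ring_nf
  rw [this]
  ring


variable (hp1 : ∀ i, p i i = 1) (hpa : ∀ i j, p i j * p j i = 1)

/-- the representation of the quantum affine space on the monomial module -/
noncomputable def Phi : QAS k p →ₐ[k] Module.End k ((Fin t →₀ ℕ) →₀ k) :=
  RingQuot.liftAlgHom k ⟨FreeAlgebra.lift k (Lop p), by
    rintro x y ⟨i, j⟩
    simp only [map_mul, map_smul, FreeAlgebra.lift_ι_apply]
    rw [Module.End.mul_eq_comp, Module.End.mul_eq_comp]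
    exact Lop_comm p hp1 hpa i j⟩

lemma Phi_u (i : Fin t) : Phi p hp1 hpa (QAS.u k p i) = Lop p i := by
  rw [QAS.u, Phi, RingQuot.liftAlgHom_mkAlgHom_apply, FreeAlgebra.lift_ι_apply]

/-- evaluation against the vacuum vector -/
noncomputable def Psi : QAS k p →ₗ[k] ((Fin t →₀ ℕ) →₀ k) where
  toFun z := Phi p hp1 hpa z (Finsupp.single 0 1)
  map_add' a b := by simp
  map_smul' c a := by simp

lemma Psi_u (i : Fin t) : Psi p hp1 hpa (QAS.u k p i) = Finsupp.single (dl i) 1 := by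
  show Phi p hp1 hpa (QAS.u k p i) (Finsupp.single 0 1) = _
  rw [Phi_u, Lop_single, zero_add, cf_zero, one_mul]

lemma Psi_mul (z w : QAS k p) :
    Psi p hp1 hpa (z * w) = Phi p hp1 hpa z (Psi p hp1 hpa w) := by
  show Phi p hp1 hpa (z * w) _ = _
  rw [map_mul]; rfl

lemma Psi_uu (a b : Fin t) :
    Psi p hp1 hpa (QAS.u k p a * QAS.u k p b) = Finsupp.single (dl b + dl a) (qq p a b) := by
  rw [Psi_mul, Psi_u, Phi_u, Lop_single, cf_dl, mul_one]

/-- coordinate functionals -/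
noncomputable def coord (s : Fin t) : QAS k p →ₗ[k] k :=
  (Finsupp.lapply (dl s)).comp (Psi p hp1 hpa)

lemma coord_u (s r : Fin t) :
    coord p hp1 hpa s (QAS.u k p r) = if r = s then 1 else 0 := by
  show Psi p hp1 hpa (QAS.u k p r) (dl s) = _
  rw [Psi_u, Finsupp.single_apply]
  by_cases h : r = s
  · subst h; simp
  · rw [if_neg (fun hh => h (dl_inj hh)), if_neg h]

lemma u_ne_zero (hp1 : ∀ i, p i i = 1) (hpa : ∀ i j, p i j * p j i = 1) (r : Fin t) :
    QAS.u k p r ≠ 0 := by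
  intro h
  have := coord_u p hp1 hpa r r
  rw [h, map_zero, if_pos rfl] at this
  exact one_ne_zero this.symm

lemma span_repr (v : QAS k p) (hv : v ∈ Submodule.span k (Set.range (QAS.u k p))) :
    v = ∑ s, coord p hp1 hpa s v • QAS.u k p s := by
  rw [Finsupp.mem_span_range_iff_exists_finsupp] at hv
  obtain ⟨c, hc⟩ := hv
  have hco : ∀ s, coord p hp1 hpa s v = c s := by
    intro s
    rw [← hc, Finsupp.sum_fintype _ _ (by simp)]
    rw [map_sum]
    rw [Finset.sum_eq_single s]
    · rw [map_smul, coord_u, if_pos rfl, smul_eq_mul, mul_one]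
    · intro r _ hr
      rw [map_smul, coord_u, if_neg hr, smul_eq_mul, mul_zero]
    · intro h; exact absurd (Finset.mem_univ s) h
  have h2 : ∑ s, coord p hp1 hpa s v • QAS.u k p s = ∑ s, c s • QAS.u k p s :=
    Finset.sum_congr rfl fun s _ => by rw [hco]
  rw [h2, ← hc, Finsupp.sum_fintype _ _ (by simp)]

/-- Master product expansion -/
lemma Psi_prod (A B : Fin t → k) :
    Psi p hp1 hpa ((∑ s, A s • QAS.u k p s) * (∑ r, B r • QAS.u k p r)) =
      ∑ s, ∑ r, Finsupp.single (dl r + dl s) (A s * B r * qq p s r) := by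
  rw [Finset.sum_mul_sum]
  rw [map_sum]
  refine Finset.sum_congr rfl fun s _ => ?_
  rw [map_sum]
  refine Finset.sum_congr rfl fun r _ => ?_
  rw [smul_mul_smul_comm, map_smul, Psi_uu, Finsupp.smul_single']

lemma eval_diag (A B : Fin t → k) (w : Fin t) :
    Psi p hp1 hpa ((∑ s, A s • QAS.u k p s) * (∑ r, B r • QAS.u k p r)) (dl w + dl w)
      = A w * B w := by
  rw [Psi_prod, Finsupp.finset_sum_apply]
  rw [Finset.sum_eq_single w]
  · rw [Finsupp.finset_sum_apply, Finset.sum_eq_single w]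
    · rw [Finsupp.single_apply, if_pos rfl]
      have : qq p w w = 1 := by unfold qq; simp
      rw [this, mul_one]
    · intro r _ hr
      rw [Finsupp.single_apply, if_neg]
      intro h
      rcases pair_eq.1 h with ⟨h1, -⟩ | ⟨h1, -⟩ <;> exact hr h1
    · intro h; exact absurd (Finset.mem_univ w) h
  · intro s _ hs
    rw [Finsupp.finset_sum_apply]
    refine Finset.sum_eq_zero fun r _ => ?_
    rw [Finsupp.single_apply, if_neg]
    intro h
    rcases pair_eq.1 h with ⟨-, h2⟩ | ⟨-, h2⟩ <;> exact hs h2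
  · intro h; exact absurd (Finset.mem_univ w) h

lemma eval_off (A B : Fin t → k) (w v : Fin t) (hwv : w ≠ v) :
    Psi p hp1 hpa ((∑ s, A s • QAS.u k p s) * (∑ r, B r • QAS.u k p r)) (dl w + dl v)
      = A w * B v * qq p w v + A v * B w * qq p v w := by
  rw [Psi_prod, Finsupp.finset_sum_apply]
  have key : ∀ s : Fin t, (∑ r, Finsupp.single (dl r + dl s) (A s * B r * qq p s r)) (dl w + dl v)
      = (if s = v then A v * B w * qq p v w else 0) + (if s = w then A w * B v * qq p w v else 0) := by
    intro s
    rw [Finsupp.finset_sum_apply]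
    by_cases hs : s = v
    · subst hs
      rw [if_pos rfl, if_neg (fun h => hwv h.symm), add_zero]
      rw [Finset.sum_eq_single w]
      · rw [Finsupp.single_apply, if_pos (pair_eq.2 (Or.inl ⟨rfl, rfl⟩))]
      · intro r _ hr
        rw [Finsupp.single_apply, if_neg]
        intro h
        rcases pair_eq.1 h with ⟨h1, -⟩ | ⟨h1, h2⟩
        · exact hr h1
        · exact hwv h2.symm
      · intro h; exact absurd (Finset.mem_univ w) h
    · rw [if_neg hs, zero_add]
      by_cases hs2 : s = w
      · subst hs2
        rw [if_pos rfl]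
        rw [Finset.sum_eq_single v]
        · rw [Finsupp.single_apply, if_pos (pair_eq.2 (Or.inr ⟨rfl, rfl⟩))]
        · intro r _ hr
          rw [Finsupp.single_apply, if_neg]
          intro h
          rcases pair_eq.1 h with ⟨h1, h2⟩ | ⟨h1, -⟩
          · exact hs h2
          · exact hr h1
        · intro h; exact absurd (Finset.mem_univ v) h
      · rw [if_neg hs2]
        refine Finset.sum_eq_zero fun r _ => ?_
        rw [Finsupp.single_apply, if_neg]
        intro h
        rcases pair_eq.1 h with ⟨-, h2⟩ | ⟨-, h2⟩
        · exact hs h2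
        · exact hs2 h2
  rw [Finset.sum_congr rfl fun s _ => key s]
  rw [Finset.sum_add_distrib]
  rw [Finset.sum_ite_eq' Finset.univ v, Finset.sum_ite_eq' Finset.univ w]
  simp only [Finset.mem_univ, if_pos]
  ring

end Stmt5

section Main
open Stmt5

/-- Suppose the generalized Taft algebra `T_n(λ,m,0)` acts linearly and
inner faithfully on the quantum affine space `A = k_p[u_1,…,u_t]`, where `m`, `t`, and
`ord(p_{ij})` for all `i ≠ j` are all at least `3`.  Then every such action is a trivial
extension of an action on a quantum plane subalgebra `A_{ij}` (i.e. `x·u_l = 0` for all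
`l ∉ {i,j}`), or of an action on a quantum 3-space subalgebra `A_{ijl}` (i.e. `g` acts
diagonally, `x·u_j` is a nonzero multiple of `u_i`, `x·u_l` is a nonzero multiple of
`u_j`, and `x·u_s = 0` for `s ≠ j, l`). -/

theorem stmt_5 {k : Type} [Field k] {t : ℕ} (ht : 3 ≤ t)
    (p : Fin t → Fin t → k)
    (hp1 : ∀ i, p i i = 1) (hpa : ∀ i j, p i j * p j i = 1)
    (hpord : ∀ i j, i ≠ j → 3 ≤ orderOf (p i j))
    {n m : ℕ} (hm3 : 3 ≤ m) (hmn : m ∣ n) {lam : k} (hlam : IsPrimitiveRoot lam m)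
    (T : TaftAction k n m lam 0 (QAS k p))
    (hling : ∀ a ∈ Submodule.span k (Set.range (QAS.u k p)),
      T.g a ∈ Submodule.span k (Set.range (QAS.u k p)))
    (hlinx : ∀ a ∈ Submodule.span k (Set.range (QAS.u k p)),
      T.x a ∈ Submodule.span k (Set.range (QAS.u k p)))
    (hif : T.InnerFaithful) :
    (∃ i j : Fin t, i ≠ j ∧ ∀ l : Fin t, l ≠ i → l ≠ j → T.x (QAS.u k p l) = 0) ∨
    (∃ i j l : Fin t, i ≠ j ∧ j ≠ l ∧ i ≠ l ∧
      (∃ α : Fin t → k, ∀ s, T.g (QAS.u k p s) = α s • QAS.u k p s) ∧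
      (∃ c : k, c ≠ 0 ∧ T.x (QAS.u k p j) = c • QAS.u k p i) ∧
      (∃ c : k, c ≠ 0 ∧ T.x (QAS.u k p l) = c • QAS.u k p j) ∧
      (∀ s : Fin t, s ≠ j → s ≠ l → T.x (QAS.u k p s) = 0)) := by
  classical
  set U : Fin t → QAS k p := QAS.u k p with hU
  -- scalar helper facts
  have hpne0 : ∀ c d : Fin t, p c d ≠ 0 := fun c d => left_ne_zero_of_mul_eq_one (hpa c d)
  have hpne1 : ∀ i j : Fin t, i ≠ j → p i j ≠ 1 := by
    intro i j hij h
    have := hpord i j hij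
    rw [h, orderOf_one] at this
    omega
  have hpnsq : ∀ i j : Fin t, i ≠ j → p i j * p i j ≠ 1 := by
    intro i j hij h
    have h2 : orderOf (p i j) ∣ 2 := orderOf_dvd_of_pow_eq_one (by rw [pow_two]; exact h)
    have := Nat.le_of_dvd (by norm_num) h2
    have := hpord i j hij
    omega
  have hlamne : ∀ e : ℕ, 0 < e → e < m → lam ^ e ≠ 1 := fun e h1 h2 =>
    hlam.pow_ne_one_of_pos_of_lt h1.ne' h2
  have hl1 : lam ≠ 1 := by
    have := hlamne 1 (by norm_num) (by omega); simpa using this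
  have hl2 : lam ^ 2 ≠ 1 := hlamne 2 (by norm_num) (by omega)
  -- coordinates
  set b : Fin t → Fin t → k := fun s j => coord p hp1 hpa s (T.x (U j)) with hbdef
  set a : Fin t → Fin t → k := fun s j => coord p hp1 hpa s (T.g (U j)) with hadef
  have hx_sum : ∀ j, T.x (U j) = ∑ s, b s j • U s := fun j =>
    span_repr p hp1 hpa _ (hlinx _ (Submodule.subset_span (Set.mem_range_self j)))
  have hg_sum0 : ∀ j, T.g (U j) = ∑ s, a s j • U s := fun j =>
    span_repr p hp1 hpa _ (hling _ (Submodule.subset_span (Set.mem_range_self j)))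
  have hu_sum : ∀ j, U j = ∑ s, (if s = j then (1:k) else 0) • U s := by
    intro j
    rw [Finset.sum_congr rfl (fun s (_ : s ∈ Finset.univ) => by
      rw [ite_smul, one_smul, zero_smul])]
    rw [Finset.sum_ite_eq' Finset.univ j U, if_pos (Finset.mem_univ j)]
  -- relations
  have qrel : ∀ i j, U i * U j = p i j • (U j * U i) := by
    intro i j
    have h := RingQuot.mkAlgHom_rel k (QASRel.rel (k := k) (p := p) i j)
    rw [map_mul, map_smul, map_mul] at h
    exact h
  have GE : ∀ i j, T.g (U i) * T.g (U j) = p i j • (T.g (U j) * T.g (U i)) := by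
    intro i j
    have h := congrArg T.g (qrel i j)
    rw [map_mul, map_smul, map_mul] at h
    exact h
  have ME : ∀ i j, T.g (U i) * T.x (U j) + T.x (U i) * U j
      = p i j • (T.g (U j) * T.x (U i) + T.x (U j) * U i) := by
    intro i j
    have h1 := T.skew (U i) (U j)
    have h2 := T.skew (U j) (U i)
    calc T.g (U i) * T.x (U j) + T.x (U i) * U j = T.x (U i * U j) := h1.symm
      _ = T.x (p i j • (U j * U i)) := by rw [qrel]
      _ = p i j • T.x (U j * U i) := map_smul _ _ _
      _ = _ := by rw [h2]
  -- row lemma for g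
  have hrow : ∀ w i j, i ≠ j → a w i * a w j = 0 := by
    intro w i j hij
    have h1 : Psi p hp1 hpa (T.g (U i) * T.g (U j)) (dl w + dl w)
        = Psi p hp1 hpa (p i j • (T.g (U j) * T.g (U i))) (dl w + dl w) := by rw [GE i j]
    rw [map_smul, Finsupp.smul_apply] at h1
    have t1 := eval_diag p hp1 hpa (fun s => a s i) (fun s => a s j) w
    rw [← hg_sum0 i, ← hg_sum0 j] at t1
    have t2 := eval_diag p hp1 hpa (fun s => a s j) (fun s => a s i) w
    rw [← hg_sum0 i, ← hg_sum0 j] at t2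
    rw [t1, t2, smul_eq_mul] at h1
    -- h1 : a w i * a w j = p i j * (a w j * a w i)
    have h2 : (1 - p i j) * (a w i * a w j) = 0 := by linear_combination h1
    rcases mul_eq_zero.mp h2 with h | h
    · exact absurd (by linear_combination -h : p i j = 1) (hpne1 i j hij)
    · exact h
  -- g is invertible on the span: every U s is g of an element of the span
  have hsurj : ∀ s : Fin t, ∃ z, z ∈ Submodule.span k (Set.range U) ∧ T.g z = U s := by
    have hfd : FiniteDimensional k (Submodule.span k (Set.range U)) :=
      FiniteDimensional.span_of_finite k (Set.finite_range U)
    set G' : (Submodule.span k (Set.range U)) →ₗ[k] (Submodule.span k (Set.range U)) :=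
      (T.g.toLinearMap).restrict hling with hG'
    have hinj : Function.Injective G' := by
      intro z1 z2 h
      have h2 : T.g z1.1 = T.g z2.1 := congrArg Subtype.val h
      exact Subtype.ext (T.g.injective h2)
    have hsur : Function.Surjective G' := (@LinearMap.injective_iff_surjective k _ _ _ _ hfd G').mp hinj
    intro s
    obtain ⟨z, hz⟩ := hsur ⟨U s, Submodule.subset_span (Set.mem_range_self s)⟩
    exact ⟨z.1, z.2, congrArg Subtype.val hz⟩
  -- uniqueness of nonzero entries in each column of g's matrix
  have huniq : ∀ j s r, a s j ≠ 0 → a r j ≠ 0 → s = r := by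
    intro j s r hs hr
    by_contra hsr
    have hown : ∀ w c, a w j ≠ 0 → c ≠ j → a w c = 0 := by
      intro w c hw hc
      have := hrow w c j hc
      rcases mul_eq_zero.mp this with h | h
      · exact h
      · exact absurd h hw
    obtain ⟨z, hzV, hgz⟩ := hsurj s
    have hzr := span_repr p hp1 hpa z hzV
    have h1 : ∀ w, coord p hp1 hpa w (U s) = ∑ c, coord p hp1 hpa c z * a w c := by
      intro w
      conv_lhs => rw [← hgz, hzr]
      rw [map_sum, map_sum]
      refine Finset.sum_congr rfl fun c _ => ?_
      rw [map_smul, map_smul, smul_eq_mul]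
    have h2 := h1 r
    rw [coord_u, if_neg hsr] at h2
    have h3 := h1 s
    rw [coord_u, if_pos rfl] at h3
    have hcr : ∑ c, coord p hp1 hpa c z * a r c = coord p hp1 hpa j z * a r j := by
      rw [Finset.sum_eq_single j]
      · intro c _ hc
        rw [hown r c hr hc, mul_zero]
      · intro h; exact absurd (Finset.mem_univ j) h
    have hcs : ∑ c, coord p hp1 hpa c z * a s c = coord p hp1 hpa j z * a s j := by
      rw [Finset.sum_eq_single j]
      · intro c _ hc
        rw [hown s c hs hc, mul_zero]
      · intro h; exact absurd (Finset.mem_univ j) h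
    rw [hcr] at h2
    rw [hcs] at h3
    have hzj : coord p hp1 hpa j z = 0 := by
      rcases mul_eq_zero.mp h2.symm with h | h
      · exact h
      · exact absurd h hr
    rw [hzj, zero_mul] at h3
    exact one_ne_zero h3
  -- existence of nonzero entries
  have hgnz : ∀ j, ∃ s, a s j ≠ 0 := by
    intro j
    by_contra hno
    push_neg at hno
    have hg0 : T.g (U j) = 0 := by
      rw [hg_sum0 j]
      exact Finset.sum_eq_zero fun s _ => by rw [hno s, zero_smul]
    have : U j = 0 := by
      have := congrArg T.g.symm hg0
      rw [AlgEquiv.symm_apply_apply, map_zero] at this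
      exact this
    exact u_ne_zero p hp1 hpa j this
  choose σ₀ hσ₀ using hgnz
  set α : Fin t → k := fun j => a (σ₀ j) j with hαdef
  have hα0 : ∀ j, α j ≠ 0 := hσ₀
  have ha' : ∀ s j, a s j = if s = σ₀ j then α j else 0 := by
    intro s j
    by_cases h : s = σ₀ j
    · rw [if_pos h, h]
    · rw [if_neg h]
      by_contra hne
      exact h (huniq j s (σ₀ j) hne (hσ₀ j))
  have hgu : ∀ j, T.g (U j) = α j • U (σ₀ j) := by
    intro j
    rw [hg_sum0 j, Finset.sum_eq_single (σ₀ j)]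
    · intro s _ hs
      rw [ha' s j, if_neg hs, zero_smul]
    · intro h; exact absurd (Finset.mem_univ (σ₀ j)) h
  have hσinj : Function.Injective σ₀ := by
    intro i j h
    by_contra hij
    have := hrow (σ₀ i) i j hij
    rcases mul_eq_zero.mp this with hh | hh
    · exact hσ₀ i hh
    · rw [h] at hh; exact hσ₀ j hh
  have hσbij : Function.Bijective σ₀ := Finite.injective_iff_bijective.mp hσinj
  set σe : Equiv.Perm (Fin t) := Equiv.ofBijective σ₀ hσbij with hσe
  have hσsymm : ∀ w, σ₀ (σe.symm w) = w := fun w => σe.apply_symm_apply w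
  -- G1 : the permutation preserves p
  have hG1 : ∀ i j, i ≠ j → p (σ₀ i) (σ₀ j) = p i j := by
    intro i j hij
    have hss : σ₀ i ≠ σ₀ j := fun h => hij (hσinj h)
    have h1 : Psi p hp1 hpa (T.g (U i) * T.g (U j)) (dl (σ₀ i) + dl (σ₀ j))
        = Psi p hp1 hpa (p i j • (T.g (U j) * T.g (U i))) (dl (σ₀ i) + dl (σ₀ j)) := by
      rw [GE i j]
    rw [map_smul, Finsupp.smul_apply] at h1
    have t1 := eval_off p hp1 hpa (fun s => a s i) (fun s => a s j) (σ₀ i) (σ₀ j) hss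
    rw [← hg_sum0 i, ← hg_sum0 j] at t1
    have t2 := eval_off p hp1 hpa (fun s => a s j) (fun s => a s i) (σ₀ i) (σ₀ j) hss
    rw [← hg_sum0 i, ← hg_sum0 j] at t2
    rw [t1, t2, smul_eq_mul] at h1
    beta_reduce at h1
    rw [ha' (σ₀ i) i, ha' (σ₀ j) j, ha' (σ₀ j) i, ha' (σ₀ i) j,
      if_pos rfl, if_pos rfl, if_neg hss, if_neg (Ne.symm hss)] at h1
    -- h1 : α i * α j * qq (σ₀ i) (σ₀ j) + 0 * 0 * qq _ _ = p i j * (0*0*qq + α j * α i * qq (σ₀ j)(σ₀ i))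
    have h2 : α i * α j * qq p (σ₀ i) (σ₀ j) = p i j * (α i * α j * qq p (σ₀ j) (σ₀ i)) := by
      linear_combination h1
    have h3 : qq p (σ₀ i) (σ₀ j) = p i j * qq p (σ₀ j) (σ₀ i) := by
      have hαα : α i * α j ≠ 0 := mul_ne_zero (hα0 i) (hα0 j)
      have h4 : (α i * α j) * qq p (σ₀ i) (σ₀ j)
          = (α i * α j) * (p i j * qq p (σ₀ j) (σ₀ i)) := by linear_combination h2
      exact mul_left_cancel₀ hαα h4
    rcases lt_trichotomy (σ₀ i) (σ₀ j) with hlt | heq | hlt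
    · rw [qq, qq, if_neg (not_lt.2 hlt.le), if_pos hlt] at h3
      -- h3 : 1 = p i j * p (σ₀ j) (σ₀ i)
      calc p (σ₀ i) (σ₀ j) = p (σ₀ i) (σ₀ j) * (p i j * p (σ₀ j) (σ₀ i)) := by
            rw [← h3, mul_one]
        _ = p i j * (p (σ₀ i) (σ₀ j) * p (σ₀ j) (σ₀ i)) := by ring
        _ = p i j := by rw [hpa, mul_one]
    · exact absurd heq hss
    · rw [qq, qq, if_pos hlt, if_neg (not_lt.2 hlt.le), mul_one] at h3
      exact h3
  -- E4 : the commutation relation g x = lam x g in coordinates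
  have hE4 : ∀ s j, α s * b s j = lam * (α j * b (σ₀ s) (σ₀ j)) := by
    intro s j
    have hgx : T.g (T.x (U j)) = ∑ r, (b r j * α r) • U (σ₀ r) := by
      rw [hx_sum j, map_sum]
      refine Finset.sum_congr rfl fun r _ => ?_
      rw [map_smul, hgu r, smul_smul]
    have hxg : T.x (T.g (U j)) = ∑ r, (α j * b r (σ₀ j)) • U r := by
      rw [hgu j, map_smul, hx_sum (σ₀ j), Finset.smul_sum]
      refine Finset.sum_congr rfl fun r _ => ?_
      rw [smul_smul]
    have h0 := T.comm (U j)
    rw [hgx, hxg, Finset.smul_sum] at h0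
    have h1 := congrArg (coord p hp1 hpa (σ₀ s)) h0
    rw [map_sum, map_sum] at h1
    have hL : ∑ r, coord p hp1 hpa (σ₀ s) ((b r j * α r) • U (σ₀ r)) = b s j * α s := by
      rw [Finset.sum_eq_single s]
      · rw [map_smul, coord_u, if_pos rfl, smul_eq_mul, mul_one]
      · intro r _ hr
        rw [map_smul, coord_u, if_neg (fun h => hr (hσinj h)), smul_eq_mul, mul_zero]
      · intro h; exact absurd (Finset.mem_univ s) h
    have hR : ∑ r, coord p hp1 hpa (σ₀ s) (lam • (α j * b r (σ₀ j)) • U r)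
        = lam * (α j * b (σ₀ s) (σ₀ j)) := by
      rw [Finset.sum_eq_single (σ₀ s)]
      · rw [map_smul, map_smul, coord_u, if_pos rfl, smul_eq_mul, smul_eq_mul, mul_one]
      · intro r _ hr
        rw [map_smul, map_smul, coord_u, if_neg hr, smul_eq_mul, smul_eq_mul,
          mul_zero, mul_zero]
      · intro h; exact absurd (Finset.mem_univ (σ₀ s)) h
    rw [hL, hR] at h1
    linear_combination h1
  -- Master equation, diagonal coefficients
  have MSTd : ∀ i j w,
      (if w = σ₀ i then α i else 0) * b w j + b w i * (if w = j then (1:k) else 0)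
        = p i j * ((if w = σ₀ j then α j else 0) * b w i
            + b w j * (if w = i then (1:k) else 0)) := by
    intro i j w
    have h1 : Psi p hp1 hpa (T.g (U i) * T.x (U j) + T.x (U i) * U j) (dl w + dl w)
        = Psi p hp1 hpa (p i j • (T.g (U j) * T.x (U i) + T.x (U j) * U i)) (dl w + dl w) := by
      rw [ME i j]
    simp only [map_add, map_smul, Finsupp.add_apply, Finsupp.smul_apply, smul_eq_mul] at h1
    have t1 := eval_diag p hp1 hpa (fun s => a s i) (fun s => b s j) w
    rw [← hg_sum0 i, ← hx_sum j] at t1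
    have t2 := eval_diag p hp1 hpa (fun s => b s i) (fun s => if s = j then (1:k) else 0) w
    rw [← hx_sum i, ← hu_sum j] at t2
    have t3 := eval_diag p hp1 hpa (fun s => a s j) (fun s => b s i) w
    rw [← hg_sum0 j, ← hx_sum i] at t3
    have t4 := eval_diag p hp1 hpa (fun s => b s j) (fun s => if s = i then (1:k) else 0) w
    rw [← hx_sum j, ← hu_sum i] at t4
    rw [t1, t2, t3, t4] at h1
    beta_reduce at h1
    rw [ha' w i, ha' w j] at h1
    exact h1
  -- Master equation, off-diagonal coefficients
  have MSTo : ∀ i j w v, w ≠ v →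
      (if w = σ₀ i then α i else 0) * b v j * qq p w v
        + (if v = σ₀ i then α i else 0) * b w j * qq p v w
        + (b w i * (if v = j then (1:k) else 0) * qq p w v
            + b v i * (if w = j then (1:k) else 0) * qq p v w)
      = p i j * ((if w = σ₀ j then α j else 0) * b v i * qq p w v
          + (if v = σ₀ j then α j else 0) * b w i * qq p v w
          + (b w j * (if v = i then (1:k) else 0) * qq p w v
              + b v j * (if w = i then (1:k) else 0) * qq p v w)) := by
    intro i j w v hwv
    have h1 : Psi p hp1 hpa (T.g (U i) * T.x (U j) + T.x (U i) * U j) (dl w + dl v)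
        = Psi p hp1 hpa (p i j • (T.g (U j) * T.x (U i) + T.x (U j) * U i)) (dl w + dl v) := by
      rw [ME i j]
    simp only [map_add, map_smul, Finsupp.add_apply, Finsupp.smul_apply, smul_eq_mul] at h1
    have t1 := eval_off p hp1 hpa (fun s => a s i) (fun s => b s j) w v hwv
    rw [← hg_sum0 i, ← hx_sum j] at t1
    have t2 := eval_off p hp1 hpa (fun s => b s i) (fun s => if s = j then (1:k) else 0) w v hwv
    rw [← hx_sum i, ← hu_sum j] at t2
    have t3 := eval_off p hp1 hpa (fun s => a s j) (fun s => b s i) w v hwv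
    rw [← hg_sum0 j, ← hx_sum i] at t3
    have t4 := eval_off p hp1 hpa (fun s => b s j) (fun s => if s = i then (1:k) else 0) w v hwv
    rw [← hx_sum j, ← hu_sum i] at t4
    rw [t1, t2, t3, t4] at h1
    beta_reduce at h1
    rw [ha' w i, ha' v i, ha' w j, ha' v j] at h1
    linear_combination h1
  -- no 2-cycles in σ₀
  have hn2c : ∀ j, σ₀ j ≠ j → σ₀ (σ₀ j) ≠ j := by
    intro j hj h2
    have hG := hG1 j (σ₀ j) (Ne.symm hj)
    rw [h2] at hG
    -- hG : p (σ₀ j) j = p j (σ₀ j)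
    have hsq : p j (σ₀ j) * p j (σ₀ j) = 1 := by
      calc p j (σ₀ j) * p j (σ₀ j) = p j (σ₀ j) * p (σ₀ j) j := by rw [hG]
        _ = 1 := hpa _ _
    exact hpnsq j (σ₀ j) (Ne.symm hj) hsq
  -- claim 1: nonzero off-diagonal entries force σ-structure
  have hclaim1 : ∀ w j, w ≠ j → b w j ≠ 0 → σ₀ j = w ∨ σ₀ w = w := by
    intro w j hwj hb
    by_contra hc
    push_neg at hc
    obtain ⟨h1, h2⟩ := hc
    have hsi : σ₀ (σe.symm w) = w := hσsymm w
    set i := σe.symm w with hidef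
    have hiw : i ≠ w := by
      intro h; rw [h] at hsi; exact h2 hsi
    have hij : i ≠ j := by
      intro h; rw [h] at hsi; exact h1 hsi
    have hM := MSTd i j w
    rw [if_pos hsi.symm, if_neg (fun h : w = j => hwj h),
      if_neg (fun h : w = σ₀ j => h1 h.symm), if_neg (fun h : w = i => hiw h.symm)] at hM
    -- hM : α i * b w j + b w i * 0 = p i j * (0 * b w i + b w j * 0)
    have : α i * b w j = 0 := by linear_combination hM
    rcases mul_eq_zero.mp this with h | h
    · exact hα0 i h
    · exact hb h
  -- the σ ≠ id case is impossible
  have hσid : ∀ s, σ₀ s = s := by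
    by_contra hns
    push_neg at hns
    obtain ⟨s0, hs0⟩ := hns
    -- we will show x = 0, contradicting inner faithfulness
    refine hif.1 ?_
    -- claim D
    have hclaimD : ∀ v j, v ≠ j → σ₀ v = v → σ₀ j ≠ v → b v j = 0 := by
      intro v j hvj hv hjv
      by_cases hex : ∃ w, σ₀ w ≠ w ∧ w ≠ v ∧ w ≠ j ∧ w ≠ σ₀ j
      · obtain ⟨w, hw, hwv, hwj, hwsj⟩ := hex
        have hsi : σ₀ (σe.symm w) = w := hσsymm w
        set i := σe.symm w with hidef
        have hiw : i ≠ w := by intro h; rw [h] at hsi; exact hw hsi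
        have hij : i ≠ j := by intro h; rw [h] at hsi; exact hwsj hsi.symm
        have hiv : i ≠ v := by
          intro h; rw [h, hv] at hsi; exact hwv hsi.symm
        have hM := MSTo i j w v hwv
        rw [if_pos hsi.symm, if_neg (fun h : v = σ₀ i => hwv ((h.trans hsi).symm)),
          if_neg (fun h : v = j => hvj h), if_neg (fun h : w = j => hwj h),
          if_neg (fun h : w = σ₀ j => hwsj h), if_neg (fun h : v = σ₀ j => hjv h.symm),
          if_neg (fun h : v = i => hiv h.symm), if_neg (fun h : w = i => hiw h.symm)] at hM
        -- hM : α i * b v j * qq p w v + ... all else 0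
        have h2 : α i * qq p w v * b v j = 0 := by linear_combination hM
        rcases mul_eq_zero.mp h2 with h | h
        · rcases mul_eq_zero.mp h with h' | h'
          · exact absurd h' (hα0 i)
          · exact absurd h' (qq_ne_zero p hpa w v)
        · exact h
      · exfalso
        push_neg at hex
        -- every moved point is in {v, j, σ₀ j}; v is fixed
        have hjj : σ₀ j ≠ j := by
          intro hjeq
          have hs0v : s0 ≠ v := by intro h; rw [h, hv] at hs0; exact hs0 rfl
          have hs0j : s0 ≠ j := by intro h; rw [h, hjeq] at hs0; exact hs0 rfl
          have := hex s0 hs0 hs0v hs0j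
          rw [hjeq] at this
          exact hs0j this
        have h2 : σ₀ (σ₀ j) = j := by
          by_contra hne
          have hmoved : σ₀ (σ₀ j) ≠ σ₀ j := by
            intro h; exact hjj (hσinj h)
          -- c := σ₀ (σ₀ j) ; show c is fixed, contradiction with injectivity
          have hcfix : σ₀ (σ₀ (σ₀ j)) = σ₀ (σ₀ j) := by
            by_contra hcm
            have hcv : σ₀ (σ₀ j) ≠ v := by
              intro h; rw [h] at hcm; rw [hv] at hcm; exact hcm rfl
            have := hex (σ₀ (σ₀ j)) hcm hcv hne
            exact hmoved this
          exact hmoved (hσinj hcfix)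
        exact hn2c j hjj h2
    -- diagonal entries at fixed points vanish
    have hdiagF : ∀ j, σ₀ j = j → b j j = 0 := by
      intro j hj
      have h1 := hE4 j j
      rw [hj] at h1
      -- h1 : α j * b j j = lam * (α j * b j j)
      have h2 : (1 - lam) * (α j * b j j) = 0 := by linear_combination h1
      rcases mul_eq_zero.mp h2 with h | h
      · exact absurd (by linear_combination -h : lam = 1) hl1
      · rcases mul_eq_zero.mp h with h' | h'
        · exact absurd h' (hα0 j)
        · exact h'
    -- b j (σ₀ j) = 0 for moved j
    have hbjsj : ∀ j, σ₀ j ≠ j → b j (σ₀ j) = 0 := by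
      intro j hj
      by_contra hb
      rcases hclaim1 j (σ₀ j) (Ne.symm hj) hb with h | h
      · exact hn2c j hj h
      · exact hj h
    -- diagonal entries at moved points vanish
    have hdiagM : ∀ j, σ₀ j ≠ j → b j j = 0 := by
      intro j hj
      have hij : σ₀ j ≠ j := hj
      have hsσ : σ₀ (σ₀ j) ≠ σ₀ j := fun h => hj (hσinj h)
      have hsσj : σ₀ (σ₀ j) ≠ j := hn2c j hj
      -- MSTo with i := σ₀ j at the point (σ₀ j , j)
      have hM := MSTo (σ₀ j) j (σ₀ j) j hij
      rw [if_neg (fun h : σ₀ j = σ₀ (σ₀ j) => hsσ h.symm),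
        if_neg (fun h : j = σ₀ (σ₀ j) => hsσj h.symm),
        if_neg (fun h : j = σ₀ j => hj h.symm),
        if_pos (rfl : σ₀ j = σ₀ j), if_pos (rfl : j = j),
        if_neg (fun h : j = σ₀ j => hj h.symm),
        if_neg (fun h : σ₀ j = j => hj h)] at hM
      rw [if_pos (rfl : σ₀ j = σ₀ j)] at hM
      rw [hbjsj j hj] at hM
      -- hM : b (σ₀ j) (σ₀ j) * qq p (σ₀ j) j = p (σ₀ j) j * (b j j * qq p j (σ₀ j)) + junk*0
      have hdd : b (σ₀ j) (σ₀ j) = b j j := by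
        rcases lt_trichotomy (σ₀ j) j with hlt | heq | hlt
        · rw [qq, qq, if_neg (not_lt.2 hlt.le), if_pos hlt] at hM
          -- b σjσj * 1 = p σj j * (b j j * p j σj)
          have := hpa (σ₀ j) j
          calc b (σ₀ j) (σ₀ j) = b (σ₀ j) (σ₀ j) * 1 := by rw [mul_one]
            _ = b j j * (p (σ₀ j) j * p j (σ₀ j)) := by linear_combination hM
            _ = b j j := by rw [hpa, mul_one]
        · exact absurd heq hj
        · rw [qq, qq, if_pos hlt, if_neg (not_lt.2 hlt.le)] at hM
          -- b σjσj * p σj j = p σj j * (b j j * 1)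
          have hp0 := hpne0 (σ₀ j) j
          have h4 : p (σ₀ j) j * b (σ₀ j) (σ₀ j) = p (σ₀ j) j * b j j := by
            linear_combination hM
          exact mul_left_cancel₀ hp0 h4
      have h1 := hE4 j j
      rw [hdd] at h1
      have h2 : (1 - lam) * (α j * b j j) = 0 := by linear_combination h1
      rcases mul_eq_zero.mp h2 with h | h
      · exact absurd (by linear_combination -h : lam = 1) hl1
      · rcases mul_eq_zero.mp h with h' | h'
        · exact absurd h' (hα0 j)
        · exact h'
    -- entries b (σ₀ j) j vanish
    have hesj : ∀ j, σ₀ j ≠ j → b (σ₀ j) j = 0 := by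
      intro j hj
      have hsσ : σ₀ (σ₀ j) ≠ σ₀ j := fun h => hj (hσinj h)
      have hM := MSTd (σ₀ j) j (σ₀ j)
      rw [if_neg (fun h : σ₀ j = σ₀ (σ₀ j) => hsσ h.symm),
        if_neg (fun h : σ₀ j = j => hj h),
        if_pos (rfl : σ₀ j = σ₀ j), if_pos (rfl : σ₀ j = σ₀ j)] at hM
      -- hM : 0 * b σj j + b σj σj * 0 = p σj j * (α j * b σj σj + b σj j * 1)
      rw [hdiagM (σ₀ j) hsσ] at hM
      have h2 : p (σ₀ j) j * b (σ₀ j) j = 0 := by linear_combination -hM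
      rcases mul_eq_zero.mp h2 with h | h
      · exact absurd h (hpne0 _ _)
      · exact h
    -- all entries vanish
    have hb0 : ∀ s c, b s c = 0 := by
      intro s c
      by_cases hsc : s = c
      · subst hsc
        by_cases hc : σ₀ s = s
        · exact hdiagF s hc
        · exact hdiagM s hc
      · by_cases hc2 : σ₀ c = s
        · have hcm : σ₀ c ≠ c := by rw [hc2]; exact hsc
          have := hesj c hcm
          rw [hc2] at this
          exact this
        · by_cases hs : σ₀ s = s
          · exact hclaimD s c hsc hs hc2
          · by_contra hb
            rcases hclaim1 s c hsc hb with h | h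
            · exact hc2 h
            · exact hs h
    have hxu0 : ∀ c, T.x (U c) = 0 := by
      intro c
      rw [hx_sum c]
      exact Finset.sum_eq_zero fun s _ => by rw [hb0 s c, zero_smul]
    -- x vanishes on all of the algebra
    have hx1 : T.x 1 = 0 := by
      have hskew := T.skew 1 1
      have hg1 : T.g 1 = 1 := map_one T.g
      rw [mul_one, hg1, one_mul, mul_one] at hskew
      exact (left_eq_add.mp hskew)
    ext z
    rw [LinearMap.zero_apply]
    obtain ⟨y, rfl⟩ := RingQuot.mkAlgHom_surjective k (QASRel k p) z
    induction y using FreeAlgebra.induction with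
    | grade0 r =>
      rw [AlgHom.commutes]
      rw [Algebra.algebraMap_eq_smul_one, map_smul, hx1, smul_zero]
    | grade1 i => exact hxu0 i
    | mul y1 y2 hy1 hy2 =>
      rw [map_mul, T.skew, hy1, hy2, mul_zero, zero_mul, add_zero]
    | add y1 y2 hy1 hy2 =>
      rw [map_add, map_add, hy1, hy2, add_zero]
  -- from now on σ₀ is the identity
  -- diagonal entries of x vanish
  have hdiag0 : ∀ j, b j j = 0 := by
    intro j
    have h1 := hE4 j j
    rw [hσid j] at h1
    have h2 : (1 - lam) * (α j * b j j) = 0 := by linear_combination h1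
    rcases mul_eq_zero.mp h2 with h | h
    · exact absurd (by linear_combination -h : lam = 1) hl1
    · rcases mul_eq_zero.mp h with h' | h'
      · exact absurd h' (hα0 j)
      · exact h'
  -- star : entries determine α on their row
  have hstar : ∀ i j, i ≠ j → b i j ≠ 0 → α i = p i j := by
    intro i j hij hb
    have hM := MSTd i j i
    rw [hσid i, hσid j] at hM
    rw [if_pos rfl, if_neg hij, if_neg hij, if_pos rfl] at hM
    have h2 : (α i - p i j) * b i j = 0 := by linear_combination hM
    rcases mul_eq_zero.mp h2 with h | h
    · linear_combination h
    · exact absurd h hb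
  -- club : entries relate α of row and column by lam
  have hclub : ∀ s j, b s j ≠ 0 → α s = lam * α j := by
    intro s j hb
    have h1 := hE4 s j
    rw [hσid s, hσid j] at h1
    have h2 : (α s - lam * α j) * b s j = 0 := by linear_combination h1
    rcases mul_eq_zero.mp h2 with h | h
    · linear_combination h
    · exact absurd h hb
  -- spade : entries determine α everywhere else
  have hsp : ∀ i j w, i ≠ j → w ≠ i → w ≠ j → b w j ≠ 0 → α i = p i j * p w i := by
    intro i j w hij hwi hwj hb
    have hM := MSTo i j w i hwi
    rw [hσid i, hσid j] at hM
    rw [if_neg hwi, if_pos rfl, if_neg hij, if_neg hwj,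
      if_neg hwj, if_neg hij, if_pos rfl, if_neg hwi] at hM
    -- hM : α i * qq p i w * b w j = p i j * qq p w i * b w j (modulo zeros)
    have h2 : (α i * qq p i w - p i j * qq p w i) * b w j = 0 := by linear_combination hM
    rcases mul_eq_zero.mp h2 with h | h
    · rcases lt_trichotomy w i with hlt | heq | hlt
      · rw [qq, qq, if_pos hlt, if_neg (not_lt.2 hlt.le)] at h
        -- α i * p i w - p i j * 1 = 0
        linear_combination p w i * h - α i * (hpa i w)
      · exact absurd heq hwi
      · rw [qq, qq, if_neg (not_lt.2 hlt.le), if_pos hlt] at h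
        linear_combination h
    · exact absurd h hb
  -- the unified alpha formula
  have hKL : ∀ jc wc, wc ≠ jc → b wc jc ≠ 0 →
      ∀ s, α s * (if s = jc then lam else 1) = p s jc * p wc s := by
    intro jc wc hwcjc hb s
    by_cases hs1 : s = jc
    · subst hs1
      rw [if_pos rfl, hp1]
      have hc := hclub wc s hb
      have hst := hstar wc s hwcjc hb
      rw [one_mul]
      linear_combination hst - hc
    · by_cases hs2 : s = wc
      · subst hs2
        rw [if_neg hs1, mul_one, hp1, mul_one]
        exact hstar s jc hs1 hb
      · rw [if_neg hs1, mul_one]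
        exact hsp s jc wc hs1 (fun h => hs2 h.symm) hwcjc hb
  -- the key lemma : two entries in distinct columns force lam-power relations
  have hKey : ∀ c1 v1 c2 v2 : Fin t, c1 ≠ c2 → v1 ≠ c1 → v2 ≠ c2 →
      b v1 c1 ≠ 0 → b v2 c2 ≠ 0 →
      lam * lam * (if v2 = c1 then lam else 1) * (if v1 = c2 then lam else 1) = 1 := by
    intro c1 v1 c2 v2 h12 hv1 hv2 hb1 hb2
    have H1 := hKL c1 v1 hv1 hb1
    have H2 := hKL c2 v2 hv2 hb2
    have e1 := H1 c1
    rw [if_pos rfl] at e1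
    have e2 := H1 v2
    have e3 := H1 c2
    rw [if_neg (Ne.symm h12), mul_one] at e3
    have e4 := H1 v1
    rw [if_neg hv1, mul_one] at e4
    have f1 := H2 c1
    rw [if_neg h12, mul_one] at f1
    have f2 := H2 v2
    rw [if_neg hv2, mul_one] at f2
    have f3 := H2 c2
    rw [if_pos rfl] at f3
    have f4 := H2 v1
    have hprod : (p c1 c1 * p v1 c1) * (p v2 c1 * p v1 v2) * (p c2 c2 * p v2 c2)
          * (p v1 c2 * p v2 v1)
        = (p c1 c2 * p v2 c1) * (p v2 c2 * p v2 v2) * (p c2 c1 * p v1 c2)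
          * (p v1 c1 * p v1 v1) := by
      rw [hp1 c1, hp1 c2, hp1 v1, hp1 v2]
      linear_combination (p v1 c1 * p v2 c1 * p v2 c2 * p v1 c2) * hpa v1 v2
        - (p v1 c1 * p v2 c1 * p v2 c2 * p v1 c2) * hpa c1 c2
    have hmain : (α c1 * α v2 * α c2 * α v1)
          * (lam * lam * (if v2 = c1 then lam else 1) * (if v1 = c2 then lam else 1))
        = (α c1 * α v2 * α c2 * α v1) * 1 := by
      calc (α c1 * α v2 * α c2 * α v1)
            * (lam * lam * (if v2 = c1 then lam else 1) * (if v1 = c2 then lam else 1))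
          = (α c1 * lam) * (α v2 * (if v2 = c1 then lam else 1)) * (α c2 * lam)
              * (α v1 * (if v1 = c2 then lam else 1)) := by ring
        _ = (p c1 c1 * p v1 c1) * (p v2 c1 * p v1 v2) * (p c2 c2 * p v2 c2)
              * (p v1 c2 * p v2 v1) := by rw [e1, e2, f3, f4]
        _ = (p c1 c2 * p v2 c1) * (p v2 c2 * p v2 v2) * (p c2 c1 * p v1 c2)
              * (p v1 c1 * p v1 v1) := hprod
        _ = α c1 * α v2 * α c2 * α v1 := by rw [← f1, ← f2, ← e3, ← e4]
        _ = (α c1 * α v2 * α c2 * α v1) * 1 := by rw [mul_one]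
    exact mul_left_cancel₀
      (mul_ne_zero (mul_ne_zero (mul_ne_zero (hα0 c1) (hα0 v2)) (hα0 c2)) (hα0 v1)) hmain
  -- main dispatch
  by_cases hfirst : ∃ i j : Fin t, i ≠ j ∧ ∀ l : Fin t, l ≠ i → l ≠ j → T.x (U l) = 0
  · exact Or.inl hfirst
  exfalso
  push_neg at hfirst
  have h01 : (⟨0, by omega⟩ : Fin t) ≠ (⟨1, by omega⟩ : Fin t) :=
    Fin.ne_of_val_ne (by norm_num)
  obtain ⟨j1, hj1a, hj1b, hx1'⟩ := hfirst ⟨0, by omega⟩ ⟨1, by omega⟩ h01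
  obtain ⟨j2, hj21, hj20, hx2'⟩ := hfirst j1 ⟨0, by omega⟩ hj1a
  obtain ⟨j3, hj31, hj32, hx3'⟩ := hfirst j1 j2 (Ne.symm hj21)
  have hent : ∀ jc, T.x (U jc) ≠ 0 → ∃ w, b w jc ≠ 0 ∧ w ≠ jc := by
    intro jc hx
    by_contra hno
    push_neg at hno
    refine hx ?_
    rw [hx_sum jc]
    refine Finset.sum_eq_zero fun s _ => ?_
    by_cases hbs : b s jc = 0
    · rw [hbs, zero_smul]
    · rw [hno s hbs, hdiag0 jc, zero_smul]
  obtain ⟨w1, hb1, hw1⟩ := hent j1 hx1'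
  obtain ⟨w2, hb2, hw2⟩ := hent j2 hx2'
  obtain ⟨w3, hb3, hw3⟩ := hent j3 hx3'
  -- 3-cycle contradiction
  have cyc : ∀ c1 c2 c3 v1 v2 v3 : Fin t, c1 ≠ c2 → c2 ≠ c3 → c1 ≠ c3 →
      b v1 c1 ≠ 0 → b v2 c2 ≠ 0 → b v3 c3 ≠ 0 → v1 ≠ c1 → v2 ≠ c2 → v3 ≠ c3 →
      T.x (U c1) ≠ 0 → v1 = c2 → False := by
    intro c1 c2 c3 v1 v2 v3 h12 h23 h13 hbb1 hbb2 hbb3 hv1 hv2 hv3 hxx1 hvc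
    have k13 := hKey c1 v1 c3 v3 h13 hv1 hv3 hbb1 hbb3
    rw [if_neg (fun h : v1 = c3 => h23 (by rw [← hvc]; exact h)), mul_one] at k13
    have h31 : v3 = c1 := by
      by_contra hne
      rw [if_neg hne, mul_one] at k13
      exact hl2 (by rw [pow_two]; exact k13)
    have k23 := hKey c2 v2 c3 v3 h23 hv2 hv3 hbb2 hbb3
    rw [if_neg (fun h : v3 = c2 => h12 (by rw [← h31]; exact h)), mul_one] at k23
    have h23' : v2 = c3 := by
      by_contra hne
      rw [if_neg hne, mul_one] at k23
      exact hl2 (by rw [pow_two]; exact k23)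
    have k12 := hKey c1 v1 c2 v2 h12 hv1 hv2 hbb1 hbb2
    rw [if_neg (fun h : v2 = c1 => h13 (by rw [← h23']; exact h.symm)), mul_one,
      if_pos hvc] at k12
    have hl3 : lam ^ 3 = 1 := by
      rw [show lam ^ 3 = lam * lam * lam from by ring]
      exact k12
    have hm : m = 3 := by
      have hd : m ∣ 3 := (IsPrimitiveRoot.pow_eq_one_iff_dvd hlam 3).mp hl3
      have := Nat.le_of_dvd (by norm_num) hd
      omega
    -- pin columns exactly
    have col1 : ∀ s, s ≠ c2 → b s c1 = 0 := by
      intro s hs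
      by_contra hbs
      have hsne : s ≠ c1 := by
        intro h; rw [h] at hbs; exact hbs (hdiag0 c1)
      have kk := hKey c1 s c2 v2 h12 hsne hv2 hbs hbb2
      rw [if_neg (fun h : v2 = c1 => h13 (by rw [← h23']; exact h.symm)),
        if_neg hs, mul_one, mul_one] at kk
      exact hl2 (by rw [pow_two]; exact kk)
    have col2 : ∀ s, s ≠ c3 → b s c2 = 0 := by
      intro s hs
      by_contra hbs
      have hsne : s ≠ c2 := by
        intro h; rw [h] at hbs; exact hbs (hdiag0 c2)
      have kk := hKey c2 s c3 v3 h23 hsne hv3 hbs hbb3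
      rw [if_neg (fun h : v3 = c2 => h12 (by rw [← h31]; exact h)),
        if_neg hs, mul_one, mul_one] at kk
      exact hl2 (by rw [pow_two]; exact kk)
    have col3 : ∀ s, s ≠ c1 → b s c3 = 0 := by
      intro s hs
      by_contra hbs
      have hsne : s ≠ c3 := by
        intro h; rw [h] at hbs; exact hbs (hdiag0 c3)
      have kk := hKey c3 s c1 v1 (Ne.symm h13) hsne hv1 hbs hbb1
      rw [if_neg (fun h : v1 = c3 => h23 (by rw [← hvc]; exact h)),
        if_neg hs, mul_one, mul_one] at kk
      exact hl2 (by rw [pow_two]; exact kk)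
    have hxc : ∀ cA cB : Fin t, (∀ s, s ≠ cB → b s cA = 0) →
        T.x (U cA) = b cB cA • U cB := by
      intro cA cB hcol
      rw [hx_sum cA, Finset.sum_eq_single cB]
      · intro s _ hsne
        rw [hcol s hsne, zero_smul]
      · intro h; exact absurd (Finset.mem_univ cB) h
    have ee1 := hxc c1 c2 col1
    have ee2 := hxc c2 c3 col2
    have ee3 := hxc c3 c1 col3
    have hβ1 : b c2 c1 ≠ 0 := by rw [← hvc]; exact hbb1
    have hβ2 : b c3 c2 ≠ 0 := by rw [← h23']; exact hbb2
    have hβ3 : b c1 c3 ≠ 0 := by rw [← h31]; exact hbb3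
    have hx30 : (T.x ^ m) = (0 : Module.End k (QAS k p)) := by
      rw [T.x_pow, zero_smul]
    have hxxx : T.x (T.x (T.x (U c1))) = 0 := by
      have h3 : (T.x ^ (3:ℕ)) (U c1) = 0 := by
        rw [← hm, hx30]
        rfl
      rw [← h3, pow_succ, pow_succ, pow_one, Module.End.mul_apply, Module.End.mul_apply]
    rw [ee1, map_smul, ee2, map_smul, map_smul, ee3] at hxxx
    simp only [smul_smul] at hxxx
    have hC := congrArg (coord p hp1 hpa c1) hxxx
    rw [map_smul, coord_u, if_pos rfl, smul_eq_mul, mul_one, map_zero] at hC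
    exact mul_ne_zero hβ1 (mul_ne_zero hβ2 hβ3) hC
  by_cases hc12 : w1 = j2
  · exact cyc j1 j2 j3 w1 w2 w3 (Ne.symm hj21) (Ne.symm hj32) (Ne.symm hj31)
      hb1 hb2 hb3 hw1 hw2 hw3 hx1' hc12
  · have hc21 : w2 = j1 := by
      have k12 := hKey j1 w1 j2 w2 (Ne.symm hj21) hw1 hw2 hb1 hb2
      rw [if_neg hc12, mul_one] at k12
      by_contra hne
      rw [if_neg hne, mul_one] at k12
      exact hl2 (by rw [pow_two]; exact k12)
    exact cyc j2 j1 j3 w2 w1 w3 hj21 (Ne.symm hj31) (Ne.symm hj32)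
      hb2 hb1 hb3 hw2 hw1 hw3 hx2' hc21


end Main
end

section
/- Suppose the bosonization B = B(G,g,χ) of a quantum linear space has rank θ and acts linearly and inner faithfully on A = k_μ[u,v] or A = A_1^μ(k), where ord(μ) and all m_i are at least 3. Then: (1) ord(μ) divides n_i and each Hopf subalgebra B_i ≅ T_{n_i}(λ_i,m_i,0) acts on A by one of the two classified Taft actions (type (a): g_i·u = μu, g_i·v = λ_i^{-1}μv, x_i·u = 0, x_i·v = η_i u with η_i ∈ k^×; type (b): g_i·u = λ_i^{-1}μ^{-1}u, g_i·v = μ^{-1}v, x_i·u = η_i v, x_i·v = 0); (2) either all B_i act by type (a) or all act by type (b); (3) for all i ≠ j, λ_i = χ_j(g_i). -/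
/-- Action data for the bosonization `B(G, ĝ, χ̂) = R(g_1,…,g_θ,χ_1,…,χ_θ) # kG` of a
quantum linear space over a finite abelian group `G` on a `k`-algebra `A`: the group `G`
acts by `k`-algebra automorphisms, each skew-primitive generator `x_i` acts as a
`(g_i,1)`-skew derivation, subject to the defining relations `h·x_i = χ_i(h) x_i·h`,
`x_i x_j = χ_j(g_i) x_j x_i` (`i ≠ j`) and `x_i^{m_i} = 0` with `m_i = ord(χ_i(g_i))`.
Giving such data is the same as making `A` a left `B(G, ĝ, χ̂)`-module algebra. -/
structure BosAction (k : Type) [Field k] (G : Type) [CommGroup G] {θ : ℕ}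
    (gs : Fin θ → G) (χs : Fin θ → (G →* k))
    (A : Type) [Ring A] [Algebra k A] where
  ρ : G →* (A ≃ₐ[k] A)
  x : Fin θ → Module.End k A
  comm : ∀ (i : Fin θ) (h : G) (a : A), ρ h (x i a) = χs i h • x i (ρ h a)
  skew : ∀ (i : Fin θ) (a b : A), x i (a * b) = ρ (gs i) a * x i b + x i a * b
  xx : ∀ (i j : Fin θ), i ≠ j → ∀ a : A, x i (x j a) = χs j (gs i) • x j (x i a)
  x_pow : ∀ i : Fin θ, (x i ^ orderOf (χs i (gs i)) : Module.End k A) = 0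

/-- Inner faithfulness of a `B(G, ĝ, χ̂)`-action: no nonzero Hopf ideal of the
bosonization annihilates `A`; concretely, each `x_i` acts by a nonzero operator and the
group `G` acts faithfully on `A`. -/
def BosAction.InnerFaithful {k : Type} [Field k] {G : Type} [CommGroup G] {θ : ℕ}
    {gs : Fin θ → G} {χs : Fin θ → (G →* k)} {A : Type} [Ring A] [Algebra k A]
    (T : BosAction k G gs χs A) : Prop :=
  (∀ i, T.x i ≠ 0) ∧ Function.Injective T.ρ


/-- Type (a) of the classified generalized Taft algebra actions on `k⟨u,v⟩/(uv-μvu-c)`: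
`g·u = μu`, `g·v = λ⁻¹μv`, `x·u = 0`, `x·v = ηu` (`η ≠ 0`), and `λ = μ²` in the Weyl
case `c ≠ 0`. -/
def FormA {k : Type} [Field k] {μ c : k} (lam : k) (g : QPW k μ c ≃ₐ[k] QPW k μ c)
    (x : Module.End k (QPW k μ c)) : Prop :=
  g (QPW.u k μ c) = μ • QPW.u k μ c ∧ g (QPW.v k μ c) = (lam⁻¹ * μ) • QPW.v k μ c ∧
  x (QPW.u k μ c) = 0 ∧ (∃ η : k, η ≠ 0 ∧ x (QPW.v k μ c) = η • QPW.u k μ c) ∧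
  (c ≠ 0 → lam = μ ^ 2)

/-- Type (b) of the classified generalized Taft algebra actions on `k⟨u,v⟩/(uv-μvu-c)`:
`g·u = λ⁻¹μ⁻¹u`, `g·v = μ⁻¹v`, `x·u = ηv` (`η ≠ 0`), `x·v = 0`, and `λ = μ⁻²` in the
Weyl case `c ≠ 0`. -/
def FormB {k : Type} [Field k] {μ c : k} (lam : k) (g : QPW k μ c ≃ₐ[k] QPW k μ c)
    (x : Module.End k (QPW k μ c)) : Prop :=
  g (QPW.u k μ c) = (lam⁻¹ * μ⁻¹) • QPW.u k μ c ∧ g (QPW.v k μ c) = μ⁻¹ • QPW.v k μ c ∧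
  (∃ η : k, η ≠ 0 ∧ x (QPW.u k μ c) = η • QPW.v k μ c) ∧ x (QPW.v k μ c) = 0 ∧
  (c ≠ 0 → lam = (μ ^ 2)⁻¹)

namespace Stmt6Aux

variable {k : Type} [Field k] {μ c : k}

noncomputable def Uop (k : Type) [Field k] : Module.End k (ℕ →₀ k) :=
  Finsupp.lmapDomain k k (· + 1)

noncomputable def al (μ c : k) (n : ℕ) : k := c * (1 - μ⁻¹ ^ n) / (1 - μ)

noncomputable def Vop (μ c : k) : Module.End k (ℕ →₀ k) :=
  Finsupp.lsum k fun n => (μ⁻¹ ^ n) • Finsupp.lsingle n + (al μ c n) • Finsupp.lsingle (n - 1)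

lemma Uop_single (n : ℕ) (r : k) :
    Uop k (Finsupp.single n r) = Finsupp.single (n + 1) r := by
  simp [Uop, Finsupp.mapDomain_single]

lemma Vop_single (n : ℕ) (r : k) :
    Vop μ c (Finsupp.single n r) =
      (μ⁻¹ ^ n) • Finsupp.single n r + (al μ c n) • Finsupp.single (n - 1) r := by
  simp [Vop, Finsupp.lsingle]

lemma UV_rel (h0 : μ ≠ 0) (h1 : μ ≠ 1) :
    Uop k * Vop μ c = μ • (Vop μ c * Uop k) + algebraMap k (Module.End k (ℕ →₀ k)) c := by
  have hs : (1 : k) - μ ≠ 0 := sub_ne_zero.mpr (Ne.symm h1)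
  have hrec : ∀ n : ℕ, al μ c n - μ * al μ c (n + 1) = c := by
    intro n; simp only [al, inv_pow]; field_simp; ring
  apply Finsupp.lhom_ext
  intro n r
  simp only [Module.End.mul_apply, LinearMap.add_apply, LinearMap.smul_apply,
    Uop_single, Vop_single, map_add, map_smul, Module.algebraMap_end_apply, smul_add, smul_smul,
    Finsupp.smul_single]
  ext m
  have hr := hrec n
  simp only [Finsupp.add_apply, Finsupp.single_apply, smul_eq_mul]
  cases n with
  | zero =>
      simp only [al] at *
      split_ifs <;> first
        | omega
        | (simp only [inv_pow] at *; field_simp; try ring)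
  | succ p =>
      have h2 : p + 1 - 1 + 1 = p + 1 := rfl
      rw [h2]
      split_ifs <;> first
        | omega
        | (linear_combination r * hr)
        | ((try simp only [inv_pow] at *); field_simp; try ring)

noncomputable def repAux (μ c : k) : FreeAlgebra k (Fin 2) →ₐ[k] Module.End k (ℕ →₀ k) :=
  FreeAlgebra.lift k ![Uop k, Vop μ c]

lemma repAux_rel (h0 : μ ≠ 0) (h1 : μ ≠ 1) :
    ∀ ⦃x y : FreeAlgebra k (Fin 2)⦄, QPWRel k μ c x y → repAux μ c x = repAux μ c y := by
  rintro x y ⟨⟩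
  simp only [repAux, map_mul, map_add, map_smul, AlgHom.commutes, FreeAlgebra.lift_ι_apply]
  exact UV_rel h0 h1

noncomputable def rep (h0 : μ ≠ 0) (h1 : μ ≠ 1) : QPW k μ c →ₐ[k] Module.End k (ℕ →₀ k) :=
  RingQuot.liftAlgHom k ⟨repAux μ c, repAux_rel h0 h1⟩

lemma rep_u (h0 : μ ≠ 0) (h1 : μ ≠ 1) : rep (c := c) h0 h1 (QPW.u k μ c) = Uop k := by
  simp [rep, QPW.u, RingQuot.liftAlgHom_mkAlgHom_apply, repAux]

lemma rep_v (h0 : μ ≠ 0) (h1 : μ ≠ 1) : rep (c := c) h0 h1 (QPW.v k μ c) = Vop μ c := by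
  simp [rep, QPW.v, RingQuot.liftAlgHom_mkAlgHom_apply, repAux]

end Stmt6Aux

namespace Stmt6Aux

variable {k : Type} [Field k] {μ c : k}

lemma al_zero' : al μ c 0 = 0 := by simp [al]

set_option maxHeartbeats 1000000 in
lemma indep6 (h0 : μ ≠ 0) (h1 : μ ≠ 1) (h2 : μ^2 ≠ 1) {A B C D E F : k}
    (h : A • (1 : QPW k μ c) + B • QPW.u k μ c + C • QPW.v k μ c
      + D • (QPW.u k μ c * QPW.u k μ c) + E • (QPW.v k μ c * QPW.u k μ c)
      + F • (QPW.v k μ c * QPW.v k μ c) = 0) :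
    A = 0 ∧ B = 0 ∧ C = 0 ∧ D = 0 ∧ E = 0 ∧ F = 0 := by
  have h' := congrArg (rep (c := c) h0 h1) h
  simp only [map_add, map_smul, map_mul, map_one, map_zero, rep_u, rep_v] at h'
  have e0 := DFunLike.congr_fun h' (Finsupp.single 0 1)
  have e1 := DFunLike.congr_fun h' (Finsupp.single 1 1)
  have e2 := DFunLike.congr_fun h' (Finsupp.single 2 1)
  simp only [LinearMap.add_apply, LinearMap.smul_apply, Module.End.one_apply,
    Module.End.mul_apply, Uop_single, Vop_single, map_add, map_smul, smul_smul,
    Finsupp.smul_single, LinearMap.zero_apply, smul_eq_mul] at e0 e1 e2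
  have q20 := DFunLike.congr_fun e0 2
  have q10 := DFunLike.congr_fun e0 1
  have q00 := DFunLike.congr_fun e0 0
  have q21 := DFunLike.congr_fun e1 2
  have q11 := DFunLike.congr_fun e1 1
  have q22 := DFunLike.congr_fun e2 2
  simp only [Finsupp.add_apply, Finsupp.single_apply, Finsupp.coe_zero,
    Pi.zero_apply] at q20 q10 q00 q21 q11 q22
  norm_num at q20 q10 q00 q21 q11 q22
  -- scalar part
  have hal0 : al μ c 0 = 0 := al_zero'
  have hν0 : μ⁻¹ ≠ 0 := inv_ne_zero h0
  have hν1 : μ⁻¹ - 1 ≠ 0 := by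
    rw [sub_ne_zero]
    intro h; exact h1 (by rw [← inv_inv μ, h, inv_one])
  have hν2 : μ⁻¹ + 1 ≠ 0 := by
    intro h
    have hm : μ⁻¹ = -1 := by linear_combination h
    apply h2
    have : μ = -1 := by rw [← inv_inv μ, hm]; norm_num
    rw [this]; ring
  have hE : E * (μ⁻¹ - (μ ^ 2)⁻¹) = 0 := by linear_combination q10 - q21
  have hE0 : E = 0 := by
    rcases mul_eq_zero.mp hE with h | h
    · exact h
    · exfalso
      have h' : μ⁻¹ * (1 - μ⁻¹) = 0 := by linear_combination h
      rcases mul_eq_zero.mp h' with h'' | h''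
      · exact hν0 h''
      · exact hν1 (by linear_combination -h'')
  have hB0 : B = 0 := by linear_combination q10 - μ⁻¹ * hE0
  have d1 : C * (μ⁻¹ - 1) + F * (μ⁻¹^2 - 1) = 0 := by
    linear_combination q11 - q00 + (al μ c 1 - al μ c 2) * hE0 + (C + 2*F + F * al μ c 0) * hal0
  have d2 : C * (μ⁻¹^2 - 1) + F * (μ⁻¹^4 - 1) = 0 := by
    linear_combination q22 - q00 + (al μ c 1 - al μ c 3) * hE0 + (C + 2*F + F * al μ c 0) * hal0
  have hFz : F * (μ⁻¹ * (μ⁻¹ - 1) ^ 3 * (μ⁻¹ + 1)) = 0 := by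
    linear_combination (μ⁻¹-1) * d2 - (μ⁻¹^2-1) * d1
  have hF0 : F = 0 := by
    rcases mul_eq_zero.mp hFz with h | h
    · exact h
    · exfalso
      rcases mul_eq_zero.mp h with h' | h'
      · rcases mul_eq_zero.mp h' with h'' | h''
        · exact hν0 h''
        · exact hν1 (pow_eq_zero_iff (n := 3) (by norm_num) |>.mp h'')
      · exact hν2 h'
  have hC0 : C = 0 := by
    rcases mul_eq_zero.mp (show C * (μ⁻¹ - 1) = 0 by
      linear_combination d1 - (μ⁻¹^2-1)*hF0) with h | h
    · exact h
    · exact absurd h hν1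
  have hA0 : A = 0 := by
    linear_combination q00 - (1 + al μ c 0) * hC0 - al μ c 1 * hE0
      - (1 + 2*al μ c 0 + al μ c 0 * al μ c 0) * hF0
  exact ⟨hA0, hB0, hC0, q20, hE0, hF0⟩

end Stmt6Aux

namespace Stmt6Aux

variable {k : Type} [Field k] {μ c : k}

lemma qpw_rel : QPW.u k μ c * QPW.v k μ c
    = μ • (QPW.v k μ c * QPW.u k μ c) + c • (1 : QPW k μ c) := by
  have h := RingQuot.mkAlgHom_rel k (QPWRel.rel (k := k) (μ := μ) (c := c))
  rw [map_mul, map_add, map_smul, map_mul, AlgHom.commutes] at h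
  rw [QPW.u, QPW.v, h, Algebra.algebraMap_eq_smul_one]

lemma u_ne_zero (h0 : μ ≠ 0) (h1 : μ ≠ 1) (h2 : μ^2 ≠ 1) : QPW.u k μ c ≠ 0 := by
  intro h
  have e : (0:k) • (1 : QPW k μ c) + (1:k) • QPW.u k μ c + (0:k) • QPW.v k μ c
      + (0:k) • (QPW.u k μ c * QPW.u k μ c) + (0:k) • (QPW.v k μ c * QPW.u k μ c)
      + (0:k) • (QPW.v k μ c * QPW.v k μ c) = 0 := by
    simp [h]
  exact one_ne_zero (indep6 h0 h1 h2 e).2.1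

lemma v_ne_zero (h0 : μ ≠ 0) (h1 : μ ≠ 1) (h2 : μ^2 ≠ 1) : QPW.v k μ c ≠ 0 := by
  intro h
  have e : (0:k) • (1 : QPW k μ c) + (0:k) • QPW.u k μ c + (1:k) • QPW.v k μ c
      + (0:k) • (QPW.u k μ c * QPW.u k μ c) + (0:k) • (QPW.v k μ c * QPW.u k μ c)
      + (0:k) • (QPW.v k μ c * QPW.v k μ c) = 0 := by
    simp [h]
  exact one_ne_zero (indep6 h0 h1 h2 e).2.2.1

lemma indep2 (h0 : μ ≠ 0) (h1 : μ ≠ 1) (h2 : μ^2 ≠ 1) {B C : k}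
    (h : B • QPW.u k μ c + C • QPW.v k μ c = 0) : B = 0 ∧ C = 0 := by
  have e : (0:k) • (1 : QPW k μ c) + B • QPW.u k μ c + C • QPW.v k μ c
      + (0:k) • (QPW.u k μ c * QPW.u k μ c) + (0:k) • (QPW.v k μ c * QPW.u k μ c)
      + (0:k) • (QPW.v k μ c * QPW.v k μ c) = 0 := by
    simpa using h
  exact ⟨(indep6 h0 h1 h2 e).2.1, (indep6 h0 h1 h2 e).2.2.1⟩

lemma adjoin_top : Algebra.adjoin k {QPW.u k μ c, QPW.v k μ c} = ⊤ := by
  rw [eq_top_iff]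
  intro a _
  obtain ⟨x, rfl⟩ := RingQuot.mkAlgHom_surjective k (QPWRel k μ c) a
  induction x using FreeAlgebra.induction with
  | grade0 r => rw [AlgHom.commutes]; exact Subalgebra.algebraMap_mem _ r
  | grade1 i =>
      fin_cases i
      · exact Algebra.subset_adjoin (by left; rfl)
      · exact Algebra.subset_adjoin (by right; rfl)
  | mul x y hx hy => rw [map_mul]; exact mul_mem (hx trivial) (hy trivial)
  | add x y hx hy => rw [map_add]; exact add_mem (hx trivial) (hy trivial)

lemma skew_zero (g : QPW k μ c ≃ₐ[k] QPW k μ c) (X : Module.End k (QPW k μ c))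
    (hs : ∀ a b : QPW k μ c, X (a * b) = g a * X b + X a * b)
    (hu : X (QPW.u k μ c) = 0) (hv : X (QPW.v k μ c) = 0) : X = 0 := by
  have hX1 : X 1 = 0 := by
    have h := hs 1 1
    rw [mul_one, map_one g, one_mul, mul_one] at h
    exact left_eq_add.mp h
  ext a
  have ha : a ∈ Algebra.adjoin k {QPW.u k μ c, QPW.v k μ c} := by
    rw [adjoin_top]; trivial
  rw [LinearMap.zero_apply]
  induction ha using Algebra.adjoin_induction with
  | mem x hx => rcases hx with h | h <;> rw [h] at * <;> assumption
  | algebraMap r => rw [Algebra.algebraMap_eq_smul_one, map_smul, hX1, smul_zero]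
  | add x y _ _ hx hy => rw [map_add, hx, hy, add_zero]
  | mul x y _ _ hx hy => rw [hs x y, hx, hy, mul_zero, zero_mul, add_zero]

end Stmt6Aux

namespace Stmt6Aux

variable {k : Type} [Field k] {μ c : k}

set_option maxHeartbeats 1000000 in
lemma diag (h0 : μ ≠ 0) (h1 : μ ≠ 1) (h2 : μ^2 ≠ 1)
    (f : QPW k μ c ≃ₐ[k] QPW k μ c)
    (hf : ∀ a ∈ Submodule.span k {QPW.u k μ c, QPW.v k μ c},
      f a ∈ Submodule.span k {QPW.u k μ c, QPW.v k μ c}) :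
    ∃ α δ : k, α ≠ 0 ∧ δ ≠ 0 ∧ f (QPW.u k μ c) = α • QPW.u k μ c ∧
      f (QPW.v k μ c) = δ • QPW.v k μ c ∧ α * δ * c = c := by
  obtain ⟨α, β, hu⟩ := Submodule.mem_span_pair.mp (hf _ (Submodule.subset_span (by left; rfl)))
  obtain ⟨γ, δ, hv⟩ := Submodule.mem_span_pair.mp (hf _ (Submodule.subset_span (by right; rfl)))
  have hrel : QPW.u k μ c * QPW.v k μ c
      = μ • (QPW.v k μ c * QPW.u k μ c) + c • (1 : QPW k μ c) := qpw_rel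
  have e := congrArg f hrel
  rw [map_mul, map_add, map_smul, map_smul, map_mul, map_one, ← hu, ← hv] at e
  simp only [add_mul, mul_add, smul_mul_assoc, mul_smul_comm, smul_smul, smul_add] at e
  rw [hrel] at e
  have e2 : (α*δ*c - μ*(γ*β)*c - c) • (1 : QPW k μ c) + (0:k) • QPW.u k μ c
      + (0:k) • QPW.v k μ c + (α*γ*(1-μ)) • (QPW.u k μ c * QPW.u k μ c)
      + (β*γ*(1-μ^2)) • (QPW.v k μ c * QPW.u k μ c)
      + (β*δ*(1-μ)) • (QPW.v k μ c * QPW.v k μ c) = 0 := by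
    linear_combination (norm := module) e
  obtain ⟨p1, _, _, p4, p5, p6⟩ := indep6 h0 h1 h2 e2
  have hβγ : β * γ = 0 := by
    rcases mul_eq_zero.mp p5 with h | h
    · exact h
    · exfalso
      exact (sub_ne_zero.mpr (Ne.symm h2)) h
  have hβ : β = 0 := by
    rcases mul_eq_zero.mp hβγ with h | h
    · exact h
    · -- γ = 0
      have hδ : δ ≠ 0 := by
        intro hd
        apply v_ne_zero (c := c) h0 h1 h2
        have : f (QPW.v k μ c) = 0 := by rw [← hv, h, hd]; simp
        have := f.injective (by rw [this, map_zero] : f (QPW.v k μ c) = f 0)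
        exact this
      rcases mul_eq_zero.mp (mul_eq_zero.mp
        (show β*δ*(1-μ) = 0 from p6) |>.resolve_right (sub_ne_zero.mpr (Ne.symm h1))) with hb | hd
      · exact hb
      · exact absurd hd hδ
  rw [hβ] at hu
  have hα : α ≠ 0 := by
    intro ha
    apply u_ne_zero (c := c) h0 h1 h2
    have : f (QPW.u k μ c) = 0 := by rw [← hu, ha]; simp
    exact f.injective (by rw [this, map_zero])
  have hγ : γ = 0 := by
    have := mul_eq_zero.mp (mul_eq_zero.mp p4 |>.resolve_right
      (sub_ne_zero.mpr (Ne.symm h1)))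
    exact this.resolve_left hα
  rw [hγ] at hv
  have hδ : δ ≠ 0 := by
    intro hd
    apply v_ne_zero (c := c) h0 h1 h2
    have : f (QPW.v k μ c) = 0 := by rw [← hv, hd]; simp
    exact f.injective (by rw [this, map_zero])
  refine ⟨α, δ, hα, hδ, ?_, ?_, ?_⟩
  · rw [← hu]; simp
  · rw [← hv]; simp
  · have : α*δ*c - μ*(γ*β)*c - c = 0 := p1
    rw [hβ, hγ] at this
    linear_combination this

end Stmt6Aux

set_option maxHeartbeats 1000000 in
/-- Suppose the bosonization `B = B(G, ĝ, χ̂)` of a quantum linear space has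
rank `θ` and acts linearly and inner faithfully on `A = k_μ[u,v]` (`c = 0`) or
`A = A_1^μ(k)` (`c = 1`), where `ord(μ) = κ` and all `m_i` are at least `3`.  Then:
(1) `ord(μ)` divides `n_i = ord(g_i)` and each Hopf subalgebra `B_i ≅ T_{n_i}(λ_i,m_i,0)`
acts on `A` by one of the two classified Taft actions (type (a) or type (b));
(2) either all `B_i` act by type (a) or all act by type (b);
(3) for all `i ≠ j`, `λ_i = χ_j(g_i)`. -/

theorem stmt_6 {k : Type} [Field k] {G : Type} [CommGroup G] [Fintype G] {θ : ℕ}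
    (gs : Fin θ → G) (χs : Fin θ → (G →* k))
    (hcomp : ∀ i j, i ≠ j → χs i (gs j) * χs j (gs i) = 1)
    (hm3 : ∀ i, 3 ≤ orderOf (χs i (gs i)))
    {μ c : k} {κ : ℕ} (hμ : IsPrimitiveRoot μ κ) (hκ : 3 ≤ κ) (hc : c = 0 ∨ c = 1)
    (T : BosAction k G gs χs (QPW k μ c))
    (hlinG : ∀ (h : G), ∀ a ∈ Submodule.span k {QPW.u k μ c, QPW.v k μ c},
      T.ρ h a ∈ Submodule.span k {QPW.u k μ c, QPW.v k μ c})
    (hlinx : ∀ (i : Fin θ), ∀ a ∈ Submodule.span k {QPW.u k μ c, QPW.v k μ c},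
      T.x i a ∈ Submodule.span k {QPW.u k μ c, QPW.v k μ c})
    (hif : T.InnerFaithful) :
    (∀ i, κ ∣ orderOf (gs i) ∧
      (FormA (χs i (gs i)) (T.ρ (gs i)) (T.x i) ∨
       FormB (χs i (gs i)) (T.ρ (gs i)) (T.x i))) ∧
    ((∀ i, FormA (χs i (gs i)) (T.ρ (gs i)) (T.x i)) ∨
     (∀ i, FormB (χs i (gs i)) (T.ρ (gs i)) (T.x i))) ∧
    (∀ i j, i ≠ j → χs i (gs i) = χs j (gs i)) := by

  classical
  have hμ0 : μ ≠ 0 := hμ.ne_zero (by omega)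
  have hμ1 : μ ≠ 1 := by
    have := hμ.pow_ne_one_of_pos_of_lt (l := 1) one_ne_zero (by omega)
    simpa using this
  have hμ2 : μ ^ 2 ≠ 1 := hμ.pow_ne_one_of_pos_of_lt (by norm_num) (by omega)
  have hune : QPW.u k μ c ≠ 0 := Stmt6Aux.u_ne_zero hμ0 hμ1 hμ2
  have hvne : QPW.v k μ c ≠ 0 := Stmt6Aux.v_ne_zero hμ0 hμ1 hμ2
  have hlam1 : ∀ i, χs i (gs i) ≠ 1 := by
    intro i h
    have h3 := hm3 i
    rw [h, orderOf_one] at h3; omega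
  have hlam0 : ∀ i, χs i (gs i) ≠ 0 := by
    intro i h
    have h3 := hm3 i
    have h1 := pow_orderOf_eq_one (χs i (gs i))
    set m := orderOf (χs i (gs i)) with hm
    rw [h] at h1
    rw [zero_pow (by omega)] at h1
    exact zero_ne_one h1
  have hdiag := fun (h : G) => Stmt6Aux.diag hμ0 hμ1 hμ2 (T.ρ h) (hlinG h)
  -- per-index classification
  have hmain : ∀ i, κ ∣ orderOf (gs i) ∧
      (FormA (χs i (gs i)) (T.ρ (gs i)) (T.x i) ∨
       FormB (χs i (gs i)) (T.ρ (gs i)) (T.x i)) := by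
    intro i
    obtain ⟨α, δ, hα, hδ, hgu, hgv, hαδc⟩ := hdiag (gs i)
    obtain ⟨a, b, hXu⟩ := Submodule.mem_span_pair.mp
      (hlinx i _ (Submodule.subset_span (by left; rfl)))
    obtain ⟨e, d, hXv⟩ := Submodule.mem_span_pair.mp
      (hlinx i _ (Submodule.subset_span (by right; rfl)))
    -- commutation relations between ρ (gs i) and x i on u, v
    have c1 := T.comm i (gs i) (QPW.u k μ c)
    rw [hgu, map_smul, ← hXu, map_add, map_smul, map_smul, hgu, hgv] at c1
    have q12 := Stmt6Aux.indep2 hμ0 hμ1 hμ2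
      (show (a*α - χs i (gs i)*(α*a)) • QPW.u k μ c
          + (b*δ - χs i (gs i)*(α*b)) • QPW.v k μ c = 0 by
        linear_combination (norm := module) c1)
    have c2 := T.comm i (gs i) (QPW.v k μ c)
    rw [hgv, map_smul, ← hXv, map_add, map_smul, map_smul, hgu, hgv] at c2
    have q34 := Stmt6Aux.indep2 hμ0 hμ1 hμ2
      (show (e*α - χs i (gs i)*(δ*e)) • QPW.u k μ c
          + (d*δ - χs i (gs i)*(δ*d)) • QPW.v k μ c = 0 by
        linear_combination (norm := module) c2)
    have hsub : (1 : k) - χs i (gs i) ≠ 0 := sub_ne_zero.mpr (Ne.symm (hlam1 i))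
    have ha0 : a = 0 := by
      have h' : a * (α * (1 - χs i (gs i))) = 0 := by linear_combination q12.1
      exact (mul_eq_zero.mp h').resolve_right (mul_ne_zero hα hsub)
    have hd0 : d = 0 := by
      have h' : d * (δ * (1 - χs i (gs i))) = 0 := by linear_combination q34.2
      exact (mul_eq_zero.mp h').resolve_right (mul_ne_zero hδ hsub)
    have hXu' : T.x i (QPW.u k μ c) = b • QPW.v k μ c := by
      rw [← hXu, ha0, zero_smul, zero_add]
    have hXv' : T.x i (QPW.v k μ c) = e • QPW.u k μ c := by
      rw [← hXv, hd0, zero_smul, add_zero]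
    -- skew-derivation relation applied to u*v = μ v*u + c
    have hX1 : T.x i 1 = 0 := by
      have h := T.skew i 1 1
      rw [mul_one, map_one (T.ρ (gs i)), one_mul, mul_one] at h
      exact left_eq_add.mp h
    have s1 := T.skew i (QPW.u k μ c) (QPW.v k μ c)
    rw [hgu, hXv', hXu'] at s1
    have s2 := T.skew i (QPW.v k μ c) (QPW.u k μ c)
    rw [hgv, hXu', hXv'] at s2
    have s3 := congrArg (T.x i) (Stmt6Aux.qpw_rel (k := k) (μ := μ) (c := c))
    rw [map_add, map_smul, map_smul, hX1, smul_zero, add_zero, s1, s2] at s3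
    simp only [smul_mul_assoc, mul_smul_comm, smul_smul, smul_add] at s3
    have e6 : (0:k) • (1 : QPW k μ c) + (0:k) • QPW.u k μ c + (0:k) • QPW.v k μ c
        + (α*e - μ*e) • (QPW.u k μ c * QPW.u k μ c)
        + (0:k) • (QPW.v k μ c * QPW.u k μ c)
        + (b - μ*(δ*b)) • (QPW.v k μ c * QPW.v k μ c) = 0 := by
      linear_combination (norm := module) s3
    obtain ⟨-, -, -, r1, -, r2⟩ := Stmt6Aux.indep6 hμ0 hμ1 hμ2 e6
    -- x i is nonzero on span {u, v}
    have hbe_ne : ¬ (b = 0 ∧ e = 0) := by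
      rintro ⟨hb, he⟩
      apply hif.1 i
      apply Stmt6Aux.skew_zero (T.ρ (gs i)) (T.x i) (T.skew i)
      · rw [hXu', hb, zero_smul]
      · rw [hXv', he, zero_smul]
    -- nilpotence forces b * e = 0
    have hsq : (T.x i ^ 2) (QPW.u k μ c) = (b*e) • QPW.u k μ c := by
      rw [pow_two, Module.End.mul_apply, hXu', map_smul, hXv', smul_smul]
    have hsqv : (T.x i ^ 2) (QPW.v k μ c) = (b*e) • QPW.v k μ c := by
      rw [pow_two, Module.End.mul_apply, hXv', map_smul, hXu', smul_smul]
      rw [mul_comm e b]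
    have hX2u : ∀ t : ℕ, (T.x i ^ (2*t)) (QPW.u k μ c) = ((b*e)^t) • QPW.u k μ c := by
      intro t
      induction t with
      | zero => simp
      | succ n ih =>
          have h2 : 2*(n+1) = 2*n + 2 := by ring
          rw [h2, pow_add, Module.End.mul_apply, hsq, map_smul, ih, smul_smul]
          rw [mul_comm (b*e) ((b*e)^n), ← pow_succ]
    have hX2v : ∀ t : ℕ, (T.x i ^ (2*t)) (QPW.v k μ c) = ((b*e)^t) • QPW.v k μ c := by
      intro t
      induction t with
      | zero => simp
      | succ n ih =>
          have h2 : 2*(n+1) = 2*n + 2 := by ring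
          rw [h2, pow_add, Module.End.mul_apply, hsqv, map_smul, ih, smul_smul]
          rw [mul_comm (b*e) ((b*e)^n), ← pow_succ]
    have hpow := T.x_pow i
    have hbe0 : b * e = 0 := by
      by_contra hne
      rcases Nat.even_or_odd (orderOf (χs i (gs i))) with ⟨t, ht⟩ | ⟨t, ht⟩
      · have ht' : orderOf (χs i (gs i)) = 2*t := by omega
        have h1 : (T.x i ^ (2*t)) (QPW.u k μ c) = 0 := by
          rw [← ht', hpow, LinearMap.zero_apply]
        rw [hX2u t] at h1
        have ht0 : t ≠ 0 := by have := hm3 i; omega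
        rcases smul_eq_zero.mp h1 with h | h
        · exact hne ((pow_eq_zero_iff ht0).mp h)
        · exact hune h
      · have ht' : orderOf (χs i (gs i)) = 2*t + 1 := by omega
        have h1 : (T.x i ^ (2*t + 1)) (QPW.u k μ c) = 0 := by
          rw [← ht', hpow, LinearMap.zero_apply]
        rw [pow_succ, Module.End.mul_apply, hXu', map_smul, hX2v t, smul_smul] at h1
        rcases smul_eq_zero.mp h1 with h | h
        · rcases mul_eq_zero.mp h with h' | h'
          · exact hne (by rw [h', zero_mul])
          · rcases Nat.eq_zero_or_pos t with ht0 | ht0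
            · rw [ht0, pow_zero] at h'
              exact one_ne_zero h'
            · exact hne ((pow_eq_zero_iff (Nat.pos_iff_ne_zero.mp ht0)).mp h')
        · exact hvne h
    -- powers of ρ (gs i) on u and v
    have hρpu : ∀ t : ℕ, ((T.ρ (gs i))^t) (QPW.u k μ c) = (α^t) • QPW.u k μ c := by
      intro t
      induction t with
      | zero => simp
      | succ n ih =>
          rw [pow_succ, AlgEquiv.mul_apply, hgu, map_smul, ih, smul_smul]
          rw [mul_comm α (α^n), ← pow_succ]
    have hρpv : ∀ t : ℕ, ((T.ρ (gs i))^t) (QPW.v k μ c) = (δ^t) • QPW.v k μ c := by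
      intro t
      induction t with
      | zero => simp
      | succ n ih =>
          rw [pow_succ, AlgEquiv.mul_apply, hgv, map_smul, ih, smul_smul]
          rw [mul_comm δ (δ^n), ← pow_succ]
    have hord : (gs i) ^ (orderOf (gs i)) = 1 := pow_orderOf_eq_one _
    have hαn : α ^ (orderOf (gs i)) = 1 := by
      have h1 : ((T.ρ (gs i))^(orderOf (gs i))) (QPW.u k μ c) = QPW.u k μ c := by
        rw [← map_pow, hord, map_one, AlgEquiv.one_apply]
      rw [hρpu] at h1
      exact smul_left_injective k hune
        (show α ^ orderOf (gs i) • QPW.u k μ c = (1:k) • QPW.u k μ c by rw [h1, one_smul])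
    have hδn : δ ^ (orderOf (gs i)) = 1 := by
      have h1 : ((T.ρ (gs i))^(orderOf (gs i))) (QPW.v k μ c) = QPW.v k μ c := by
        rw [← map_pow, hord, map_one, AlgEquiv.one_apply]
      rw [hρpv] at h1
      exact smul_left_injective k hvne
        (show δ ^ orderOf (gs i) • QPW.v k μ c = (1:k) • QPW.v k μ c by rw [h1, one_smul])
    -- case split on which of b, e vanishes
    rcases mul_eq_zero.mp hbe0 with hb | he
    · -- b = 0, e ≠ 0 : Form A
      have he' : e ≠ 0 := fun he => hbe_ne ⟨hb, he⟩
      have hαμ : α = μ := by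
        have h' : (α - μ) * e = 0 := by linear_combination r1
        exact sub_eq_zero.mp ((mul_eq_zero.mp h').resolve_right he')
      have hald : α = χs i (gs i) * δ := by
        have h' : e * (α - χs i (gs i) * δ) = 0 := by linear_combination q34.1
        exact sub_eq_zero.mp ((mul_eq_zero.mp h').resolve_left he')
      have hcd : χs i (gs i) * δ = μ := by rw [← hαμ, hald]
      have hδval : δ = (χs i (gs i))⁻¹ * μ := by
        rw [← hcd]; exact (inv_mul_cancel_left₀ (hlam0 i) δ).symm
      constructor
      · exact hμ.dvd_of_pow_eq_one _ (by rw [← hαμ]; exact hαn)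
      · left
        refine ⟨by rw [hgu, hαμ], by rw [hgv, hδval], by rw [hXu', hb, zero_smul],
          ⟨e, he', hXv'⟩, ?_⟩
        intro hc0
        have h1 : α * δ = 1 :=
          mul_right_cancel₀ hc0 (by rw [one_mul]; exact hαδc)
        rw [hαμ, hδval] at h1
        have h3 : (χs i (gs i))⁻¹ * (μ * μ) = 1 := by linear_combination h1
        have h4 := (inv_mul_eq_one₀ (hlam0 i)).mp h3
        rw [pow_two]; exact h4
    · -- e = 0, b ≠ 0 : Form B
      have hb' : b ≠ 0 := fun hb => hbe_ne ⟨hb, he⟩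
      have hδval : δ = μ⁻¹ := by
        have h' : b * (1 - μ * δ) = 0 := by linear_combination r2
        have h'' : μ * δ = 1 := by
          linear_combination -((mul_eq_zero.mp h').resolve_left hb')
        exact (inv_eq_of_mul_eq_one_right h'').symm
      have hdla : δ = χs i (gs i) * α := by
        have h' : b * (δ - χs i (gs i) * α) = 0 := by linear_combination q12.2
        exact sub_eq_zero.mp ((mul_eq_zero.mp h').resolve_left hb')
      have hca : χs i (gs i) * α = μ⁻¹ := by rw [← hdla, hδval]
      have hαval : α = (χs i (gs i))⁻¹ * μ⁻¹ := by
        rw [← hca]; exact (inv_mul_cancel_left₀ (hlam0 i) α).symm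
      constructor
      · refine hμ.dvd_of_pow_eq_one _ ?_
        have : (μ⁻¹) ^ (orderOf (gs i)) = 1 := by rw [← hδval]; exact hδn
        rw [inv_pow] at this
        exact inv_eq_one.mp this
      · right
        refine ⟨by rw [hgu, hαval], by rw [hgv, hδval], ⟨b, hb', hXu'⟩,
          by rw [hXv', he, zero_smul], ?_⟩
        intro hc0
        have h1 : α * δ = 1 :=
          mul_right_cancel₀ hc0 (by rw [one_mul]; exact hαδc)
        rw [hαval, hδval] at h1
        have h3 : (χs i (gs i))⁻¹ * (μ⁻¹ * μ⁻¹) = 1 := by linear_combination h1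
        have h4 := (inv_mul_eq_one₀ (hlam0 i)).mp h3
        rw [h4, pow_two, mul_inv]
  -- all of the same type
  have hsame : (∀ i, FormA (χs i (gs i)) (T.ρ (gs i)) (T.x i)) ∨
      (∀ i, FormB (χs i (gs i)) (T.ρ (gs i)) (T.x i)) := by
    by_cases hA : ∀ i, FormA (χs i (gs i)) (T.ρ (gs i)) (T.x i)
    · exact Or.inl hA
    · right
      push_neg at hA
      obtain ⟨j, hj⟩ := hA
      have hBj : FormB (χs j (gs j)) (T.ρ (gs j)) (T.x j) :=
        ((hmain j).2).resolve_left hj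
      intro i
      rcases (hmain i).2 with hAi | hBi
      · exfalso
        by_cases hij : i = j
        · exact hj (hij ▸ hAi)
        · obtain ⟨-, -, hxiu, ⟨η, hη, hxiv⟩, -⟩ := hAi
          obtain ⟨-, -, ⟨τ, hτ, hxju⟩, -, -⟩ := hBj
          have hx := T.xx i j hij (QPW.u k μ c)
          rw [hxju, map_smul, hxiv, hxiu, map_zero, smul_zero, smul_smul] at hx
          rcases smul_eq_zero.mp hx with h | h
          · rcases mul_eq_zero.mp h with h' | h'
            · exact hτ h'
            · exact hη h'
          · exact hune h
      · exact hBi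
  refine ⟨hmain, hsame, ?_⟩
  -- compatibility of the characters
  intro i j hij
  rcases hsame with hA | hB
  · obtain ⟨hgu_i, hgv_i, -, -, -⟩ := hA i
    obtain ⟨-, -, -, ⟨η, hη, hxjv⟩, -⟩ := hA j
    have hc' := T.comm j (gs i) (QPW.v k μ c)
    rw [hxjv, map_smul, hgu_i, hgv_i, map_smul, hxjv, smul_smul, smul_smul, smul_smul] at hc'
    have h3 : η * μ = χs j (gs i) * ((χs i (gs i))⁻¹ * μ) * η :=
      smul_left_injective k hune (by exact hc')
    have hinv : (χs i (gs i))⁻¹ * χs i (gs i) = 1 := inv_mul_cancel₀ (hlam0 i)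
    have h4 : χs i (gs i) * (η * μ) = χs j (gs i) * (η * μ) := by
      linear_combination (χs i (gs i)) * h3 + (χs j (gs i) * μ * η) * hinv
    exact mul_right_cancel₀ (mul_ne_zero hη hμ0) h4
  · obtain ⟨hgu_i, hgv_i, -, -, -⟩ := hB i
    obtain ⟨-, -, ⟨η, hη, hxju⟩, -, -⟩ := hB j
    have hc' := T.comm j (gs i) (QPW.u k μ c)
    rw [hxju, map_smul, hgv_i, hgu_i, map_smul, hxju, smul_smul, smul_smul, smul_smul] at hc'
    have h3 : η * μ⁻¹ = χs j (gs i) * ((χs i (gs i))⁻¹ * μ⁻¹) * η :=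
      smul_left_injective k hvne (by exact hc')
    have hinv : (χs i (gs i))⁻¹ * χs i (gs i) = 1 := inv_mul_cancel₀ (hlam0 i)
    have h4 : χs i (gs i) * (η * μ⁻¹) = χs j (gs i) * (η * μ⁻¹) := by
      linear_combination (χs i (gs i)) * h3 + (χs j (gs i) * μ⁻¹ * η) * hinv
    exact mul_right_cancel₀ (mul_ne_zero hη (inv_ne_zero hμ0)) h4
end

section
/- Suppose the bosonization B(G,g,χ) of a quantum linear space has rank θ and acts linearly and inner faithfully on A = k_μ[u,v] or A = A_1^μ(k), where ord(μ) and all m_i are at least 3. Then θ ≤ 2; and if θ = 2, then there exists a primitive m-th root of unity ω such that χ_1(g_1) = χ_2(g_1) = ω and χ_1(g_2) = χ_2(g_2) = ω^{-1}. -/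
noncomputable section QPWRep

variable {k : Type} [Field k] (μ c : k)

def Evec (a b : ℕ) : (ℕ × ℕ) →₀ k := Finsupp.single (a, b) 1

def Uop : Module.End k ((ℕ × ℕ) →₀ k) :=
  Finsupp.lsum k fun p => LinearMap.toSpanSingleton k _
    (μ ^ p.1 • Evec p.1 (p.2 + 1) + (c * ∑ i ∈ Finset.range p.1, μ ^ i) • Evec (p.1 - 1) p.2)

def Vop : Module.End k ((ℕ × ℕ) →₀ k) :=
  Finsupp.lsum k fun p => LinearMap.toSpanSingleton k _ (Evec (p.1 + 1) p.2)

lemma Uop_single (a b : ℕ) :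
    Uop μ c (Evec a b)
      = μ ^ a • Evec a (b + 1) + (c * ∑ i ∈ Finset.range a, μ ^ i) • Evec (a - 1) b := by
  simp [Uop, Evec, Finsupp.lsum_single, LinearMap.toSpanSingleton_apply]

lemma Vop_single (a b : ℕ) : Vop (k := k) (Evec a b) = Evec (a + 1) b := by
  simp [Vop, Evec, Finsupp.lsum_single, LinearMap.toSpanSingleton_apply]

lemma UV_comm : Uop μ c * Vop = μ • (Vop * Uop μ c) + algebraMap k _ c := by
  apply Finsupp.lhom_ext
  rintro ⟨a, b⟩ t
  have hst : (Finsupp.single ((a : ℕ), (b : ℕ)) t : (ℕ × ℕ) →₀ k) = t • Evec a b := by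
    simp [Evec, Finsupp.smul_single]
  rw [LinearMap.add_apply, Module.End.mul_apply, LinearMap.smul_apply, Module.End.mul_apply,
    Module.algebraMap_end_apply, hst]
  simp only [map_smul, map_add, Uop_single, Vop_single]
  cases a with
  | zero => simp [smul_smul, mul_comm]
  | succ n =>
      simp only [Nat.succ_sub_one]
      rw [geom_sum_succ]
      simp only [smul_add, smul_smul]
      module

def frep : FreeAlgebra k (Fin 2) →ₐ[k] Module.End k ((ℕ × ℕ) →₀ k) :=
  FreeAlgebra.lift k ![Uop μ c, Vop]

def qrep : QPW k μ c →ₐ[k] Module.End k ((ℕ × ℕ) →₀ k) :=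
  RingQuot.liftAlgHom k ⟨frep μ c, by
    rintro _ _ ⟨⟩
    simp only [map_mul, map_add, map_smul, frep, FreeAlgebra.lift_ι_apply,
      Matrix.cons_val_zero, Matrix.cons_val_one, Matrix.head_cons, AlgHom.commutes]
    exact UV_comm μ c⟩

lemma qrep_u : qrep μ c (QPW.u k μ c) = Uop μ c := by
  rw [QPW.u, qrep, RingQuot.liftAlgHom_mkAlgHom_apply]
  simp [frep]

lemma qrep_v : qrep μ c (QPW.v k μ c) = Vop := by
  rw [QPW.v, qrep, RingQuot.liftAlgHom_mkAlgHom_apply]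
  simp [frep]

lemma uv_coords {s t s' t' : k} (h : s • QPW.u k μ c + t • QPW.v k μ c
    = s' • QPW.u k μ c + t' • QPW.v k μ c) : s = s' ∧ t = t' := by
  have h2 := congrArg (fun w => qrep μ c w (Evec 0 0)) h
  simp only [map_add, map_smul, qrep_u, qrep_v, LinearMap.add_apply, LinearMap.smul_apply,
    Uop_single, Vop_single] at h2
  simp only [pow_zero, Finset.range_zero, Finset.sum_empty, mul_zero, zero_smul, add_zero,
    one_smul, Nat.zero_add] at h2
  constructor
  · have := DFunLike.congr_fun h2 (0, 1)
    simpa [Evec, Finsupp.single_apply] using this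
  · have := DFunLike.congr_fun h2 (1, 0)
    simpa [Evec, Finsupp.single_apply] using this

lemma u_ne_zero : QPW.u k μ c ≠ 0 := by
  intro h
  have : (1 : k) • QPW.u k μ c + (0 : k) • QPW.v k μ c
      = (0 : k) • QPW.u k μ c + (0 : k) • QPW.v k μ c := by simp [h]
  exact one_ne_zero ((uv_coords μ c this).1)

lemma v_ne_zero : QPW.v k μ c ≠ 0 := by
  intro h
  have : (0 : k) • QPW.u k μ c + (1 : k) • QPW.v k μ c
      = (0 : k) • QPW.u k μ c + (0 : k) • QPW.v k μ c := by simp [h]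
  exact one_ne_zero ((uv_coords μ c this).2)

lemma QPW.rel : QPW.u k μ c * QPW.v k μ c
    = μ • (QPW.v k μ c * QPW.u k μ c) + algebraMap k _ c := by
  rw [QPW.u, QPW.v, ← map_mul, RingQuot.mkAlgHom_rel k QPWRel.rel]
  simp only [map_add, map_smul, map_mul, AlgHom.commutes]

lemma rel_coeffs {a b e d : k} (hμ1 : μ ≠ 1) (hμ2 : μ * μ ≠ 1)
    (h : (a • QPW.u k μ c + b • QPW.v k μ c) * (e • QPW.u k μ c + d • QPW.v k μ c)
        = μ • ((e • QPW.u k μ c + d • QPW.v k μ c) * (a • QPW.u k μ c + b • QPW.v k μ c))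
          + algebraMap k _ c) :
    a * e = 0 ∧ b * d = 0 ∧ b * e = 0 := by
  have h2 := congrArg (fun w => qrep μ c w (Evec 0 0)) h
  simp only [map_add, map_smul, map_mul, qrep_u, qrep_v, AlgHom.commutes,
    LinearMap.add_apply, LinearMap.smul_apply, Module.End.mul_apply,
    Module.algebraMap_end_apply, map_add, map_smul,
    Uop_single, Vop_single] at h2
  simp only [pow_zero, pow_one, Finset.range_zero, Finset.sum_empty, mul_zero, zero_smul,
    add_zero, one_smul, Nat.zero_add, Finset.sum_range_one, mul_one, zero_add,
    Nat.sub_zero, Nat.add_sub_cancel, smul_add, smul_smul] at h2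
  refine ⟨?_, ?_, ?_⟩
  · have := DFunLike.congr_fun h2 (0, 2)
    simp [Evec, Finsupp.single_apply, Prod.ext_iff] at this
    have h3 : a * e * (1 - μ) = 0 := by linear_combination this
    rcases mul_eq_zero.mp h3 with h4 | h4
    · exact h4
    · exact (hμ1 (sub_eq_zero.mp h4).symm).elim
  · have := DFunLike.congr_fun h2 (2, 0)
    simp [Evec, Finsupp.single_apply, Prod.ext_iff] at this
    have h3 : b * d * (1 - μ) = 0 := by linear_combination this
    rcases mul_eq_zero.mp h3 with h4 | h4
    · exact h4
    · exact (hμ1 (sub_eq_zero.mp h4).symm).elim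
  · have := DFunLike.congr_fun h2 (1, 1)
    simp [Evec, Finsupp.single_apply] at this
    have h3 : b * e * (1 - μ * μ) = 0 := by linear_combination this
    rcases mul_eq_zero.mp h3 with h4 | h4
    · exact h4
    · exact (hμ2 (sub_eq_zero.mp h4).symm).elim


lemma skew_zero (rg : QPW k μ c ≃ₐ[k] QPW k μ c) (X : Module.End k (QPW k μ c))
    (hskew : ∀ a b : QPW k μ c, X (a * b) = rg a * X b + X a * b)
    (hu : X (QPW.u k μ c) = 0) (hv : X (QPW.v k μ c) = 0) : X = 0 := by
  have h1 : X 1 = 0 := by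
    have h2 := hskew 1 1
    simp only [mul_one, one_mul, map_one] at h2
    exact (right_eq_add.mp h2)
  have key : ∀ w : FreeAlgebra k (Fin 2), X (RingQuot.mkAlgHom k (QPWRel k μ c) w) = 0 := by
    intro w
    induction w using FreeAlgebra.induction with
    | grade0 r =>
        rw [AlgHom.commutes, Algebra.algebraMap_eq_smul_one, map_smul, h1, smul_zero]
    | grade1 i =>
        fin_cases i
        · exact hu
        · exact hv
    | mul a b ha hb =>
        rw [map_mul, hskew, ha, hb, mul_zero, zero_mul, add_zero]
    | add a b ha hb => rw [map_add, map_add, ha, hb, add_zero]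
  apply LinearMap.ext
  intro a
  obtain ⟨w, rfl⟩ := RingQuot.mkAlgHom_surjective k (QPWRel k μ c) a
  simpa using key w

end QPWRep


/-- Suppose the bosonization `B(G, ĝ, χ̂)` of a quantum linear space has rank
`θ` and acts linearly and inner faithfully on `A = k_μ[u,v]` (`c = 0`) or `A = A_1^μ(k)`
(`c = 1`), where `ord(μ)` and all `m_i` are at least `3`.  Then `θ ≤ 2`; and if `θ = 2`
(i.e. for any two distinct indices `i ≠ j`), there exists a primitive `m`-th root of
unity `ω` such that `χ_i(g_i) = χ_j(g_i) = ω` and `χ_i(g_j) = χ_j(g_j) = ω⁻¹`. -/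
theorem stmt_7 {k : Type} [Field k] {G : Type} [CommGroup G] [Fintype G] {θ : ℕ}
    (gs : Fin θ → G) (χs : Fin θ → (G →* k))
    (hcomp : ∀ i j, i ≠ j → χs i (gs j) * χs j (gs i) = 1)
    (hm3 : ∀ i, 3 ≤ orderOf (χs i (gs i)))
    {μ c : k} {κ : ℕ} (hμ : IsPrimitiveRoot μ κ) (hκ : 3 ≤ κ) (hc : c = 0 ∨ c = 1)
    (T : BosAction k G gs χs (QPW k μ c))
    (hlinG : ∀ (h : G), ∀ a ∈ Submodule.span k {QPW.u k μ c, QPW.v k μ c},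
      T.ρ h a ∈ Submodule.span k {QPW.u k μ c, QPW.v k μ c})
    (hlinx : ∀ (i : Fin θ), ∀ a ∈ Submodule.span k {QPW.u k μ c, QPW.v k μ c},
      T.x i a ∈ Submodule.span k {QPW.u k μ c, QPW.v k μ c})
    (hif : T.InnerFaithful) :
    θ ≤ 2 ∧
    (∀ i j : Fin θ, i ≠ j → ∃ (m : ℕ) (ω : k), IsPrimitiveRoot ω m ∧
      χs i (gs i) = ω ∧ χs j (gs i) = ω ∧ χs i (gs j) = ω⁻¹ ∧ χs j (gs j) = ω⁻¹) := by
  classical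
  set u := QPW.u k μ c with hu_def
  set v := QPW.v k μ c with hv_def
  have hμ1 : μ ≠ 1 := by
    have h := hμ.pow_ne_one_of_pos_of_lt (by norm_num : 1 ≠ 0) (by omega : 1 < κ)
    simpa using h
  have hμ2 : μ * μ ≠ 1 := by
    have h := hμ.pow_ne_one_of_pos_of_lt (by norm_num : 2 ≠ 0) (by omega : 2 < κ)
    simpa [pow_two] using h
  have humem : u ∈ Submodule.span k {u, v} :=
    Submodule.subset_span (Set.mem_insert _ _)
  have hvmem : v ∈ Submodule.span k {u, v} :=
    Submodule.subset_span (Set.mem_insert_of_mem _ rfl)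
  -- every group element acts diagonally
  have hdiag : ∀ h : G, ∃ α β : k, α ≠ 0 ∧ β ≠ 0 ∧ T.ρ h u = α • u ∧ T.ρ h v = β • v := by
    intro h
    obtain ⟨a, b, hab⟩ := Submodule.mem_span_pair.mp (hlinG h u humem)
    obtain ⟨e, d, hed⟩ := Submodule.mem_span_pair.mp (hlinG h v hvmem)
    have hrel : (a • u + b • v) * (e • u + d • v)
        = μ • ((e • u + d • v) * (a • u + b • v)) + algebraMap k _ c := by
      rw [hab, hed, ← map_mul, QPW.rel, map_add, map_smul, map_mul, AlgEquiv.commutes]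
    obtain ⟨h1, h2, h3⟩ := rel_coeffs μ c hμ1 hμ2 hrel
    have hru : T.ρ h u ≠ 0 := fun hz =>
      u_ne_zero μ c ((T.ρ h).injective (by simpa using hz))
    have hrv : T.ρ h v ≠ 0 := fun hz =>
      v_ne_zero μ c ((T.ρ h).injective (by simpa using hz))
    have hb : b = 0 := by
      by_contra hb
      have hd : d = 0 := by
        rcases mul_eq_zero.mp h2 with h' | h'
        · exact absurd h' hb
        · exact h'
      have he : e = 0 := by
        rcases mul_eq_zero.mp h3 with h' | h'
        · exact absurd h' hb
        · exact h'
      rw [he, hd] at hed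
      simp at hed
      exact hrv hed.symm
    have ha : a ≠ 0 := by
      intro ha
      rw [ha, hb] at hab
      simp at hab
      exact hru hab.symm
    have he : e = 0 := by
      rcases mul_eq_zero.mp h1 with h' | h'
      · exact absurd h' ha
      · exact h'
    have hd : d ≠ 0 := by
      intro hd
      rw [he, hd] at hed
      simp at hed
      exact hrv hed.symm
    refine ⟨a, d, ha, hd, ?_, ?_⟩
    · rw [← hab, hb]; simp
    · rw [← hed, he]; simp
  choose αf βf hα hβ hρu hρv using hdiag
  -- each x i is strictly antidiagonal with product of entries zero
  have hq1 : ∀ i : Fin θ, χs i (gs i) ≠ 1 := by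
    intro i h1
    have := hm3 i
    rw [h1, orderOf_one] at this
    omega
  have hx : ∀ i : Fin θ, ∃ bi ci : k,
      T.x i u = ci • v ∧ T.x i v = bi • u ∧ bi * ci = 0 ∧ ¬(bi = 0 ∧ ci = 0) := by
    intro i
    obtain ⟨p, q, hpq⟩ := Submodule.mem_span_pair.mp (hlinx i u humem)
    obtain ⟨r, s, hrs⟩ := Submodule.mem_span_pair.mp (hlinx i v hvmem)
    set g := gs i
    set q0 := χs i (gs i) with hq0_def
    -- use comm at g on u
    have hcu := T.comm i g u
    rw [hρu g] at hcu
    simp only [map_smul, smul_smul] at hcu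
    rw [← hpq] at hcu
    simp only [map_add, map_smul, hρu g, hρv g, smul_add, smul_smul] at hcu
    obtain ⟨e1, e2⟩ := uv_coords μ c hcu
    have hp : p = 0 := by
      have : p * (αf g * (1 - q0)) = 0 := by ring_nf; linear_combination e1
      rcases mul_eq_zero.mp this with h' | h'
      · exact h'
      · rcases mul_eq_zero.mp h' with h'' | h''
        · exact absurd h'' (hα g)
        · exact absurd (sub_eq_zero.mp h'').symm (hq1 i)
    have hcv := T.comm i g v
    rw [hρv g] at hcv
    simp only [map_smul, smul_smul] at hcv
    rw [← hrs] at hcv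
    simp only [map_add, map_smul, hρu g, hρv g, smul_add, smul_smul] at hcv
    obtain ⟨f1, f2⟩ := uv_coords μ c hcv
    have hs : s = 0 := by
      have : s * (βf g * (1 - q0)) = 0 := by ring_nf; linear_combination f2
      rcases mul_eq_zero.mp this with h' | h'
      · exact h'
      · rcases mul_eq_zero.mp h' with h'' | h''
        · exact absurd h'' (hβ g)
        · exact absurd (sub_eq_zero.mp h'').symm (hq1 i)
    have hxu : T.x i u = q • v := by rw [← hpq, hp]; simp
    have hxv : T.x i v = r • u := by rw [← hrs, hs]; simp
    -- nilpotency forces q * r = 0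
    have hpow : ∀ n : ℕ, ((T.x i ^ 2) ^ n) u = (q * r) ^ n • u := by
      intro n
      induction n with
      | zero => simp
      | succ n ih =>
          rw [pow_succ, Module.End.mul_apply]
          have hx2 : (T.x i ^ 2) u = (q * r) • u := by
            rw [pow_two, Module.End.mul_apply, hxu, map_smul, hxv, smul_smul]
          rw [hx2, map_smul, ih, smul_smul, mul_comm (q*r) ((q*r)^n), ← pow_succ]
    have hm0 : orderOf q0 ≠ 0 := by
      have h9 := hm3 i
      rw [← hq0_def] at h9
      omega
    have hxm : T.x i ^ orderOf q0 = 0 := by rw [hq0_def]; exact T.x_pow i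
    have hzero : ((T.x i ^ 2) ^ orderOf q0) = 0 := by
      rw [← pow_mul, two_mul, pow_add, hxm, zero_mul]
    have hqr : q * r = 0 := by
      have h5 := hpow (orderOf q0)
      rw [hzero] at h5
      simp only [LinearMap.zero_apply] at h5
      have h6 : (q * r) ^ orderOf q0 = 0 := by
        by_contra h7
        exact u_ne_zero μ c (by
          have := smul_eq_zero.mp h5.symm
          rcases this with h8 | h8
          · exact absurd h8 h7
          · exact h8)
      exact pow_eq_zero_iff hm0 |>.mp h6
    refine ⟨r, q, hxu, hxv, mul_comm q r ▸ hqr, ?_⟩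
    rintro ⟨hr0, hq0⟩
    have : T.x i = 0 := by
      apply skew_zero μ c (T.ρ (gs i)) (T.x i) (T.skew i)
      · rw [hxu, hq0]; simp
      · rw [hxv, hr0]; simp
    exact hif.1 i this
  choose bf cf hxu hxv hbc hnb using hx
  -- pointwise character identities
  have hcharb : ∀ (i : Fin θ) (h : G), bf i ≠ 0 → χs i h * βf h = αf h := by
    intro i h hb
    have hc := T.comm i h v
    rw [hxv i] at hc
    simp only [map_smul, smul_smul, hρu h, hρv h, hxv i] at hc
    have : (bf i * αf h) • u + (0 : k) • v = (χs i h * βf h * bf i) • u + (0 : k) • v := by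
      simpa [mul_assoc] using hc
    have := (uv_coords μ c this).1
    have h2 : bf i * (αf h - χs i h * βf h) = 0 := by ring_nf; linear_combination this
    rcases mul_eq_zero.mp h2 with h' | h'
    · exact absurd h' hb
    · exact (sub_eq_zero.mp h').symm
  have hcharc : ∀ (i : Fin θ) (h : G), cf i ≠ 0 → χs i h * αf h = βf h := by
    intro i h hcne
    have hc := T.comm i h u
    rw [hxu i] at hc
    simp only [map_smul, smul_smul, hρu h, hρv h, hxu i] at hc
    have : (0 : k) • u + (cf i * βf h) • v = (0 : k) • u + (χs i h * αf h * cf i) • v := by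
      simpa [mul_assoc] using hc
    have := (uv_coords μ c this).2
    have h2 : cf i * (βf h - χs i h * αf h) = 0 := by ring_nf; linear_combination this
    rcases mul_eq_zero.mp h2 with h' | h'
    · exact absurd h' hcne
    · exact (sub_eq_zero.mp h').symm
  -- opposite types are impossible
  have hopp : ∀ i j : Fin θ, i ≠ j → bf i ≠ 0 → cf j ≠ 0 → False := by
    intro i j hij hbi hcj
    have hci : cf i = 0 := by
      rcases mul_eq_zero.mp (hbc i) with h' | h'
      · exact absurd h' hbi
      · exact h'
    have hxx := T.xx i j hij u
    rw [hxu j, map_smul, hxu i, hci] at hxx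
    simp only [zero_smul, smul_zero, map_zero] at hxx
    rw [hxv i, smul_smul] at hxx
    have : (cf j * bf i) • u + (0:k) • v = (0:k) • u + (0:k) • v := by
      simpa using hxx
    have := (uv_coords μ c this).1
    rcases mul_eq_zero.mp this with h' | h'
    · exact hcj h'
    · exact hbi h'
  have htype : ∀ i : Fin θ, (bf i ≠ 0 ∧ cf i = 0) ∨ (cf i ≠ 0 ∧ bf i = 0) := by
    intro i
    rcases mul_eq_zero.mp (hbc i) with h' | h'
    · right
      refine ⟨?_, h'⟩
      intro hc0
      exact hnb i ⟨h', hc0⟩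
    · left
      refine ⟨?_, h'⟩
      intro hb0
      exact hnb i ⟨hb0, h'⟩
  -- the pair statement
  have hpair : ∀ i j : Fin θ, i ≠ j → ∃ (m : ℕ) (ω : k), IsPrimitiveRoot ω m ∧
      χs i (gs i) = ω ∧ χs j (gs i) = ω ∧ χs i (gs j) = ω⁻¹ ∧ χs j (gs j) = ω⁻¹ := by
    intro i j hij
    have hsame : ∀ h : G, χs i h = χs j h := by
      rcases htype i with ⟨hbi, hci⟩ | ⟨hci, hbi⟩
      · rcases htype j with ⟨hbj, hcj⟩ | ⟨hcj, hbj⟩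
        · intro h
          have e1 := hcharb i h hbi
          have e2 := hcharb j h hbj
          have : χs i h * βf h = χs j h * βf h := by rw [e1, e2]
          exact mul_right_cancel₀ (hβ h) this
        · exact absurd (hopp i j hij hbi hcj) id
      · rcases htype j with ⟨hbj, hcj⟩ | ⟨hcj, hbj⟩
        · exact absurd (hopp j i hij.symm hbj hci) id
        · intro h
          have e1 := hcharc i h hci
          have e2 := hcharc j h hcj
          have : χs i h * αf h = χs j h * αf h := by rw [e1, e2]
          exact mul_right_cancel₀ (hα h) this
    refine ⟨orderOf (χs i (gs i)), χs i (gs i),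
      ⟨pow_orderOf_eq_one _, fun l hl => orderOf_dvd_of_pow_eq_one hl⟩, rfl,
      (hsame (gs i)).symm, ?_, ?_⟩
    · have h1 := hcomp i j hij
      rw [← hsame (gs i)] at h1
      exact eq_inv_of_mul_eq_one_left h1
    · have h1 := hcomp i j hij
      rw [← hsame (gs i), hsame (gs j)] at h1
      exact eq_inv_of_mul_eq_one_left h1
  refine ⟨?_, hpair⟩
  -- rank at most two
  by_contra hθ
  push_neg at hθ
  set i0 : Fin θ := ⟨0, by omega⟩
  set i1 : Fin θ := ⟨1, by omega⟩
  set i2 : Fin θ := ⟨2, by omega⟩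
  have h01 : i0 ≠ i1 := by simp [i0, i1, Fin.ext_iff]
  have h02 : i0 ≠ i2 := by simp [i0, i2, Fin.ext_iff]
  have h12 : i1 ≠ i2 := by simp [i1, i2, Fin.ext_iff]
  obtain ⟨m1, ω1, hprim1, e1, -, -, e2⟩ := hpair i0 i1 h01
  obtain ⟨m2, ω2, hprim2, f1, -, -, f2⟩ := hpair i0 i2 h02
  obtain ⟨m3, ω3, hprim3, g1, -, -, g2⟩ := hpair i1 i2 h12
  have hw21 : ω2 = ω1 := by rw [← f1, ← e1]
  have hw31 : ω3 = ω1⁻¹ := by rw [← g1, ← e2]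
  have hkey : ω1⁻¹ = ω1 := by
    have : ω2⁻¹ = ω3⁻¹ := by rw [← f2, ← g2]
    rw [hw21, hw31, inv_inv] at this
    exact this
  have hw1ne : ω1 ≠ 0 := by
    intro h0
    have h3 := hm3 i0
    rw [e1, h0] at h3
    have : (0 : k) ^ orderOf (0 : k) = 1 := pow_orderOf_eq_one _
    rw [zero_pow (by omega : orderOf (0:k) ≠ 0)] at this
    exact zero_ne_one this
  have hsq : ω1 ^ 2 = 1 := by
    rw [sq]
    nth_rewrite 1 [← hkey]
    exact inv_mul_cancel₀ hw1ne
  have := Nat.le_of_dvd (by norm_num) (orderOf_dvd_of_pow_eq_one hsq)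
  have h3 := hm3 i0
  rw [e1] at h3
  omega
end
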